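/- arXiv:1012.5907 — 4 statements merged into one kernel-verified Lean document; each statement's English description precedes it below -/
import Mathlib

section
/- In every 1-obstacle representation v of K*_{5,5}, every vertex x is linearly separable from the set of its neighbors: the point v(x) does not lie in the convex hull of the images of the neighbors of x (hence x induces an x-sight ordering on its neighbor set). -/
open Set

/-- General position: no three of the points `v p` are collinear. -/
def GenPos {V : Type*} (v : V → ℝ × ℝ) : Prop :=
  ∀ p q r : V, p ≠ q → p ≠ r → q ≠ r → ¬ Collinear ℝ ({v p, v q, v r} : Set (ℝ × ℝ))

/-- An `h`-obstacle representation of a simple graph `G`: an injective drawing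
`v` of the vertices in general position, together with `h` obstacles (nonempty
compact connected sets), each obstacle avoiding every closed edge segment and
every vertex point, such that every non-edge's open segment meets some obstacle. -/
structure ObstacleRep {V : Type*} (G : SimpleGraph V) (h : ℕ) where
  v : V → ℝ × ℝ
  inj : Function.Injective v
  genpos : GenPos v
  obs : Fin h → Set (ℝ × ℝ)
  obs_compact : ∀ i, IsCompact (obs i)
  obs_connected : ∀ i, IsConnected (obs i)
  obs_avoid_edges : ∀ i, ∀ p q : V, G.Adj p q → Disjoint (obs i) (segment ℝ (v p) (v q))
  obs_avoid_vertices : ∀ i, ∀ p : V, v p ∉ obs i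
  blocks : ∀ p q : V, p ≠ q → ¬ G.Adj p q →
    ∃ i, ((obs i) ∩ openSegment ℝ (v p) (v q)).Nonempty

/-- `K*_{m,n}`: the complete bipartite graph `K_{m,n}` minus a maximum matching.
`b i = Sum.inl i` is adjacent to `r j = Sum.inr j` iff `i ≠ j` (as naturals). -/
def KStarGraph (m n : ℕ) : SimpleGraph (Fin m ⊕ Fin n) where
  Adj x y := match x, y with
    | Sum.inl i, Sum.inr j => (i : ℕ) ≠ (j : ℕ)
    | Sum.inr j, Sum.inl i => (i : ℕ) ≠ (j : ℕ)
    | _, _ => False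
  symm := by constructor; rintro (i|i) (j|j) h <;> simp_all
  loopless := by constructor; rintro (i|i) h <;> simp_all



open Set Finset

noncomputable section

abbrev E2 := ℝ × ℝ

lemma range_triple (p q r : E2) : Set.range ![p,q,r] = ({p,q,r} : Set E2) := by
  simp [Matrix.range_cons, Matrix.range_empty]
  ext z
  simp only [Set.mem_union, Set.mem_singleton_iff, Set.mem_insert_iff]
  tauto

/-- Affine basis from a noncollinear triple. -/
def triBasis {p q r : E2} (h : ¬ Collinear ℝ ({p,q,r} : Set E2)) : AffineBasis (Fin 3) ℝ E2 where
  toFun := ![p,q,r]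
  ind' := by
    rw [affineIndependent_iff_not_collinear, range_triple]; exact h
  tot' := by
    have ind : AffineIndependent ℝ ![p,q,r] := by
      rw [affineIndependent_iff_not_collinear, range_triple]; exact h
    rw [ind.affineSpan_eq_top_iff_card_eq_finrank_add_one]
    simp

@[simp] lemma triBasis_apply {p q r : E2} (h : ¬ Collinear ℝ ({p,q,r} : Set E2)) :
    ⇑(triBasis h) = ![p,q,r] := rfl

lemma triBasis_range {p q r : E2} (h : ¬ Collinear ℝ ({p,q,r} : Set E2)) :
    Set.range ⇑(triBasis h) = ({p,q,r} : Set E2) := by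
  rw [triBasis_apply, range_triple]

lemma mem_tri_iff {p q r : E2} (h : ¬ Collinear ℝ ({p,q,r} : Set E2)) (z : E2) :
    z ∈ convexHull ℝ ({p,q,r} : Set E2) ↔ ∀ i, 0 ≤ (triBasis h).coord i z := by
  constructor
  · intro hz i
    rw [← triBasis_range h, convexHull_range_eq_exists_affineCombination] at hz
    obtain ⟨s, w, hw0, hw1, rfl⟩ := hz
    rw [Finset.map_affineCombination _ _ _ hw1,
      Finset.affineCombination_eq_linear_combination _ _ _ hw1]
    apply Finset.sum_nonneg
    intro j hj
    have hc : (triBasis h).coord i ((triBasis h) j) = if i = j then 1 else 0 :=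
      AffineBasis.coord_apply _ _ _
    simp only [Function.comp_apply, smul_eq_mul, hc]
    split <;> simp [hw0 j hj]
  · intro hz
    have hself := (triBasis h).affineCombination_coord_eq_self z
    rw [← triBasis_range h, ← hself]
    exact affineCombination_mem_convexHull (fun i _ => hz i)
      ((triBasis h).sum_coord_apply_eq_one z)

lemma mem_int_tri_iff {p q r : E2} (h : ¬ Collinear ℝ ({p,q,r} : Set E2)) (z : E2) :
    z ∈ interior (convexHull ℝ ({p,q,r} : Set E2)) ↔ ∀ i, 0 < (triBasis h).coord i z := by
  rw [← triBasis_range h, AffineBasis.interior_convexHull]; rfl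

/-- An affine functional evaluated on an affine combination of three points. -/
lemma affine_comb3 (g : E2 →ᵃ[ℝ] ℝ) (p q r : E2) (w₀ w₁ w₂ : ℝ) (hw : w₀ + w₁ + w₂ = 1) :
    g (w₀•p + w₁•q + w₂•r) = w₀ * g p + w₁ * g q + w₂ * g r := by
  have h1 : (Finset.univ.affineCombination ℝ ![p,q,r]) ![w₀,w₁,w₂] = w₀•p + w₁•q + w₂•r := by
    rw [Finset.affineCombination_eq_linear_combination]
    · simp [Fin.sum_univ_three]
    · simp [Fin.sum_univ_three, hw]
  have h2 := Finset.map_affineCombination Finset.univ ![p,q,r] ![w₀,w₁,w₂]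
    (by simp [Fin.sum_univ_three, hw]) g
  rw [h1] at h2
  rw [h2, Finset.affineCombination_eq_linear_combination _ _ _ (by simp [Fin.sum_univ_three, hw])]
  simp [Fin.sum_univ_three]

lemma affine_comb2 (g : E2 →ᵃ[ℝ] ℝ) (p q : E2) (w₀ w₁ : ℝ) (hw : w₀ + w₁ = 1) :
    g (w₀•p + w₁•q) = w₀ * g p + w₁ * g q := by
  have := affine_comb3 g p q 0 w₀ w₁ 0 (by linarith)
  simpa using this

/-- coordinates of an explicit affine combination -/
lemma tri_coord_comb {p q r : E2} (h : ¬ Collinear ℝ ({p,q,r} : Set E2))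
    (w₀ w₁ w₂ : ℝ) (hw : w₀ + w₁ + w₂ = 1) :
    (∀ i, (triBasis h).coord i (w₀•p + w₁•q + w₂•r) = ![w₀,w₁,w₂] i) := by
  intro i
  rw [affine_comb3 _ p q r w₀ w₁ w₂ hw]
  have e0 : (triBasis h).coord i p = (triBasis h).coord i ((triBasis h) 0) := by simp
  have e1 : (triBasis h).coord i q = (triBasis h).coord i ((triBasis h) 1) := by simp
  have e2 : (triBasis h).coord i r = (triBasis h).coord i ((triBasis h) 2) := by simp
  rw [e0, e1, e2, AffineBasis.coord_apply, AffineBasis.coord_apply, AffineBasis.coord_apply]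
  fin_cases i <;> simp

/-- a point of a triangle is the affine combination of the vertices with
coordinate weights -/
lemma tri_repr {p q r : E2} (h : ¬ Collinear ℝ ({p,q,r} : Set E2)) (z : E2) :
    z = ((triBasis h).coord 0 z)•p + ((triBasis h).coord 1 z)•q + ((triBasis h).coord 2 z)•r := by
  conv_lhs => rw [← (triBasis h).affineCombination_coord_eq_self z]
  rw [Finset.affineCombination_eq_linear_combination _ _ _ ((triBasis h).sum_coord_apply_eq_one z)]
  simp [Fin.sum_univ_three]

lemma tri_coord_sum {p q r : E2} (h : ¬ Collinear ℝ ({p,q,r} : Set E2)) (z : E2) :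
    (triBasis h).coord 0 z + (triBasis h).coord 1 z + (triBasis h).coord 2 z = 1 := by
  have h1 := (triBasis h).sum_coord_apply_eq_one z
  rw [Fin.sum_univ_three] at h1; exact h1

/-- membership from an explicit nonneg affine combination -/
lemma comb_mem_tri (p q r : E2) (w₀ w₁ w₂ : ℝ) (h0 : 0 ≤ w₀) (h1 : 0 ≤ w₁) (h2 : 0 ≤ w₂)
    (hw : w₀ + w₁ + w₂ = 1) :
    w₀•p + w₁•q + w₂•r ∈ convexHull ℝ ({p,q,r} : Set E2) := by
  rw [← range_triple]
  have h1' : (Finset.univ.affineCombination ℝ ![p,q,r]) ![w₀,w₁,w₂] = w₀•p + w₁•q + w₂•r := by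
    rw [Finset.affineCombination_eq_linear_combination]
    · simp [Fin.sum_univ_three]
    · simp [Fin.sum_univ_three, hw]
  rw [← h1']
  refine affineCombination_mem_convexHull ?_ (by simp [Fin.sum_univ_three, hw])
  intro i _
  fin_cases i <;> simpa

lemma comb_mem_seg (p q : E2) (w₀ w₁ : ℝ) (h0 : 0 ≤ w₀) (h1 : 0 ≤ w₁) (hw : w₀ + w₁ = 1) :
    w₀•p + w₁•q ∈ segment ℝ p q := ⟨w₀, w₁, h0, h1, hw, rfl⟩

lemma comb_mem_openSeg (p q : E2) (w₀ w₁ : ℝ) (h0 : 0 < w₀) (h1 : 0 < w₁) (hw : w₀ + w₁ = 1) :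
    w₀•p + w₁•q ∈ openSegment ℝ p q := ⟨w₀, w₁, h0, h1, hw, rfl⟩

lemma seg_repr {p q z : E2} (h : z ∈ segment ℝ p q) :
    ∃ w₀ w₁ : ℝ, 0 ≤ w₀ ∧ 0 ≤ w₁ ∧ w₀ + w₁ = 1 ∧ z = w₀•p + w₁•q := by
  obtain ⟨w₀, w₁, h0, h1, hw, hz⟩ := h
  exact ⟨w₀, w₁, h0, h1, hw, hz.symm⟩

lemma openSeg_repr {p q z : E2} (h : z ∈ openSegment ℝ p q) :
    ∃ w₀ w₁ : ℝ, 0 < w₀ ∧ 0 < w₁ ∧ w₀ + w₁ = 1 ∧ z = w₀•p + w₁•q := by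
  obtain ⟨w₀, w₁, h0, h1, hw, hz⟩ := h
  exact ⟨w₀, w₁, h0, h1, hw, hz.symm⟩

lemma collinear_of_mem_segment {z p q : E2} (h : z ∈ segment ℝ p q) :
    Collinear ℝ ({z, p, q} : Set E2) := by
  apply collinear_insert_of_mem_affineSpan_pair
  rw [segment_eq_image_lineMap] at h
  obtain ⟨t, _, rfl⟩ := h
  exact AffineMap.lineMap_mem_affineSpan_pair _ _ _

lemma seg_endpoint_cases {p q z : E2} (h : z ∈ segment ℝ p q) :
    z = p ∨ z = q ∨ z ∈ openSegment ℝ p q := by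
  obtain ⟨w₀, w₁, h0, h1, hw, hz⟩ := seg_repr h
  rcases eq_or_lt_of_le h0 with h0' | h0'
  · right; left; rw [hz, ← h0']
    have hh : w₁ = 1 := by linarith
    rw [hh]; module
  rcases eq_or_lt_of_le h1 with h1' | h1'
  · left; rw [hz, ← h1']
    have hh : w₀ = 1 := by linarith
    rw [hh]; module
  · exact Or.inr (Or.inr (hz ▸ comb_mem_openSeg p q w₀ w₁ h0' h1' hw))

/-- connectedness separation ("Lemma A") -/
lemma connected_in_or_out {O U : Set E2} (hO : IsPreconnected O) (hU : IsOpen U)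
    (hsep : ∀ z ∈ O, z ∈ closure U → z ∈ U) :
    O ⊆ U ∨ ∀ z ∈ O, z ∉ closure U := by
  have hsub : O ⊆ U ∪ (closure U)ᶜ := by
    intro z hz
    by_cases hc : z ∈ closure U
    · exact Or.inl (hsep z hz hc)
    · exact Or.inr hc
  have := hO.subset_or_subset hU (isOpen_compl_iff.2 isClosed_closure)
    (disjoint_compl_right.mono_left subset_closure) hsub
  rcases this with h | h
  · exact Or.inl h
  · exact Or.inr fun z hz => h hz


/-- representation for membership in hull of three points (no independence needed) -/
lemma set_tri_repr {p q r z : E2} (h : z ∈ convexHull ℝ ({p,q,r} : Set E2)) :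
    ∃ w₀ w₁ w₂ : ℝ, 0 ≤ w₀ ∧ 0 ≤ w₁ ∧ 0 ≤ w₂ ∧ w₀ + w₁ + w₂ = 1 ∧ z = w₀•p + w₁•q + w₂•r := by
  rw [← range_triple, convexHull_range_eq_exists_affineCombination] at h
  obtain ⟨s, w, hw0, hw1, hz⟩ := h
  set W : Fin 3 → ℝ := (↑s : Set (Fin 3)).indicator w with hW
  have hsub : s ⊆ Finset.univ := Finset.subset_univ s
  have hcomb : (s.affineCombination ℝ ![p,q,r]) w = (Finset.univ.affineCombination ℝ ![p,q,r]) W :=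
    Finset.affineCombination_indicator_subset w ![p,q,r] hsub
  have hWsum : ∑ i, W i = 1 := by
    rw [hW, Finset.sum_indicator_subset w hsub]; exact hw1
  have hWnn : ∀ i, 0 ≤ W i := by
    intro i
    rw [hW]
    by_cases hi : i ∈ (↑s : Set (Fin 3))
    · rw [Set.indicator_of_mem hi]; exact hw0 i hi
    · rw [Set.indicator_of_notMem hi]
  refine ⟨W 0, W 1, W 2, hWnn 0, hWnn 1, hWnn 2, ?_, ?_⟩
  · rw [← Fin.sum_univ_three W]; exact hWsum
  · rw [← hz, hcomb, Finset.affineCombination_eq_linear_combination _ _ _ hWsum]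
    simp [Fin.sum_univ_three]

/-- exclusion: if x is strictly inside triangle abc, the open side (a,c) misses conv{x,a,b}. -/
lemma excl_side {a b c x : E2} (hΔ : ¬ Collinear ℝ ({a,b,c} : Set E2))
    (α β γ : ℝ) (hα : 0 < α) (hβ : 0 < β) (hγ : 0 < γ) (hsum : α + β + γ = 1)
    (hxr : x = α•a + β•b + γ•c)
    {w : E2} (hw : w ∈ openSegment ℝ a c) (hmem : w ∈ convexHull ℝ ({x,a,b} : Set E2)) :
    False := by
  obtain ⟨u₀, u₁, hu0, hu1, husum, hwrep⟩ := openSeg_repr hw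
  obtain ⟨t₀, t₁, t₂, ht0, ht1, ht2, htsum, hwrep2⟩ := set_tri_repr hmem
  have e1 : w = u₀•a + 0•b + u₁•c := by rw [hwrep]; module
  have e2 : w = (t₀*α + t₁)•a + (t₀*β + t₂)•b + (t₀*γ)•c := by
    rw [hwrep2, hxr]; module
  have c1 := tri_coord_comb hΔ u₀ 0 u₁ (by linarith)
  have c2 := tri_coord_comb hΔ (t₀*α + t₁) (t₀*β + t₂) (t₀*γ) (by nlinarith) 
  have eq1 : (0:ℝ) = t₀*β + t₂ := by
    have a1 : (triBasis hΔ).coord 1 w = 0 := by rw [e1]; simpa using c1 1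
    have a2 : (triBasis hΔ).coord 1 w = t₀*β + t₂ := by rw [e2]; simpa using c2 1
    rw [a1] at a2; exact a2
  have eq2 : u₁ = t₀*γ := by
    have a1 : (triBasis hΔ).coord 2 w = u₁ := by rw [e1]; simpa using c1 2
    have a2 : (triBasis hΔ).coord 2 w = t₀*γ := by rw [e2]; simpa using c2 2
    rw [a1] at a2; exact a2
  have ht00 : t₀ = 0 := by nlinarith
  rw [ht00] at eq2; simp at eq2; linarith

/-- subdivision construction in a triangle -/
lemma subdiv_side {a b c x y : E2} (α β γ p q r : ℝ)
    (hα : 0 < α) (hβ : 0 < β) (hγ : 0 < γ) (hp : 0 ≤ p) (hq : 0 ≤ q) (hr : 0 ≤ r)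
    (hs1 : α + β + γ = 1) (hs2 : p + q + r = 1)
    (hx : x = α•a + β•b + γ•c) (hy : y = p•a + q•b + r•c)
    (h1 : r*α ≤ p*γ) (h2 : r*β ≤ q*γ) : y ∈ convexHull ℝ ({x,a,b} : Set E2) := by
  set s := r/γ with hs
  have hsγ : s*γ = r := by rw [hs]; exact div_mul_cancel₀ r hγ.ne'
  have hs0 : 0 ≤ s := div_nonneg hr hγ.le
  have hm : 0 ≤ p - s*α := by
    have : s*α ≤ p := by rw [hs, div_mul_eq_mul_div, div_le_iff₀ hγ]; nlinarith
    linarith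
  have hn : 0 ≤ q - s*β := by
    have : s*β ≤ q := by rw [hs, div_mul_eq_mul_div, div_le_iff₀ hγ]; nlinarith
    linarith
  have hsum : s + (p - s*α) + (q - s*β) = 1 := by
    have hγ' : (1:ℝ) - α - β = γ := by linarith
    have : s*α + s*β + s*γ = s := by nlinarith [hs1]
    linarith [hsγ]
  have hyrep : y = s•x + (p - s*α)•a + (q - s*β)•b := by
    rw [hx, hy, ← hsγ]; module
  rw [hyrep]
  exact comb_mem_tri _ _ _ _ _ _ hs0 hm hn hsum

/-- the 0-coordinate functionals of bases (x,a,b) and (y,a,b) are proportional -/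
lemma coord0_prop {x y a b : E2} (hF : ¬ Collinear ℝ ({x,a,b} : Set E2))
    (hG : ¬ Collinear ℝ ({y,a,b} : Set E2)) (z : E2) :
    (triBasis hG).coord 0 z = (triBasis hG).coord 0 x * (triBasis hF).coord 0 z := by
  have hz := tri_repr hF z
  have hsum := tri_coord_sum hF z
  have ga : (triBasis hG).coord 0 a = 0 := by
    have h1 := AffineBasis.coord_apply (triBasis hG) 0 1
    simpa using h1
  have gb : (triBasis hG).coord 0 b = 0 := by
    have h1 := AffineBasis.coord_apply (triBasis hG) 0 2
    simpa using h1
  conv_lhs => rw [hz]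
  rw [affine_comb3 _ _ _ _ _ _ _ hsum, ga, gb]
  ring

lemma coord0_prop_unit {x y a b : E2} (hF : ¬ Collinear ℝ ({x,a,b} : Set E2))
    (hG : ¬ Collinear ℝ ({y,a,b} : Set E2)) :
    (triBasis hG).coord 0 x * (triBasis hF).coord 0 y = 1 := by
  have h := (coord0_prop hF hG y).symm
  have gy : (triBasis hG).coord 0 y = 1 := by
    have h1 := AffineBasis.coord_apply (triBasis hG) 0 0
    simpa using h1
  rw [gy] at h; exact h

/-- an open side point is interior to the union of the two triangles on opposite
sides of it -/
lemma side_mem_int_union {x y a b : E2} (hF : ¬ Collinear ℝ ({x,a,b} : Set E2))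
    (hG : ¬ Collinear ℝ ({y,a,b} : Set E2))
    (hy : (triBasis hF).coord 0 y < 0) {w : E2} (hw : w ∈ openSegment ℝ a b) :
    w ∈ interior (convexHull ℝ ({x,a,b} : Set E2) ∪ convexHull ℝ ({y,a,b} : Set E2)) := by
  set F := triBasis hF
  set G := triBasis hG
  set N : Set E2 := ({z | 0 < F.coord 1 z} ∩ {z | 0 < F.coord 2 z}) ∩
      ({z | 0 < G.coord 1 z} ∩ {z | 0 < G.coord 2 z}) with hN
  have hNopen : IsOpen N := by
    have c1 : IsOpen {z : E2 | 0 < F.coord 1 z} :=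
      isOpen_lt continuous_const (continuous_barycentric_coord F 1)
    have c2 : IsOpen {z : E2 | 0 < F.coord 2 z} :=
      isOpen_lt continuous_const (continuous_barycentric_coord F 2)
    have c3 : IsOpen {z : E2 | 0 < G.coord 1 z} :=
      isOpen_lt continuous_const (continuous_barycentric_coord G 1)
    have c4 : IsOpen {z : E2 | 0 < G.coord 2 z} :=
      isOpen_lt continuous_const (continuous_barycentric_coord G 2)
    exact (c1.inter c2).inter (c3.inter c4)
  rw [mem_interior]
  refine ⟨N, ?_, hNopen, ?_⟩
  · intro z hz
    obtain ⟨⟨hz1, hz2⟩, hz3, hz4⟩ := hz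
    by_cases h0 : 0 ≤ F.coord 0 z
    · left
      rw [mem_tri_iff hF]
      intro i; fin_cases i
      · exact h0
      · exact hz1.le
      · exact hz2.le
    · right
      push_neg at h0
      have hgz := coord0_prop hF hG z
      have hgx : G.coord 0 x < 0 := by
        have := coord0_prop_unit hF hG
        nlinarith
      have : 0 < G.coord 0 z := by rw [hgz]; exact mul_pos_of_neg_of_neg hgx h0
      rw [mem_tri_iff hG]
      intro i; fin_cases i
      · exact this.le
      · exact hz3.le
      · exact hz4.le
  · obtain ⟨u₀, u₁, hu0, hu1, husum, hwrep⟩ := openSeg_repr hw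
    have e1 : w = (0:ℝ)•x + u₀•a + u₁•b := by rw [hwrep]; module
    have e2 : w = (0:ℝ)•y + u₀•a + u₁•b := by rw [hwrep]; module
    have c1 := tri_coord_comb hF 0 u₀ u₁ (by linarith)
    have c2 := tri_coord_comb hG 0 u₀ u₁ (by linarith)
    have a1 : F.coord 1 w = u₀ := by rw [e1]; simpa using c1 1
    have a2 : F.coord 2 w = u₁ := by rw [e1]; simpa using c1 2
    have a3 : G.coord 1 w = u₀ := by rw [e2]; simpa using c2 1
    have a4 : G.coord 2 w = u₁ := by rw [e2]; simpa using c2 2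
    refine ⟨⟨?_, ?_⟩, ?_, ?_⟩
    · show 0 < F.coord 1 w
      rw [a1]; exact hu0
    · show 0 < F.coord 2 w
      rw [a2]; exact hu1
    · show 0 < G.coord 1 w
      rw [a3]; exact hu0
    · show 0 < G.coord 2 w
      rw [a4]; exact hu1

/-- an open side point is not in the closure of (int T₁) \ T₂ when y is interior to T₁ -/
lemma side_not_mem_closure_diff {x y a b : E2} (hF : ¬ Collinear ℝ ({x,a,b} : Set E2))
    (hG : ¬ Collinear ℝ ({y,a,b} : Set E2))
    (hy0 : 0 < (triBasis hF).coord 0 y) {w : E2} (hw : w ∈ openSegment ℝ a b) :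
    w ∉ closure (interior (convexHull ℝ ({x,a,b} : Set E2)) \ convexHull ℝ ({y,a,b} : Set E2)) := by
  set F := triBasis hF
  set G := triBasis hG
  intro hcl
  set N : Set E2 := {z | 0 < G.coord 1 z} ∩ {z | 0 < G.coord 2 z} with hN
  have hNopen : IsOpen N := by
    have c3 : IsOpen {z : E2 | 0 < G.coord 1 z} :=
      isOpen_lt continuous_const (continuous_barycentric_coord G 1)
    have c4 : IsOpen {z : E2 | 0 < G.coord 2 z} :=
      isOpen_lt continuous_const (continuous_barycentric_coord G 2)
    exact c3.inter c4
  have hwN : w ∈ N := by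
    obtain ⟨u₀, u₁, hu0, hu1, husum, hwrep⟩ := openSeg_repr hw
    have e2 : w = (0:ℝ)•y + u₀•a + u₁•b := by rw [hwrep]; module
    have c2 := tri_coord_comb hG 0 u₀ u₁ (by linarith)
    constructor
    · show 0 < G.coord 1 w
      have a1 : G.coord 1 w = u₀ := by rw [e2]; simpa using c2 1
      rw [a1]; exact hu0
    · show 0 < G.coord 2 w
      have a2 : G.coord 2 w = u₁ := by rw [e2]; simpa using c2 2
      rw [a2]; exact hu1
  obtain ⟨z, hzN, hzInt, hzT2⟩ :
      ∃ z, z ∈ N ∧ z ∈ interior (convexHull ℝ ({x,a,b} : Set E2))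
        ∧ z ∉ convexHull ℝ ({y,a,b} : Set E2) := by
    obtain ⟨z, h1, h2⟩ := mem_closure_iff.1 hcl N hNopen hwN
    exact ⟨z, h1, h2.1, h2.2⟩
  have hfz : 0 < F.coord 0 z := ((mem_int_tri_iff hF z).1 hzInt) 0
  have hgz := coord0_prop hF hG z
  have hgx : 0 < G.coord 0 x := by
    have := coord0_prop_unit hF hG
    nlinarith
  apply hzT2
  rw [mem_tri_iff hG]
  have k0 : (0:ℝ) ≤ G.coord 0 z := by rw [hgz]; positivity
  intro i; fin_cases i
  · exact k0
  · exact hzN.1.le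
  · exact hzN.2.le


lemma tri_coord_p {p q r : E2} (h : ¬ Collinear ℝ ({p,q,r} : Set E2)) (i : Fin 3) :
    (triBasis h).coord i p = ![1,0,0] i := by
  have c := tri_coord_comb h 1 0 0 (by ring)
  have e : (1:ℝ)•p + (0:ℝ)•q + (0:ℝ)•r = p := by module
  rw [e] at c; exact c i

lemma tri_coord_q {p q r : E2} (h : ¬ Collinear ℝ ({p,q,r} : Set E2)) (i : Fin 3) :
    (triBasis h).coord i q = ![0,1,0] i := by
  have c := tri_coord_comb h 0 1 0 (by ring)
  have e : (0:ℝ)•p + (1:ℝ)•q + (0:ℝ)•r = q := by module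
  rw [e] at c; exact c i

lemma tri_coord_r {p q r : E2} (h : ¬ Collinear ℝ ({p,q,r} : Set E2)) (i : Fin 3) :
    (triBasis h).coord i r = ![0,0,1] i := by
  have c := tri_coord_comb h 0 0 1 (by ring)
  have e : (0:ℝ)•p + (0:ℝ)•q + (1:ℝ)•r = r := by module
  rw [e] at c; exact c i

lemma exists_zero_coord {u v w : ℝ} (hu : 0 ≤ u) (hv : 0 ≤ v) (hw : 0 ≤ w)
    (h : ¬ (0 < u ∧ 0 < v ∧ 0 < w)) : u = 0 ∨ v = 0 ∨ w = 0 := by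
  by_contra hc
  push_neg at hc
  exact h ⟨hu.lt_of_ne (Ne.symm hc.1), hv.lt_of_ne (Ne.symm hc.2.1), hw.lt_of_ne (Ne.symm hc.2.2)⟩

section Cases

variable {O : Set E2} {x y a b c : E2}

/-- Case 1 : y lies strictly inside the subtriangle with apex x over the side ab. -/
lemma caseIn (hO : IsPreconnected O)
    (Oxa : Disjoint O (segment ℝ x a)) (Oxb : Disjoint O (segment ℝ x b))
    (Oya : Disjoint O (segment ℝ y a)) (Oyb : Disjoint O (segment ℝ y b))
    (hF : ¬ Collinear ℝ ({x,a,b} : Set E2)) (hG : ¬ Collinear ℝ ({y,a,b} : Set E2))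
    (hΔ : ¬ Collinear ℝ ({a,b,c} : Set E2))
    (α β γ : ℝ) (hα : 0 < α) (hβ : 0 < β) (hγ : 0 < γ) (hsum : α + β + γ = 1)
    (hxr : x = α•a + β•b + γ•c)
    (s m n : ℝ) (hs : 0 < s) (hm : 0 < m) (hn : 0 < n) (hsmn : s + m + n = 1)
    (hyr : y = s•x + m•a + n•b)
    {q : E2} (hqO : q ∈ O) (hq : q ∈ openSegment ℝ x y)
    {pac : E2} (hpacO : pac ∈ O) (hpac : pac ∈ openSegment ℝ a c) :
    False := by
  set F := triBasis hF with hFdef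
  set G := triBasis hG with hGdef
  have hT1closed : IsClosed (convexHull ℝ ({x,a,b} : Set E2)) :=
    ((Set.toFinite _).isCompact_convexHull (𝕜 := ℝ) : IsCompact (convexHull ℝ ({x,a,b} : Set E2))).isClosed
  have hT2closed : IsClosed (convexHull ℝ ({y,a,b} : Set E2)) :=
    ((Set.toFinite _).isCompact_convexHull (𝕜 := ℝ) : IsCompact (convexHull ℝ ({y,a,b} : Set E2))).isClosed
  set U := interior (convexHull ℝ ({x,a,b} : Set E2)) \ convexHull ℝ ({y,a,b} : Set E2) with hU
  have hUopen : IsOpen U := isOpen_interior.sdiff hT2closed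
  have fy0 : F.coord 0 y = s := by rw [hyr]; simpa using tri_coord_comb hF s m n hsmn 0
  -- separation hypothesis for `connected_in_or_out`
  have hsep : ∀ z ∈ O, z ∈ closure U → z ∈ U := by
    intro z hzO hzcl
    have hzT1 : z ∈ convexHull ℝ ({x,a,b} : Set E2) := by
      have h1 : closure U ⊆ closure (convexHull ℝ ({x,a,b} : Set E2)) :=
        closure_mono (Set.diff_subset.trans interior_subset)
      rw [hT1closed.closure_eq] at h1
      exact h1 hzcl
    obtain ⟨f0, f1, f2, hf0, hf1, hf2, hfsum, hfrep⟩ := set_tri_repr hzT1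
    have cf := tri_coord_comb hF f0 f1 f2 hfsum
    have cf0 : F.coord 0 z = f0 := by rw [hfrep]; simpa using cf 0
    have cf1 : F.coord 1 z = f1 := by rw [hfrep]; simpa using cf 1
    have cf2 : F.coord 2 z = f2 := by rw [hfrep]; simpa using cf 2
    by_cases hall : (0 < f0 ∧ 0 < f1 ∧ 0 < f2)
    · have hzint : z ∈ interior (convexHull ℝ ({x,a,b} : Set E2)) := by
        rw [mem_int_tri_iff hF]
        intro i; fin_cases i
        · show 0 < F.coord 0 z; rw [cf0]; exact hall.1
        · show 0 < F.coord 1 z; rw [cf1]; exact hall.2.1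
        · show 0 < F.coord 2 z; rw [cf2]; exact hall.2.2
      refine ⟨hzint, ?_⟩
      intro hzT2
      have hznotint : z ∉ interior (convexHull ℝ ({y,a,b} : Set E2)) := by
        intro hzi
        have hUc : U ⊆ (convexHull ℝ ({y,a,b} : Set E2))ᶜ := fun w hw => hw.2
        have h2 : closure U ⊆ (interior (convexHull ℝ ({y,a,b} : Set E2)))ᶜ := by
          have := closure_mono hUc
          rwa [closure_compl] at this
        exact (h2 hzcl) hzi
      obtain ⟨g0, g1, g2, hg0, hg1, hg2, hgsum, hgrep⟩ := set_tri_repr hzT2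
      have cg := tri_coord_comb hG g0 g1 g2 hgsum
      have cg0 : G.coord 0 z = g0 := by rw [hgrep]; simpa using cg 0
      have cg1 : G.coord 1 z = g1 := by rw [hgrep]; simpa using cg 1
      have cg2 : G.coord 2 z = g2 := by rw [hgrep]; simpa using cg 2
      have hnotall : ¬ (0 < g0 ∧ 0 < g1 ∧ 0 < g2) := by
        intro hcc
        apply hznotint
        rw [mem_int_tri_iff hG]
        intro i; fin_cases i
        · show 0 < G.coord 0 z; rw [cg0]; exact hcc.1
        · show 0 < G.coord 1 z; rw [cg1]; exact hcc.2.1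
        · show 0 < G.coord 2 z; rw [cg2]; exact hcc.2.2
      rcases exists_zero_coord hg0 hg1 hg2 hnotall with h0 | h1 | h2
      · -- z on the line ab : F-coordinate 0 of z then vanishes, contradiction
        have e : z = (0:ℝ)•x + g1•a + g2•b := by rw [hgrep, h0]; module
        have : F.coord 0 z = 0 := by
          rw [e]; simpa using tri_coord_comb hF 0 g1 g2 (by rw [h0] at hgsum; linarith) 0
        rw [cf0] at this
        exact absurd this (ne_of_gt hall.1)
      · have hz2 : z ∈ segment ℝ y b := by
          have e : z = g0•y + g2•b := by rw [hgrep, h1]; module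
          rw [e]
          exact comb_mem_seg _ _ _ _ hg0 hg2 (by rw [h1] at hgsum; linarith)
        exact Set.disjoint_left.1 Oyb hzO hz2
      · have hz2 : z ∈ segment ℝ y a := by
          have e : z = g0•y + g1•a := by rw [hgrep, h2]; module
          rw [e]
          exact comb_mem_seg _ _ _ _ hg0 hg1 (by rw [h2] at hgsum; linarith)
        exact Set.disjoint_left.1 Oya hzO hz2
    · rcases exists_zero_coord hf0 hf1 hf2 hall with h0 | h1 | h2
      · have hz2 : z ∈ segment ℝ a b := by
          have e : z = f1•a + f2•b := by rw [hfrep, h0]; module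
          rw [e]
          exact comb_mem_seg _ _ _ _ hf1 hf2 (by rw [h0] at hfsum; linarith)
        rcases seg_endpoint_cases hz2 with rfl | rfl | hopen
        · exact absurd (right_mem_segment ℝ x z) (Set.disjoint_left.1 Oxa hzO)
        · exact absurd (right_mem_segment ℝ x z) (Set.disjoint_left.1 Oxb hzO)
        · exact absurd hzcl (side_not_mem_closure_diff hF hG (by rw [fy0]; exact hs) hopen)
      · have hz2 : z ∈ segment ℝ x b := by
          have e : z = f0•x + f2•b := by rw [hfrep, h1]; module
          rw [e]
          exact comb_mem_seg _ _ _ _ hf0 hf2 (by rw [h1] at hfsum; linarith)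
        exact (Set.disjoint_left.1 Oxb hzO hz2).elim
      · have hz2 : z ∈ segment ℝ x a := by
          have e : z = f0•x + f1•a := by rw [hfrep, h2]; module
          rw [e]
          exact comb_mem_seg _ _ _ _ hf0 hf1 (by rw [h2] at hfsum; linarith)
        exact (Set.disjoint_left.1 Oxa hzO hz2).elim
  rcases connected_in_or_out hO hUopen hsep with hin | hout
  · have : pac ∈ convexHull ℝ ({x,a,b} : Set E2) := interior_subset (hin hpacO).1
    exact excl_side hΔ α β γ hα hβ hγ hsum hxr hpac this
  · obtain ⟨k0, k1, hk0, hk1, hksum, hqrep⟩ := openSeg_repr hq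
    have hqje : q = (k0 + k1*s)•x + (k1*m)•a + (k1*n)•b := by
      rw [hqrep, hyr]; module
    have hqcsum : (k0 + k1*s) + k1*m + k1*n = 1 := by nlinarith
    have A0 : F.coord 0 q = k0 + k1*s := by
      rw [hqje]; simpa using tri_coord_comb hF _ _ _ hqcsum 0
    have A1 : F.coord 1 q = k1*m := by
      rw [hqje]; simpa using tri_coord_comb hF _ _ _ hqcsum 1
    have A2 : F.coord 2 q = k1*n := by
      rw [hqje]; simpa using tri_coord_comb hF _ _ _ hqcsum 2
    have hqint : q ∈ interior (convexHull ℝ ({x,a,b} : Set E2)) := by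
      rw [mem_int_tri_iff hF]
      intro i; fin_cases i
      · show 0 < F.coord 0 q; rw [A0]; nlinarith
      · show 0 < F.coord 1 q; rw [A1]; nlinarith
      · show 0 < F.coord 2 q; rw [A2]; nlinarith
    have hqnotU : q ∉ U := fun hc => hout q hqO (subset_closure hc)
    have hqT2 : q ∈ convexHull ℝ ({y,a,b} : Set E2) := by
      by_contra hc
      exact hqnotU ⟨hqint, hc⟩
    obtain ⟨g0, g1, g2, hg0, hg1, hg2, hgsum, hqrep2⟩ := set_tri_repr hqT2
    have hqje2 : q = (g0*s)•x + (g0*m + g1)•a + (g0*n + g2)•b := by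
      rw [hqrep2, hyr]; module
    have B0 : F.coord 0 q = g0*s := by
      rw [hqje2]; simpa using tri_coord_comb hF (g0*s) (g0*m + g1) (g0*n + g2) (by nlinarith) 0
    have key : k0 + k1*s = g0*s := by rw [← A0, B0]
    nlinarith [key, hk0, hk1, hksum, hs, hm, hn, hsmn, hg0, hg1, hg2, hgsum]

/-- Case 2 : the open segment (x,y) crosses the open side (a,b). -/
lemma caseOut (hO : IsPreconnected O)
    (Oxa : Disjoint O (segment ℝ x a)) (Oxb : Disjoint O (segment ℝ x b))
    (Oya : Disjoint O (segment ℝ y a)) (Oyb : Disjoint O (segment ℝ y b))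
    (hF : ¬ Collinear ℝ ({x,a,b} : Set E2)) (hG : ¬ Collinear ℝ ({y,a,b} : Set E2))
    (hΔ : ¬ Collinear ℝ ({a,b,c} : Set E2))
    (α β γ : ℝ) (hα : 0 < α) (hβ : 0 < β) (hγ : 0 < γ) (hsum : α + β + γ = 1)
    (hxr : x = α•a + β•b + γ•c)
    (k l : ℝ) (hk : 0 < k) (hl : 0 < l) (hkl : k + l = 1)
    (hz : k•x + l•y ∈ openSegment ℝ a b)
    {q : E2} (hqO : q ∈ O) (hq : q ∈ openSegment ℝ x y)
    {pac : E2} (hpacO : pac ∈ O) (hpac : pac ∈ openSegment ℝ a c) :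
    False := by
  set F := triBasis hF with hFdef
  set G := triBasis hG with hGdef
  obtain ⟨u0, u1, hu0, hu1, husum, hzrep⟩ := openSeg_repr hz
  -- F-coordinates of the crossing point, two ways
  have fz : ∀ i, F.coord i (k•x + l•y) = k * F.coord i x + l * F.coord i y := fun i =>
    affine_comb2 (F.coord i) x y k l hkl
  have fz' : ∀ i, F.coord i (k•x + l•y) = ![0,u0,u1] i := by
    intro i
    have e : k•x + l•y = (0:ℝ)•x + u0•a + u1•b := by rw [hzrep]; module
    rw [e]; exact tri_coord_comb hF 0 u0 u1 (by linarith) i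
  have gz : ∀ i, G.coord i (k•x + l•y) = k * G.coord i x + l * G.coord i y := fun i =>
    affine_comb2 (G.coord i) x y k l hkl
  have gz' : ∀ i, G.coord i (k•x + l•y) = ![0,u0,u1] i := by
    intro i
    have e : k•x + l•y = (0:ℝ)•y + u0•a + u1•b := by rw [hzrep]; module
    rw [e]; exact tri_coord_comb hG 0 u0 u1 (by linarith) i
  -- coordinates of y in F
  have hy0 : (0:ℝ) = k + l * F.coord 0 y := by
    have h := (fz 0).symm.trans (fz' 0)
    rw [tri_coord_p hF 0] at h
    simpa using h.symm
  have hy1 : u0 = l * F.coord 1 y := by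
    have h := (fz 1).symm.trans (fz' 1)
    rw [tri_coord_p hF 1] at h
    simpa using h.symm
  have hy2 : u1 = l * F.coord 2 y := by
    have h := (fz 2).symm.trans (fz' 2)
    rw [tri_coord_p hF 2] at h
    simpa using h.symm
  have fy0 : F.coord 0 y = -(k/l) := by field_simp; linarith
  have fy1 : F.coord 1 y = u0/l := by field_simp; linarith
  have fy2 : F.coord 2 y = u1/l := by field_simp; linarith
  -- coordinates of x in G
  have hx0 : (0:ℝ) = k * G.coord 0 x + l := by
    have h := (gz 0).symm.trans (gz' 0)
    rw [tri_coord_p hG 0] at h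
    simpa using h.symm
  have hx1 : u0 = k * G.coord 1 x := by
    have h := (gz 1).symm.trans (gz' 1)
    rw [tri_coord_p hG 1] at h
    simpa using h.symm
  have hx2 : u1 = k * G.coord 2 x := by
    have h := (gz 2).symm.trans (gz' 2)
    rw [tri_coord_p hG 2] at h
    simpa using h.symm
  have gx0 : G.coord 0 x = -(l/k) := by field_simp; linarith
  have gx1 : G.coord 1 x = u0/k := by field_simp; linarith
  have gx2 : G.coord 2 x = u1/k := by field_simp; linarith
  have hfy0neg : F.coord 0 y < 0 := by rw [fy0]; simp; positivity
  -- the union region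
  have hT1closed : IsClosed (convexHull ℝ ({x,a,b} : Set E2)) :=
    ((Set.toFinite _).isCompact_convexHull (𝕜 := ℝ) : IsCompact (convexHull ℝ ({x,a,b} : Set E2))).isClosed
  have hT2closed : IsClosed (convexHull ℝ ({y,a,b} : Set E2)) :=
    ((Set.toFinite _).isCompact_convexHull (𝕜 := ℝ) : IsCompact (convexHull ℝ ({y,a,b} : Set E2))).isClosed
  set U := interior (convexHull ℝ ({x,a,b} : Set E2) ∪ convexHull ℝ ({y,a,b} : Set E2)) with hU
  have hUopen : IsOpen U := isOpen_interior
  have hsub1 : interior (convexHull ℝ ({x,a,b} : Set E2)) ⊆ U :=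
    interior_mono Set.subset_union_left
  have hsub2 : interior (convexHull ℝ ({y,a,b} : Set E2)) ⊆ U :=
    interior_mono Set.subset_union_right
  have hsep : ∀ z' ∈ O, z' ∈ closure U → z' ∈ U := by
    intro z' hzO hzcl
    have hzS : z' ∈ convexHull ℝ ({x,a,b} : Set E2) ∪ convexHull ℝ ({y,a,b} : Set E2) := by
      have h1 : closure U ⊆ closure (convexHull ℝ ({x,a,b} : Set E2) ∪
          convexHull ℝ ({y,a,b} : Set E2)) := closure_mono interior_subset
      rw [(hT1closed.union hT2closed).closure_eq] at h1
      exact h1 hzcl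
    rcases hzS with hzT1 | hzT2
    · obtain ⟨f0, f1, f2, hf0, hf1, hf2, hfsum, hfrep⟩ := set_tri_repr hzT1
      by_cases hall : (0 < f0 ∧ 0 < f1 ∧ 0 < f2)
      · apply hsub1
        rw [mem_int_tri_iff hF]
        have cf := tri_coord_comb hF f0 f1 f2 hfsum
        intro i; fin_cases i
        · show 0 < F.coord 0 z'
          have : F.coord 0 z' = f0 := by rw [hfrep]; simpa using cf 0
          rw [this]; exact hall.1
        · show 0 < F.coord 1 z'
          have : F.coord 1 z' = f1 := by rw [hfrep]; simpa using cf 1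
          rw [this]; exact hall.2.1
        · show 0 < F.coord 2 z'
          have : F.coord 2 z' = f2 := by rw [hfrep]; simpa using cf 2
          rw [this]; exact hall.2.2
      · rcases exists_zero_coord hf0 hf1 hf2 hall with h0 | h1 | h2
        · have hz2 : z' ∈ segment ℝ a b := by
            have e : z' = f1•a + f2•b := by rw [hfrep, h0]; module
            rw [e]
            exact comb_mem_seg _ _ _ _ hf1 hf2 (by rw [h0] at hfsum; linarith)
          rcases seg_endpoint_cases hz2 with rfl | rfl | hopen
          · exact absurd (right_mem_segment ℝ x z') (Set.disjoint_left.1 Oxa hzO)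
          · exact absurd (right_mem_segment ℝ x z') (Set.disjoint_left.1 Oxb hzO)
          · exact side_mem_int_union hF hG hfy0neg hopen
        · have hz2 : z' ∈ segment ℝ x b := by
            have e : z' = f0•x + f2•b := by rw [hfrep, h1]; module
            rw [e]
            exact comb_mem_seg _ _ _ _ hf0 hf2 (by rw [h1] at hfsum; linarith)
          exact absurd hz2 (Set.disjoint_left.1 Oxb hzO)
        · have hz2 : z' ∈ segment ℝ x a := by
            have e : z' = f0•x + f1•a := by rw [hfrep, h2]; module
            rw [e]
            exact comb_mem_seg _ _ _ _ hf0 hf1 (by rw [h2] at hfsum; linarith)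
          exact absurd hz2 (Set.disjoint_left.1 Oxa hzO)
    · obtain ⟨g0, g1, g2, hg0, hg1, hg2, hgsum, hgrep⟩ := set_tri_repr hzT2
      by_cases hall : (0 < g0 ∧ 0 < g1 ∧ 0 < g2)
      · apply hsub2
        rw [mem_int_tri_iff hG]
        have cg := tri_coord_comb hG g0 g1 g2 hgsum
        intro i; fin_cases i
        · show 0 < G.coord 0 z'
          have : G.coord 0 z' = g0 := by rw [hgrep]; simpa using cg 0
          rw [this]; exact hall.1
        · show 0 < G.coord 1 z'
          have : G.coord 1 z' = g1 := by rw [hgrep]; simpa using cg 1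
          rw [this]; exact hall.2.1
        · show 0 < G.coord 2 z'
          have : G.coord 2 z' = g2 := by rw [hgrep]; simpa using cg 2
          rw [this]; exact hall.2.2
      · rcases exists_zero_coord hg0 hg1 hg2 hall with h0 | h1 | h2
        · have hz2 : z' ∈ segment ℝ a b := by
            have e : z' = g1•a + g2•b := by rw [hgrep, h0]; module
            rw [e]
            exact comb_mem_seg _ _ _ _ hg1 hg2 (by rw [h0] at hgsum; linarith)
          rcases seg_endpoint_cases hz2 with rfl | rfl | hopen
          · exact absurd (right_mem_segment ℝ x z') (Set.disjoint_left.1 Oxa hzO)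
          · exact absurd (right_mem_segment ℝ x z') (Set.disjoint_left.1 Oxb hzO)
          · exact side_mem_int_union hF hG hfy0neg hopen
        · have hz2 : z' ∈ segment ℝ y b := by
            have e : z' = g0•y + g2•b := by rw [hgrep, h1]; module
            rw [e]
            exact comb_mem_seg _ _ _ _ hg0 hg2 (by rw [h1] at hgsum; linarith)
          exact absurd hz2 (Set.disjoint_left.1 Oyb hzO)
        · have hz2 : z' ∈ segment ℝ y a := by
            have e : z' = g0•y + g1•a := by rw [hgrep, h2]; module
            rw [e]
            exact comb_mem_seg _ _ _ _ hg0 hg1 (by rw [h2] at hgsum; linarith)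
          exact absurd hz2 (Set.disjoint_left.1 Oya hzO)
  rcases connected_in_or_out hO hUopen hsep with hin | hout
  · -- O inside : the blocking point on (a,c) is outside both triangles
    have hpS := interior_subset (hin hpacO)
    obtain ⟨w0, w1, hw0, hw1, hwsum, hprep⟩ := openSeg_repr hpac
    rcases hpS with hpT1 | hpT2
    · exact excl_side hΔ α β γ hα hβ hγ hsum hxr hpac hpT1
    · -- F-coordinate 0 of pac is positive, but nonpositive on T2
      have fc : F.coord 0 c = 1/γ := by
        have hxe := hxr
        have h1 : F.coord 0 x = α * F.coord 0 a + β * F.coord 0 b + γ * F.coord 0 c := by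
          rw [hxr]; exact affine_comb3 (F.coord 0) a b c α β γ hsum
        rw [tri_coord_p hF 0, tri_coord_q hF 0, tri_coord_r hF 0] at h1
        simp at h1
        field_simp
        linarith
      have hppos : 0 < F.coord 0 pac := by
        have h1 : F.coord 0 pac = w0 * F.coord 0 a + w1 * F.coord 0 c := by
          rw [hprep]; exact affine_comb2 (F.coord 0) a c w0 w1 hwsum
        rw [tri_coord_q hF 0, fc] at h1
        simp at h1
        rw [h1]
        positivity
      have hpneg : F.coord 0 pac ≤ 0 := by
        obtain ⟨g0, g1, g2, hg0, hg1, hg2, hgsum, hgrep⟩ := set_tri_repr hpT2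
        have h1 : F.coord 0 pac = g0 * F.coord 0 y + g1 * F.coord 0 a + g2 * F.coord 0 b := by
          rw [hgrep]; exact affine_comb3 (F.coord 0) y a b g0 g1 g2 hgsum
        rw [tri_coord_q hF 0, tri_coord_r hF 0, fy0] at h1
        simp at h1
        rw [h1]
        have : 0 ≤ g0 * (k/l) := by positivity
        linarith
      linarith
  · -- O avoids closure U : but the blocking point q on (x,y) is in U
    obtain ⟨c0, c1, hc0, hc1, hcsum, hqrep⟩ := openSeg_repr hq
    have fx0eq : F.coord 0 x = 1 := by simpa using tri_coord_p hF 0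
    have fx1eq : F.coord 1 x = 0 := by simpa using tri_coord_p hF 1
    have fx2eq : F.coord 2 x = 0 := by simpa using tri_coord_p hF 2
    have gy0eq : G.coord 0 y = 1 := by simpa using tri_coord_p hG 0
    have gy1eq : G.coord 1 y = 0 := by simpa using tri_coord_p hG 1
    have gy2eq : G.coord 2 y = 0 := by simpa using tri_coord_p hG 2
    have evq : ∀ i, F.coord i q = c0 * F.coord i x + c1 * F.coord i y := by
      intro i; rw [hqrep]; exact affine_comb2 (F.coord i) x y c0 c1 hcsum
    have evq' : ∀ i, G.coord i q = c0 * G.coord i x + c1 * G.coord i y := by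
      intro i; rw [hqrep]; exact affine_comb2 (G.coord i) x y c0 c1 hcsum
    have hqU : q ∈ U := by
      rcases lt_trichotomy c1 l with hlt | heq | hgt
      · apply hsub1
        rw [mem_int_tri_iff hF]
        have keyF : l * F.coord 0 q = l - c1 := by
          linear_combination l*(evq 0) + (l*c0)*fx0eq - c1*hy0 + l*hcsum - c1*hkl
        have e1 : F.coord 1 q = c1 * (u0/l) := by
          rw [evq 1, fx1eq, fy1]; ring
        have e2 : F.coord 2 q = c1 * (u1/l) := by
          rw [evq 2, fx2eq, fy2]; ring
        intro i; fin_cases i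
        · show 0 < F.coord 0 q
          by_contra hcon
          push_neg at hcon
          have hnp : l * F.coord 0 q ≤ 0 := mul_nonpos_iff.2 (Or.inl ⟨hl.le, hcon⟩)
          linarith
        · show 0 < F.coord 1 q
          rw [e1]; positivity
        · show 0 < F.coord 2 q
          rw [e2]; positivity
      · have heqq : q = k•x + l•y := by
          rw [hqrep, heq, show c0 = k by linarith]
        rw [heqq]
        exact side_mem_int_union hF hG hfy0neg hz
      · apply hsub2
        rw [mem_int_tri_iff hG]
        have keyG : k * G.coord 0 q = c1 - l := by
          linear_combination k*(evq' 0) + (k*c1)*gy0eq - c0*hx0 - l*hcsum + c1*hkl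
        have e1 : G.coord 1 q = c0 * (u0/k) := by
          rw [evq' 1, gy1eq, gx1]; ring
        have e2 : G.coord 2 q = c0 * (u1/k) := by
          rw [evq' 2, gy2eq, gx2]; ring
        intro i; fin_cases i
        · show 0 < G.coord 0 q
          by_contra hcon
          push_neg at hcon
          have hnp : k * G.coord 0 q ≤ 0 := mul_nonpos_iff.2 (Or.inl ⟨hk.le, hcon⟩)
          linarith
        · show 0 < G.coord 1 q
          rw [e1]; positivity
        · show 0 < G.coord 2 q
          rw [e2]; positivity
    exact hout q hqO (subset_closure hqU)

lemma col_rot {p q r : E2} (h : Collinear ℝ ({p,q,r} : Set E2)) :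
    Collinear ℝ ({q,r,p} : Set E2) := by
  have e : ({q,r,p} : Set E2) = {p,q,r} := by
    ext z
    simp only [Set.mem_insert_iff, Set.mem_singleton_iff]
    tauto
  rwa [e]

lemma col_swap01 {p q r : E2} (h : Collinear ℝ ({p,q,r} : Set E2)) :
    Collinear ℝ ({q,p,r} : Set E2) := by
  have e : ({q,p,r} : Set E2) = {p,q,r} := by
    ext z
    simp only [Set.mem_insert_iff, Set.mem_singleton_iff]
    tauto
  rwa [e]

lemma col_swap12 {p q r : E2} (h : Collinear ℝ ({p,q,r} : Set E2)) :
    Collinear ℝ ({p,r,q} : Set E2) := by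
  have e : ({p,r,q} : Set E2) = {p,q,r} := by
    ext z
    simp only [Set.mem_insert_iff, Set.mem_singleton_iff]
    tauto
  rwa [e]

/-- The main geometric lemma:  an obstacle `O` which avoids the six edges from
`x` and `y` to `a, b, c`, but meets the open segments `(x,y)`, `(a,b)`, `(b,c)`,
`(c,a)`, forces `x ∉ conv {a,b,c}`. -/
lemma core {O : Set E2} (hO : IsPreconnected O) {x y a b c : E2}
    (Oxa : Disjoint O (segment ℝ x a)) (Oxb : Disjoint O (segment ℝ x b))
    (Oxc : Disjoint O (segment ℝ x c))
    (Oya : Disjoint O (segment ℝ y a)) (Oyb : Disjoint O (segment ℝ y b))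
    (Oyc : Disjoint O (segment ℝ y c))
    (hxab : ¬ Collinear ℝ ({x,a,b} : Set E2)) (hxbc : ¬ Collinear ℝ ({x,b,c} : Set E2))
    (hxca : ¬ Collinear ℝ ({x,c,a} : Set E2))
    (hyab : ¬ Collinear ℝ ({y,a,b} : Set E2)) (hybc : ¬ Collinear ℝ ({y,b,c} : Set E2))
    (hyca : ¬ Collinear ℝ ({y,c,a} : Set E2))
    (habc : ¬ Collinear ℝ ({a,b,c} : Set E2))
    (hxya : ¬ Collinear ℝ ({x,y,a} : Set E2)) (hxyb : ¬ Collinear ℝ ({x,y,b} : Set E2))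
    (hxyc : ¬ Collinear ℝ ({x,y,c} : Set E2))
    (hx : x ∈ convexHull ℝ ({a,b,c} : Set E2))
    (hq : (O ∩ openSegment ℝ x y).Nonempty)
    (hab : (O ∩ openSegment ℝ a b).Nonempty)
    (hbc : (O ∩ openSegment ℝ b c).Nonempty)
    (hca : (O ∩ openSegment ℝ c a).Nonempty) : False := by
  -- permuted noncollinearity of the base triangle
  have hbca : ¬ Collinear ℝ ({b,c,a} : Set E2) := fun hcol => habc (col_rot (col_rot hcol))
  have hcab : ¬ Collinear ℝ ({c,a,b} : Set E2) := fun hcol => habc (col_rot hcol)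
  -- blocking points
  obtain ⟨q, hqO, hq'⟩ := hq
  obtain ⟨pab, pabO, hpab⟩ := hab
  obtain ⟨pbc, pbcO, hpbc⟩ := hbc
  obtain ⟨pca, pcaO, hpca⟩ := hca
  have hpba : pab ∈ openSegment ℝ b a := by rwa [openSegment_symm]
  have hpcb : pbc ∈ openSegment ℝ c b := by rwa [openSegment_symm]
  have hpac : pca ∈ openSegment ℝ a c := by rwa [openSegment_symm]
  -- barycentric representation of x
  obtain ⟨α, β, γ, hα0, hβ0, hγ0, hsum, hxrep⟩ := set_tri_repr hx
  have hα : 0 < α := by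
    rcases hα0.lt_or_eq with h | h
    · exact h
    exfalso
    apply hxbc
    apply collinear_of_mem_segment (p := b) (q := c)
    have e : x = β•b + γ•c := by rw [hxrep, ← h]; module
    rw [e]
    exact comb_mem_seg _ _ _ _ hβ0 hγ0 (by linarith)
  have hβ : 0 < β := by
    rcases hβ0.lt_or_eq with h | h
    · exact h
    exfalso
    apply hxca
    apply col_swap12
    apply collinear_of_mem_segment (p := a) (q := c)
    have e : x = α•a + γ•c := by rw [hxrep, ← h]; module
    rw [e]
    exact comb_mem_seg _ _ _ _ hα0 hγ0 (by linarith)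
  have hγ : 0 < γ := by
    rcases hγ0.lt_or_eq with h | h
    · exact h
    exfalso
    apply hxab
    apply collinear_of_mem_segment (p := a) (q := b)
    have e : x = α•a + β•b := by rw [hxrep, ← h]; module
    rw [e]
    exact comb_mem_seg _ _ _ _ hα0 hβ0 (by linarith)
  -- a generic helper for finishing with `caseIn` given strict inner data
  -- case distinction on whether y is in the closed triangle
  by_cases hy : y ∈ convexHull ℝ ({a,b,c} : Set E2)
  · -- y inside : subdivision into one of the three subtriangles
    obtain ⟨p', q', r', hp0, hq0, hr0, hsum2, hyrep⟩ := set_tri_repr hy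
    -- pick the subtriangle : three cases
    have main : ∀ (a' b' c' : E2), y ∈ convexHull ℝ ({x,a',b'} : Set E2) →
        Disjoint O (segment ℝ x a') → Disjoint O (segment ℝ x b') →
        Disjoint O (segment ℝ y a') → Disjoint O (segment ℝ y b') →
        ¬ Collinear ℝ ({x,a',b'} : Set E2) → ¬ Collinear ℝ ({y,a',b'} : Set E2) →
        ¬ Collinear ℝ ({a',b',c'} : Set E2) →
        ¬ Collinear ℝ ({x,y,a'} : Set E2) → ¬ Collinear ℝ ({x,y,b'} : Set E2) →
        ∀ (α' β' γ' : ℝ), 0 < α' → 0 < β' → 0 < γ' → α' + β' + γ' = 1 →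
        x = α'•a' + β'•b' + γ'•c' →
        ∀ pac' ∈ O, pac' ∈ openSegment ℝ a' c' → False := by
      intro a' b' c' hymem Da Db Da' Db' hF hG hΔ hA hB α' β' γ' h1 h2 h3 h4 hxr pac' hpO hp
      obtain ⟨s, m, n, hs0, hm0, hn0, hsum3, hyr⟩ := set_tri_repr hymem
      have hs : 0 < s := by
        rcases hs0.lt_or_eq with h | h
        · exact h
        exfalso
        apply hG
        apply collinear_of_mem_segment (p := a') (q := b')
        have e : y = m•a' + n•b' := by rw [hyr, ← h]; module
        rw [e]
        exact comb_mem_seg _ _ _ _ hm0 hn0 (by linarith)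
      have hm : 0 < m := by
        rcases hm0.lt_or_eq with h | h
        · exact h
        exfalso
        apply hB
        apply col_swap01
        apply collinear_of_mem_segment (p := x) (q := b')
        have e : y = s•x + n•b' := by rw [hyr, ← h]; module
        rw [e]
        exact comb_mem_seg _ _ _ _ hs0 hn0 (by linarith)
      have hn : 0 < n := by
        rcases hn0.lt_or_eq with h | h
        · exact h
        exfalso
        apply hA
        apply col_swap01
        apply collinear_of_mem_segment (p := x) (q := a')
        have e : y = s•x + m•a' := by rw [hyr, ← h]; module
        rw [e]
        exact comb_mem_seg _ _ _ _ hs0 hm0 (by linarith)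
      exact caseIn hO Da Db Da' Db' hF hG hΔ α' β' γ' h1 h2 h3 h4 hxr
        s m n hs hm hn hsum3 hyr hqO hq' hpO hp
    -- choose the minimal-ratio vertex
    by_cases c1 : r'*α ≤ p'*γ ∧ r'*β ≤ q'*γ
    · -- subtriangle x a b
      have hymem : y ∈ convexHull ℝ ({x,a,b} : Set E2) :=
        subdiv_side α β γ p' q' r' hα hβ hγ hp0 hq0 hr0 hsum hsum2 hxrep hyrep c1.1 c1.2
      exact main a b c hymem Oxa Oxb Oya Oyb hxab hyab habc hxya hxyb
        α β γ hα hβ hγ hsum hxrep pca pcaO hpac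
    · push_neg at c1
      by_cases c2 : p'*β ≤ q'*α ∧ p'*γ ≤ r'*α
      · -- subtriangle x b c
        have hxrep' : x = β•b + γ•c + α•a := by rw [hxrep]; module
        have hyrep' : y = q'•b + r'•c + p'•a := by rw [hyrep]; module
        have hymem : y ∈ convexHull ℝ ({x,b,c} : Set E2) :=
          subdiv_side β γ α q' r' p' hβ hγ hα hq0 hr0 hp0 (by linarith) (by linarith)
            hxrep' hyrep' c2.1 c2.2
        exact main b c a hymem Oxb Oxc Oyb Oyc hxbc hybc hbca hxyb hxyc
          β γ α hβ hγ hα (by linarith) hxrep' pab pabO hpba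
      · -- subtriangle x c a
        push_neg at c2
        have hxrep' : x = γ•c + α•a + β•b := by rw [hxrep]; module
        have hyrep' : y = r'•c + p'•a + q'•b := by rw [hyrep]; module
        have hc1 : q'*γ ≤ r'*β := by
          by_contra hcon
          push_neg at hcon
          rcases le_or_gt (r'*α) (p'*γ) with h | h
          · have h2 := c1 h
            linarith
          · have key : p'*β ≤ q'*α := by
              nlinarith [mul_lt_mul_of_pos_right h hβ, mul_lt_mul_of_pos_right hcon hα]
            have h2 := c2 key
            linarith
        have hc2 : q'*α ≤ p'*β := by
          by_contra hcon
          push_neg at hcon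
          rcases le_or_gt (r'*α) (p'*γ) with h | h
          · have h2 := c1 h
            nlinarith [mul_lt_mul_of_pos_right h2 hα, mul_le_mul_of_nonneg_right h hβ.le,
              mul_lt_mul_of_pos_right hcon hγ]
          · have h2 := c2 hcon.le
            linarith
        have hymem : y ∈ convexHull ℝ ({x,c,a} : Set E2) :=
          subdiv_side γ α β r' p' q' hγ hα hβ hr0 hp0 hq0 (by linarith) (by linarith)
            hxrep' hyrep' hc1 hc2
        exact main c a b hymem Oxc Oxa Oyc Oya hxca hyca hcab hxyc hxya
          γ α β hγ hα hβ (by linarith) hxrep' pbc pbcO hpcb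
  · -- y outside the closed triangle : the segment (x,y) crosses an open side
    have hxint : x ∈ interior (convexHull ℝ ({a,b,c} : Set E2)) := by
      rw [mem_int_tri_iff habc]
      have cc := tri_coord_comb habc α β γ hsum
      intro i; fin_cases i
      · show 0 < (triBasis habc).coord 0 x
        have : (triBasis habc).coord 0 x = α := by rw [hxrep]; simpa using cc 0
        rw [this]; exact hα
      · show 0 < (triBasis habc).coord 1 x
        have : (triBasis habc).coord 1 x = β := by rw [hxrep]; simpa using cc 1
        rw [this]; exact hβ
      · show 0 < (triBasis habc).coord 2 x
        have : (triBasis habc).coord 2 x = γ := by rw [hxrep]; simpa using cc 2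
        rw [this]; exact hγ
    have hKconn : IsPreconnected (segment ℝ x y) := (convex_segment x y).isPreconnected
    have hΔclosed : IsClosed (convexHull ℝ ({a,b,c} : Set E2)) :=
      ((Set.toFinite _).isCompact_convexHull (𝕜 := ℝ) : IsCompact (convexHull ℝ ({a,b,c} : Set E2))).isClosed
    -- find the crossing point
    have hcross : ∃ z ∈ segment ℝ x y,
        z ∈ convexHull ℝ ({a,b,c} : Set E2) ∧
          z ∉ interior (convexHull ℝ ({a,b,c} : Set E2)) := by
      by_contra hcon
      push_neg at hcon
      have hsep : ∀ z ∈ segment ℝ x y,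
          z ∈ closure (interior (convexHull ℝ ({a,b,c} : Set E2))) →
            z ∈ interior (convexHull ℝ ({a,b,c} : Set E2)) := by
        intro z hz hzc
        have hzΔ : z ∈ convexHull ℝ ({a,b,c} : Set E2) := by
          have h1 : closure (interior (convexHull ℝ ({a,b,c} : Set E2))) ⊆
              closure (convexHull ℝ ({a,b,c} : Set E2)) := closure_mono interior_subset
          rw [hΔclosed.closure_eq] at h1
          exact h1 hzc
        exact hcon z hz hzΔ
      rcases connected_in_or_out hKconn isOpen_interior hsep with hin | hout
      · exact hy (interior_subset (hin (right_mem_segment ℝ x y)))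
      · exact hout x (left_mem_segment ℝ x y) (subset_closure hxint)
    obtain ⟨z, hzseg, hzΔ, hznotint⟩ := hcross
    obtain ⟨t0, t1, ht00, ht10, htsum, hzrep⟩ := seg_repr hzseg
    have ht0 : 0 < t0 := by
      rcases ht00.lt_or_eq with h | h
      · exact h
      exfalso
      apply hy
      have : z = y := by rw [hzrep, ← h, show t1 = 1 by linarith]; module
      rwa [← this]
    have ht1 : 0 < t1 := by
      rcases ht10.lt_or_eq with h | h
      · exact h
      exfalso
      apply hznotint
      have : z = x := by rw [hzrep, ← h, show t0 = 1 by linarith]; module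
      rwa [this]
    obtain ⟨e0, e1, e2, he0, he1, he2, hesum, hzrep2⟩ := set_tri_repr hzΔ
    have hvan : e0 = 0 ∨ e1 = 0 ∨ e2 = 0 := by
      apply exists_zero_coord he0 he1 he2
      intro hall
      apply hznotint
      rw [mem_int_tri_iff habc]
      have cc := tri_coord_comb habc e0 e1 e2 hesum
      intro i; fin_cases i
      · show 0 < (triBasis habc).coord 0 z
        have : (triBasis habc).coord 0 z = e0 := by rw [hzrep2]; simpa using cc 0
        rw [this]; exact hall.1
      · show 0 < (triBasis habc).coord 1 z
        have : (triBasis habc).coord 1 z = e1 := by rw [hzrep2]; simpa using cc 1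
        rw [this]; exact hall.2.1
      · show 0 < (triBasis habc).coord 2 z
        have : (triBasis habc).coord 2 z = e2 := by rw [hzrep2]; simpa using cc 2
        rw [this]; exact hall.2.2
    -- a helper to handle an endpoint degenerate case
    have endpoint : ∀ w : E2, z = w → ¬ Collinear ℝ ({x,y,w} : Set E2) → False := by
      intro w hzw hncol
      apply hncol
      apply col_rot
      apply collinear_of_mem_segment (p := x) (q := y)
      rw [← hzw]
      exact hzseg
    rcases hvan with h0 | h1 | h2
    · -- crossing on side (b,c) : roles (b,c,a)
      have hzbc : z ∈ segment ℝ b c := by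
        have e : z = e1•b + e2•c := by rw [hzrep2, h0]; module
        rw [e]
        exact comb_mem_seg _ _ _ _ he1 he2 (by rw [h0] at hesum; linarith)
      rcases seg_endpoint_cases hzbc with hzb | hzc | hopen
      · exact endpoint b hzb hxyb
      · exact endpoint c hzc hxyc
      · have hz' : t0•x + t1•y ∈ openSegment ℝ b c := by rwa [← hzrep]
        exact caseOut hO Oxb Oxc Oyb Oyc hxbc hybc hbca
          β γ α hβ hγ hα (by linarith) (by rw [hxrep]; module)
          t0 t1 ht0 ht1 htsum hz' hqO hq' pabO hpba
    · -- crossing on side (a,c) : i.e. (c,a) : roles (c,a,b)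
      have hzca : z ∈ segment ℝ c a := by
        have e : z = e2•c + e0•a := by rw [hzrep2, h1]; module
        rw [e]
        exact comb_mem_seg _ _ _ _ he2 he0 (by rw [h1] at hesum; linarith)
      rcases seg_endpoint_cases hzca with hzc | hza | hopen
      · exact endpoint c hzc hxyc
      · exact endpoint a hza hxya
      · have hz' : t0•x + t1•y ∈ openSegment ℝ c a := by rwa [← hzrep]
        exact caseOut hO Oxc Oxa Oyc Oya hxca hyca hcab
          γ α β hγ hα hβ (by linarith) (by rw [hxrep]; module)
          t0 t1 ht0 ht1 htsum hz' hqO hq' pbcO hpcb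
    · -- crossing on side (a,b) : roles (a,b,c)
      have hzab : z ∈ segment ℝ a b := by
        have e : z = e0•a + e1•b := by rw [hzrep2, h2]; module
        rw [e]
        exact comb_mem_seg _ _ _ _ he0 he1 (by rw [h2] at hesum; linarith)
      rcases seg_endpoint_cases hzab with hza | hzb | hopen
      · exact endpoint a hza hxya
      · exact endpoint b hzb hxyb
      · have hz' : t0•x + t1•y ∈ openSegment ℝ a b := by rwa [← hzrep]
        exact caseOut hO Oxa Oxb Oya Oyb hxab hyab habc
          α β γ hα hβ hγ hsum hxrep
          t0 t1 ht0 ht1 htsum hz' hqO hq' pcaO hpac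

end Cases

lemma exists_fifth (s : Finset (Fin 5)) (h : s.card ≤ 4) : ∃ l, l ∉ s := by
  have hc : 0 < sᶜ.card := by
    rw [Finset.card_compl]
    simp only [Fintype.card_fin]
    omega
  obtain ⟨l, hl⟩ := Finset.card_pos.1 hc
  exact ⟨l, Finset.mem_compl.1 hl⟩

lemma card_four (m i₁ i₂ i₃ : Fin 5) : ({m,i₁,i₂,i₃} : Finset (Fin 5)).card ≤ 4 := by
  have h1 : ({i₃} : Finset (Fin 5)).card = 1 := Finset.card_singleton _
  have h2 := Finset.card_insert_le i₂ ({i₃} : Finset (Fin 5))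
  have h3 := Finset.card_insert_le i₁ ({i₂,i₃} : Finset (Fin 5))
  have h4 := Finset.card_insert_le m ({i₁,i₂,i₃} : Finset (Fin 5))
  omega

lemma kstar_partner (x n₁ n₂ n₃ : Fin 5 ⊕ Fin 5)
    (h1 : (KStarGraph 5 5).Adj x n₁) (h2 : (KStarGraph 5 5).Adj x n₂)
    (h3 : (KStarGraph 5 5).Adj x n₃)
    (d12 : n₁ ≠ n₂) (d13 : n₁ ≠ n₃) (d23 : n₂ ≠ n₃) :
    ∃ yv, ¬ (KStarGraph 5 5).Adj x yv ∧ x ≠ yv ∧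
      (KStarGraph 5 5).Adj yv n₁ ∧ (KStarGraph 5 5).Adj yv n₂ ∧ (KStarGraph 5 5).Adj yv n₃ ∧
      ¬ (KStarGraph 5 5).Adj n₁ n₂ ∧ ¬ (KStarGraph 5 5).Adj n₂ n₃ ∧
      ¬ (KStarGraph 5 5).Adj n₃ n₁ := by
  rcases x with m | m
  · -- x = inl m : the nᵢ are inr
    rcases n₁ with i₁ | i₁
    · exact absurd h1 (by simp [KStarGraph])
    rcases n₂ with i₂ | i₂
    · exact absurd h2 (by simp [KStarGraph])
    rcases n₃ with i₃ | i₃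
    · exact absurd h3 (by simp [KStarGraph])
    obtain ⟨l, hl⟩ := exists_fifth {m,i₁,i₂,i₃} (card_four m i₁ i₂ i₃)
    have hlm : l ≠ m := fun hc => hl (by simp [hc])
    have hl1 : l ≠ i₁ := fun hc => hl (by simp [hc])
    have hl2 : l ≠ i₂ := fun hc => hl (by simp [hc])
    have hl3 : l ≠ i₃ := fun hc => hl (by simp [hc])
    refine ⟨Sum.inl l, by simp [KStarGraph], ?_, ?_, ?_, ?_, by simp [KStarGraph],
      by simp [KStarGraph], by simp [KStarGraph]⟩
    · simp only [ne_eq, Sum.inl.injEq]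
      exact fun hc => hlm hc.symm
    · show (l : ℕ) ≠ (i₁ : ℕ)
      exact fun hc => hl1 (Fin.val_injective hc)
    · show (l : ℕ) ≠ (i₂ : ℕ)
      exact fun hc => hl2 (Fin.val_injective hc)
    · show (l : ℕ) ≠ (i₃ : ℕ)
      exact fun hc => hl3 (Fin.val_injective hc)
  · -- x = inr m : the nᵢ are inl
    rcases n₁ with i₁ | i₁
    swap
    · exact absurd h1 (by simp [KStarGraph])
    rcases n₂ with i₂ | i₂
    swap
    · exact absurd h2 (by simp [KStarGraph])
    rcases n₃ with i₃ | i₃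
    swap
    · exact absurd h3 (by simp [KStarGraph])
    obtain ⟨l, hl⟩ := exists_fifth {m,i₁,i₂,i₃} (card_four m i₁ i₂ i₃)
    have hlm : l ≠ m := fun hc => hl (by simp [hc])
    have hl1 : l ≠ i₁ := fun hc => hl (by simp [hc])
    have hl2 : l ≠ i₂ := fun hc => hl (by simp [hc])
    have hl3 : l ≠ i₃ := fun hc => hl (by simp [hc])
    refine ⟨Sum.inr l, by simp [KStarGraph], ?_, ?_, ?_, ?_, by simp [KStarGraph],
      by simp [KStarGraph], by simp [KStarGraph]⟩
    · simp only [ne_eq, Sum.inr.injEq]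
      exact fun hc => hlm hc.symm
    · show (i₁ : ℕ) ≠ (l : ℕ)
      exact fun hc => hl1 (Fin.val_injective hc.symm)
    · show (i₂ : ℕ) ≠ (l : ℕ)
      exact fun hc => hl2 (Fin.val_injective hc.symm)
    · show (i₃ : ℕ) ≠ (l : ℕ)
      exact fun hc => hl3 (Fin.val_injective hc.symm)

theorem kstar55_vertex_separable_from_neighbors' (rep : ObstacleRep (KStarGraph 5 5) 1)
    (x : Fin 5 ⊕ Fin 5) :
    rep.v x ∉ convexHull ℝ (rep.v '' ((KStarGraph 5 5).neighborSet x)) := by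
  intro hmem
  have hOconn : IsPreconnected (rep.obs 0) := (rep.obs_connected 0).isPreconnected
  have hblock : ∀ p q : Fin 5 ⊕ Fin 5, p ≠ q → ¬ (KStarGraph 5 5).Adj p q →
      ((rep.obs 0) ∩ openSegment ℝ (rep.v p) (rep.v q)).Nonempty := by
    intro p q hne hnadj
    obtain ⟨i, hi⟩ := rep.blocks p q hne hnadj
    have hi0 : i = 0 := Subsingleton.elim i 0
    rwa [hi0] at hi
  have havoid : ∀ p q, (KStarGraph 5 5).Adj p q →
      Disjoint (rep.obs 0) (segment ℝ (rep.v p) (rep.v q)) :=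
    fun p q h => rep.obs_avoid_edges 0 p q h
  rw [convexHull_eq_union] at hmem
  simp only [Set.mem_iUnion] at hmem
  obtain ⟨t, hts, hai, hmem⟩ := hmem
  have hcard : t.card ≤ 3 := by
    have h1 := hai.card_le_finrank_succ
    rw [Fintype.card_coe] at h1
    have h2 := Submodule.finrank_le (vectorSpan ℝ (Set.range (Subtype.val : ↥t → ℝ×ℝ)))
    have h3 : Module.finrank ℝ (ℝ×ℝ) = 2 := by simp
    omega
  have hcases : t.card = 0 ∨ t.card = 1 ∨ t.card = 2 ∨ t.card = 3 := by omega
  rcases hcases with h | h | h | h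
  · rw [Finset.card_eq_zero] at h
    subst h
    simp at hmem
  · obtain ⟨A, rfl⟩ := Finset.card_eq_one.1 h
    simp only [Finset.coe_singleton, convexHull_singleton, Set.mem_singleton_iff] at hmem
    obtain ⟨nA, hnAmem, hvA⟩ := hts (by simp : A ∈ (↑({A} : Finset (ℝ×ℝ)) : Set (ℝ×ℝ)))
    have hadjA : (KStarGraph 5 5).Adj x nA := hnAmem
    have : x = nA := rep.inj (by rw [hvA, hmem])
    exact hadjA.ne this
  · obtain ⟨A, B, hAB, rfl⟩ := Finset.card_eq_two.1 h
    simp only [Finset.coe_insert, Finset.coe_singleton] at hmem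
    obtain ⟨nA, hnAmem, hvA⟩ := hts (by simp : A ∈ (↑({A,B} : Finset (ℝ×ℝ)) : Set (ℝ×ℝ)))
    obtain ⟨nB, hnBmem, hvB⟩ := hts (by simp : B ∈ (↑({A,B} : Finset (ℝ×ℝ)) : Set (ℝ×ℝ)))
    have hadjA : (KStarGraph 5 5).Adj x nA := hnAmem
    have hadjB : (KStarGraph 5 5).Adj x nB := hnBmem
    rw [convexHull_pair, ← hvA, ← hvB] at hmem
    have hcol := collinear_of_mem_segment hmem
    have hnAB : nA ≠ nB := fun hc => hAB (by rw [← hvA, ← hvB, hc])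
    exact rep.genpos x nA nB hadjA.ne hadjB.ne hnAB hcol
  · obtain ⟨A, B, C, hAB, hAC, hBC, rfl⟩ := Finset.card_eq_three.1 h
    simp only [Finset.coe_insert, Finset.coe_singleton] at hmem
    obtain ⟨nA, hnAmem, hvA⟩ :=
      hts (by simp : A ∈ (↑({A,B,C} : Finset (ℝ×ℝ)) : Set (ℝ×ℝ)))
    obtain ⟨nB, hnBmem, hvB⟩ :=
      hts (by simp : B ∈ (↑({A,B,C} : Finset (ℝ×ℝ)) : Set (ℝ×ℝ)))
    obtain ⟨nC, hnCmem, hvC⟩ :=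
      hts (by simp : C ∈ (↑({A,B,C} : Finset (ℝ×ℝ)) : Set (ℝ×ℝ)))
    have hadjA : (KStarGraph 5 5).Adj x nA := hnAmem
    have hadjB : (KStarGraph 5 5).Adj x nB := hnBmem
    have hadjC : (KStarGraph 5 5).Adj x nC := hnCmem
    have hnAB : nA ≠ nB := fun hc => hAB (by rw [← hvA, ← hvB, hc])
    have hnAC : nA ≠ nC := fun hc => hAC (by rw [← hvA, ← hvC, hc])
    have hnBC : nB ≠ nC := fun hc => hBC (by rw [← hvB, ← hvC, hc])
    obtain ⟨yv, hnadjxy, hxy, hadjyA, hadjyB, hadjyC, hnadjAB, hnadjBC, hnadjCA⟩ :=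
      kstar_partner x nA nB nC hadjA hadjB hadjC hnAB hnAC hnBC
    rw [← hvA, ← hvB, ← hvC] at hmem
    exact core hOconn
      (havoid x nA hadjA) (havoid x nB hadjB) (havoid x nC hadjC)
      (havoid yv nA hadjyA) (havoid yv nB hadjyB) (havoid yv nC hadjyC)
      (rep.genpos x nA nB hadjA.ne hadjB.ne hnAB)
      (rep.genpos x nB nC hadjB.ne hadjC.ne hnBC)
      (rep.genpos x nC nA hadjC.ne hadjA.ne hnAC.symm)
      (rep.genpos yv nA nB hadjyA.ne hadjyB.ne hnAB)
      (rep.genpos yv nB nC hadjyB.ne hadjyC.ne hnBC)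
      (rep.genpos yv nC nA hadjyC.ne hadjyA.ne hnAC.symm)
      (rep.genpos nA nB nC hnAB hnAC hnBC)
      (rep.genpos x yv nA hxy hadjA.ne hadjyA.ne)
      (rep.genpos x yv nB hxy hadjB.ne hadjyB.ne)
      (rep.genpos x yv nC hxy hadjC.ne hadjyC.ne)
      hmem
      (hblock x yv hxy hnadjxy)
      (hblock nA nB hnAB hnadjAB)
      (hblock nB nC hnBC hnadjBC)
      (hblock nC nA hnAC.symm hnadjCA)


end

/-- in every 1-obstacle representation of `K*_{5,5}`, every vertex is
linearly separable from its neighbors: its image point is not in the convex hull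
of the images of its neighbors. -/
theorem kstar55_vertex_separable_from_neighbors (rep : ObstacleRep (KStarGraph 5 5) 1)
    (x : Fin 5 ⊕ Fin 5) :
    rep.v x ∉ convexHull ℝ (rep.v '' ((KStarGraph 5 5).neighborSet x)) := by
  exact kstar55_vertex_separable_from_neighbors' rep x
end

section
/- For every integer k ≥ 4 and every h-obstacle representation v of CE(k): if for some subset A ⊆ {1,…,k} the point v(r_A) is dangerous for A with respect to the points v(b_1),…,v(b_k), then h ≥ 2 (at least two obstacles are involved). -/
open Set

/-- The graph `CE(k)`: a clique `b_1, …, b_k` (`Sum.inl`) together with an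
independent set `{r_A : A ⊆ [k]}` (`Sum.inr`), where `b_i ~ r_A` iff `i ∈ A`. -/
def CE (k : ℕ) : SimpleGraph (Fin k ⊕ Finset (Fin k)) where
  Adj x y := match x, y with
    | Sum.inl i, Sum.inl j => i ≠ j
    | Sum.inl i, Sum.inr A => i ∈ A
    | Sum.inr A, Sum.inl i => i ∈ A
    | Sum.inr _, Sum.inr _ => False
  symm := by constructor; rintro (i|A) (j|B) h <;> simp_all [ne_comm, eq_comm]
  loopless := by constructor; rintro (i|A) h <;> simp_all

/-- The ray from `q` through `p`. -/
def Ray (q p : ℝ × ℝ) : Set (ℝ × ℝ) := {x | ∃ t : ℝ, 0 ≤ t ∧ x = q + t • (p - q)}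

/-- A point `p` is dangerous for `A` w.r.t. the points `b i`: there are distinct
`i₁, i₂ ∈ A` and distinct `i₃, i₄ ∉ A` such that `b i₃` and `b i₄` lie in
different connected components of the complement of the union of the rays from
`p` through `b i₁` and through `b i₂`. -/
def Dangerous {k : ℕ} (b : Fin k → ℝ × ℝ) (A : Finset (Fin k)) (p : ℝ × ℝ) : Prop :=
  ∃ i₁ i₂ i₃ i₄ : Fin k, i₁ ∈ A ∧ i₂ ∈ A ∧ i₁ ≠ i₂ ∧ i₃ ∉ A ∧ i₄ ∉ A ∧ i₃ ≠ i₄ ∧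
    b i₃ ∈ (Ray p (b i₁) ∪ Ray p (b i₂))ᶜ ∧
    b i₄ ∈ (Ray p (b i₁) ∪ Ray p (b i₂))ᶜ ∧
    connectedComponentIn (Ray p (b i₁) ∪ Ray p (b i₂))ᶜ (b i₃) ≠
      connectedComponentIn (Ray p (b i₁) ∪ Ray p (b i₂))ᶜ (b i₄)


noncomputable def cf (p u v x : ℝ × ℝ) : ℝ :=
  ((x.1 - p.1) * v.2 - (x.2 - p.2) * v.1) / (u.1 * v.2 - u.2 * v.1)

noncomputable def cg (p u v x : ℝ × ℝ) : ℝ :=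
  (u.1 * (x.2 - p.2) - u.2 * (x.1 - p.1)) / (u.1 * v.2 - u.2 * v.1)

section coords
variable {p u v : ℝ × ℝ} (hD : u.1 * v.2 - u.2 * v.1 ≠ 0)
include hD

lemma cf_eval (a b : ℝ) : cf p u v (p + a • u + b • v) = a := by
  simp only [cf, Prod.fst_add, Prod.snd_add, Prod.smul_fst, Prod.smul_snd, smul_eq_mul]
  have hED : (u.1 * v.2 - u.2 * v.1)⁻¹ * (u.1 * v.2 - u.2 * v.1) = 1 := inv_mul_cancel₀ hD
  linear_combination a * hED

lemma cg_eval (a b : ℝ) : cg p u v (p + a • u + b • v) = b := by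
  simp only [cg, Prod.fst_add, Prod.snd_add, Prod.smul_fst, Prod.smul_snd, smul_eq_mul]
  field_simp
  ring

lemma coords_repr (x : ℝ × ℝ) : x = p + cf p u v x • u + cg p u v x • v := by
  ext
  · simp only [cf, cg, Prod.fst_add, Prod.smul_fst, smul_eq_mul]
    have hED : (u.1 * v.2 - u.2 * v.1)⁻¹ * (u.1 * v.2 - u.2 * v.1) = 1 := inv_mul_cancel₀ hD
    linear_combination (-(x.1 - p.1)) * hED
  · simp only [cf, cg, Prod.snd_add, Prod.smul_snd, smul_eq_mul]
    have hED : (u.1 * v.2 - u.2 * v.1)⁻¹ * (u.1 * v.2 - u.2 * v.1) = 1 := inv_mul_cancel₀ hD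
    linear_combination (-(x.2 - p.2)) * hED

lemma cf_combo (a : ℝ) (x y : ℝ × ℝ) :
    cf p u v (a • x + (1 - a) • y) = a * cf p u v x + (1 - a) * cf p u v y := by
  simp only [cf, Prod.fst_add, Prod.snd_add, Prod.smul_fst, Prod.smul_snd, smul_eq_mul]
  field_simp
  ring

lemma cg_combo (a : ℝ) (x y : ℝ × ℝ) :
    cg p u v (a • x + (1 - a) • y) = a * cg p u v x + (1 - a) * cg p u v y := by
  simp only [cg, Prod.fst_add, Prod.snd_add, Prod.smul_fst, Prod.smul_snd, smul_eq_mul]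
  field_simp
  ring

end coords

lemma cf_cont (p u v : ℝ × ℝ) : Continuous (cf p u v) := by
  unfold cf; fun_prop

lemma cg_cont (p u v : ℝ × ℝ) : Continuous (cg p u v) := by
  unfold cg; fun_prop


lemma mem_triangle {P Q R : ℝ × ℝ} {a b c : ℝ} (ha : 0 ≤ a) (hb : 0 ≤ b) (hc : 0 ≤ c)
    (habc : a + b + c = 1) : a • P + b • Q + c • R ∈ convexHull ℝ ({P, Q, R} : Set (ℝ × ℝ)) := by
  rcases eq_or_lt_of_le (add_nonneg hb hc) with hs | hs
  · have hb0 : b = 0 := by linarith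
    have hc0 : c = 0 := by linarith
    have ha1 : a = 1 := by linarith
    simp only [hb0, hc0, ha1, one_smul, zero_smul, add_zero]
    exact subset_convexHull ℝ _ (by simp)
  · set s := b + c with hsdef
    have hm : (b / s) • Q + (c / s) • R ∈ segment ℝ Q R :=
      ⟨b / s, c / s, by positivity, by positivity, by field_simp; exact hsdef.symm, rfl⟩
    have hmem : (b / s) • Q + (c / s) • R ∈ convexHull ℝ ({P, Q, R} : Set (ℝ × ℝ)) :=
      segment_subset_convexHull (by simp) (by simp) hm
    have hPmem : P ∈ convexHull ℝ ({P, Q, R} : Set (ℝ × ℝ)) := subset_convexHull ℝ _ (by simp)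
    have hseg : a • P + s • ((b / s) • Q + (c / s) • R) ∈
        convexHull ℝ ({P, Q, R} : Set (ℝ × ℝ)) := by
      refine (convex_convexHull ℝ _).segment_subset hPmem hmem ⟨a, s, ha, le_of_lt hs, by linarith, rfl⟩
    have : a • P + s • ((b / s) • Q + (c / s) • R) = a • P + b • Q + c • R := by
      rw [smul_add, smul_smul, smul_smul, mul_div_cancel₀ _ (ne_of_gt hs),
        mul_div_cancel₀ _ (ne_of_gt hs)]
      abel
    rwa [this] at hseg


section tri
variable {p u v : ℝ × ℝ} (hD : u.1 * v.2 - u.2 * v.1 ≠ 0)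
include hD

/-- convexity of sets cut out by affine conditions on cf, cg -/
lemma convex_affq (F : ℝ → ℝ → Prop)
    (hF : ∀ a : ℝ, ∀ c₁ c₂ d₁ d₂ : ℝ, 0 ≤ a → a ≤ 1 → F c₁ d₁ → F c₂ d₂ →
      F (a * c₁ + (1 - a) * c₂) (a * d₁ + (1 - a) * d₂)) :
    Convex ℝ {x : ℝ × ℝ | F (cf p u v x) (cg p u v x)} := by
  intro x hx y hy a b ha hb hab
  have hb' : b = 1 - a := by linarith
  subst hb'
  simp only [mem_setOf_eq] at *
  rw [cf_combo hD, cg_combo hD]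
  exact hF a _ _ _ _ ha (by linarith) hx hy

lemma tri_eq :
    convexHull ℝ ({p, p + u, p + v} : Set (ℝ × ℝ)) =
      {x | 0 ≤ cf p u v x ∧ 0 ≤ cg p u v x ∧ cf p u v x + cg p u v x ≤ 1} := by
  apply Subset.antisymm
  · apply convexHull_min
    · have e00 : cf p u v p = 0 := by simpa using cf_eval (p := p) hD 0 0
      have e01 : cg p u v p = 0 := by simpa using cg_eval (p := p) hD 0 0
      have e10 : cf p u v (p + u) = 1 := by simpa using cf_eval (p := p) hD 1 0
      have e11 : cg p u v (p + u) = 0 := by simpa using cg_eval (p := p) hD 1 0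
      have e20 : cf p u v (p + v) = 0 := by simpa using cf_eval (p := p) hD 0 1
      have e21 : cg p u v (p + v) = 1 := by simpa using cg_eval (p := p) hD 0 1
      rintro x (h | h | h) <;> simp only [mem_setOf_eq] <;> rw [h]
      · rw [e00, e01]; norm_num
      · rw [e10, e11]; norm_num
      · rw [e20, e21]; norm_num
    · exact convex_affq hD (fun c d => 0 ≤ c ∧ 0 ≤ d ∧ c + d ≤ 1)
        (by rintro a c₁ c₂ d₁ d₂ ha ha1 ⟨h1, h2, h3⟩ ⟨h4, h5, h6⟩
            refine ⟨by nlinarith, by nlinarith, by nlinarith⟩)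
  · rintro x ⟨h1, h2, h3⟩
    have hx := coords_repr (p := p) hD x
    set a := cf p u v x
    set b := cg p u v x
    have : x = (1 - a - b) • p + a • (p + u) + b • (p + v) := by
      rw [hx]; module
    rw [this]
    exact mem_triangle (by linarith) h1 h2 (by ring)

lemma tri_interior :
    {x : ℝ × ℝ | 0 < cf p u v x ∧ 0 < cg p u v x ∧ cf p u v x + cg p u v x < 1} ⊆
      interior (convexHull ℝ ({p, p + u, p + v} : Set (ℝ × ℝ))) := by
  apply interior_maximal
  · rw [tri_eq hD]
    rintro x ⟨h1, h2, h3⟩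
    exact ⟨le_of_lt h1, le_of_lt h2, le_of_lt h3⟩
  · have : {x : ℝ × ℝ | 0 < cf p u v x ∧ 0 < cg p u v x ∧ cf p u v x + cg p u v x < 1} =
        (cf p u v) ⁻¹' (Ioi 0) ∩ ((cg p u v) ⁻¹' (Ioi 0) ∩
          (fun x => cf p u v x + cg p u v x) ⁻¹' (Iio 1)) := by
      ext x; simp [and_assoc]
    rw [this]
    exact ((isOpen_Ioi).preimage (cf_cont p u v)).inter
      (((isOpen_Ioi).preimage (cg_cont p u v)).inter
        ((isOpen_Iio).preimage ((cf_cont p u v).add (cg_cont p u v))))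

lemma frontier_tri :
    frontier (convexHull ℝ ({p, p + u, p + v} : Set (ℝ × ℝ))) ⊆
      segment ℝ p (p + u) ∪ segment ℝ (p + u) (p + v) ∪ segment ℝ p (p + v) := by
  have hclosed : IsClosed (convexHull ℝ ({p, p + u, p + v} : Set (ℝ × ℝ))) :=
    ((Set.toFinite _).isCompact_convexHull (𝕜 := ℝ)).isClosed
  rw [hclosed.frontier_eq]
  rintro x ⟨hxT, hxint⟩
  rw [tri_eq hD] at hxT
  obtain ⟨h1, h2, h3⟩ := hxT
  have hnot : ¬(0 < cf p u v x ∧ 0 < cg p u v x ∧ cf p u v x + cg p u v x < 1) :=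
    fun hcon => hxint (tri_interior hD hcon)
  have hx := coords_repr (p := p) hD x
  set a := cf p u v x with hadef
  set b := cg p u v x with hbdef
  push_neg at hnot
  rcases eq_or_lt_of_le h1 with ha0 | ha0
  · -- a = 0 : x ∈ segment p (p+v)
    right
    rw [segment_eq_image']
    refine ⟨b, ⟨h2, by linarith⟩, ?_⟩
    simp only [add_sub_cancel_left]
    rw [hx, ← ha0]; module
  rcases eq_or_lt_of_le h2 with hb0 | hb0
  · left; left
    rw [segment_eq_image']
    refine ⟨a, ⟨h1, by linarith⟩, ?_⟩
    simp only [add_sub_cancel_left]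
    rw [hx, ← hb0]; module
  have hsum : a + b = 1 := le_antisymm h3 (hnot ha0 hb0)
  left; right
  rw [segment_eq_image']
  refine ⟨b, ⟨le_of_lt hb0, by linarith⟩, ?_⟩
  have : p + v - (p + u) = v - u := by abel
  rw [this, hx]
  have ha' : a = 1 - b := by linarith
  rw [ha']; module

end tri


lemma cf_self {p u v : ℝ × ℝ} (hD : u.1 * v.2 - u.2 * v.1 ≠ 0) : cf p u v p = 0 := by
  simpa using cf_eval (p := p) hD 0 0
lemma cg_self {p u v : ℝ × ℝ} (hD : u.1 * v.2 - u.2 * v.1 ≠ 0) : cg p u v p = 0 := by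
  simpa using cg_eval (p := p) hD 0 0
lemma cf_fst {p u v : ℝ × ℝ} (hD : u.1 * v.2 - u.2 * v.1 ≠ 0) : cf p u v (p + u) = 1 := by
  simpa using cf_eval (p := p) hD 1 0
lemma cg_fst {p u v : ℝ × ℝ} (hD : u.1 * v.2 - u.2 * v.1 ≠ 0) : cg p u v (p + u) = 0 := by
  simpa using cg_eval (p := p) hD 1 0
lemma cf_snd {p u v : ℝ × ℝ} (hD : u.1 * v.2 - u.2 * v.1 ≠ 0) : cf p u v (p + v) = 0 := by
  simpa using cf_eval (p := p) hD 0 1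
lemma cg_snd {p u v : ℝ × ℝ} (hD : u.1 * v.2 - u.2 * v.1 ≠ 0) : cg p u v (p + v) = 1 := by
  simpa using cg_eval (p := p) hD 0 1

lemma geom (p b₁ b₂ b₃ x₃ x₄ : ℝ × ℝ) (O : Set (ℝ × ℝ))
    (hO : IsPreconnected O)
    (hS1 : Disjoint O (segment ℝ p b₁)) (hS2 : Disjoint O (segment ℝ p b₂))
    (hS3 : Disjoint O (segment ℝ b₁ b₃)) (hS4 : Disjoint O (segment ℝ b₂ b₃))
    (hx₃O : x₃ ∈ O) (hx₄O : x₄ ∈ O)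
    (hx₃ : x₃ ∈ openSegment ℝ p b₃)
    (hD : (b₁ - p).1 * (b₂ - p).2 - (b₁ - p).2 * (b₂ - p).1 ≠ 0)
    (hα : 0 < cf p (b₁ - p) (b₂ - p) b₃) (hβ : 0 < cg p (b₁ - p) (b₂ - p) b₃)
    (hx₄C : cf p (b₁ - p) (b₂ - p) x₄ < 0 ∨ cg p (b₁ - p) (b₂ - p) x₄ < 0) : False := by
  set u := b₁ - p with hu
  set v := b₂ - p with hv
  set α := cf p u v b₃ with hαdef
  set β := cg p u v b₃ with hβdef
  set w : ℝ × ℝ := b₃ - p with hwdef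
  have e1 : p + u = b₁ := by simp [hu]
  have e2 : p + v = b₂ := by simp [hv]
  have e3 : p + w = b₃ := by simp [hwdef]
  have hw : w = α • u + β • v := by
    have h3 := coords_repr (p := p) hD b₃
    rw [hwdef]
    nth_rewrite 1 [h3]
    abel
  have hDuw : u.1 * w.2 - u.2 * w.1 ≠ 0 := by
    rw [hw]
    simp only [Prod.fst_add, Prod.snd_add, Prod.smul_fst, Prod.smul_snd, smul_eq_mul]
    have : u.1 * (α * u.2 + β * v.2) - u.2 * (α * u.1 + β * v.1)
        = β * (u.1 * v.2 - u.2 * v.1) := by ring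
    rw [this]
    exact mul_ne_zero (ne_of_gt hβ) hD
  have hDvw : v.1 * w.2 - v.2 * w.1 ≠ 0 := by
    rw [hw]
    simp only [Prod.fst_add, Prod.snd_add, Prod.smul_fst, Prod.smul_snd, smul_eq_mul]
    have : v.1 * (α * u.2 + β * v.2) - v.2 * (α * u.1 + β * v.1)
        = -α * (u.1 * v.2 - u.2 * v.1) := by ring
    rw [this]
    exact mul_ne_zero (neg_ne_zero.mpr (ne_of_gt hα)) hD
  set T₁ := convexHull ℝ ({p, p + u, p + w} : Set (ℝ × ℝ)) with hT₁
  set T₂ := convexHull ℝ ({p, p + v, p + w} : Set (ℝ × ℝ)) with hT₂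
  set Q := T₁ ∪ T₂ with hQ
  -- Step A: the open segment (p, b₃) is in the interior of Q
  have stepA : ∀ y ∈ openSegment ℝ p b₃, y ∈ interior Q := by
    intro y hy
    rw [openSegment_eq_image'] at hy
    obtain ⟨t, ⟨ht0, ht1⟩, rfl⟩ := hy
    rw [show b₃ - p = w from rfl]
    set ε := min (α * t / 2) (min ((1 - t) / 2) ((1 - t) * α / (2 * (1 + β)))) with hε
    have h1t : (0:ℝ) < 1 - t := by linarith
    have hβ1 : (0:ℝ) < 1 + β := by linarith
    have hεpos : 0 < ε := by
      refine lt_min (by positivity) (lt_min (by linarith) (by positivity))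
    have hε1 : ε ≤ α * t / 2 := min_le_left _ _
    have hε2 : ε ≤ (1 - t) / 2 := le_trans (min_le_right _ _) (min_le_left _ _)
    have hε3 : ε ≤ (1 - t) * α / (2 * (1 + β)) := le_trans (min_le_right _ _) (min_le_right _ _)
    set W := {x : ℝ × ℝ | -ε < cf p u w x ∧ cf p u w x < ε ∧
      t / 2 < cg p u w x ∧ cg p u w x < (1 + t) / 2} with hW
    have hWopen : IsOpen W := by
      have : W = (cf p u w) ⁻¹' (Ioo (-ε) ε) ∩ (cg p u w) ⁻¹' (Ioo (t/2) ((1+t)/2)) := by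
        ext x; simp [hW, and_assoc, Ioo, mem_setOf_eq]
      rw [this]
      exact (isOpen_Ioo.preimage (cf_cont p u w)).inter (isOpen_Ioo.preimage (cg_cont p u w))
    have hyW : p + t • w ∈ W := by
      have h1 : p + t • w = p + (0:ℝ) • u + t • w := by module
      constructor
      · rw [h1, cf_eval hDuw]; linarith
      refine ⟨?_, ?_, ?_⟩
      · rw [h1, cf_eval hDuw]; linarith
      · rw [h1, cg_eval hDuw]; linarith
      · rw [h1, cg_eval hDuw]; linarith
    have hWQ : W ⊆ Q := by
      intro x hx
      obtain ⟨hW1, hW2, hW3, hW4⟩ := hx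
      set a := cf p u w x with hadef
      set c := cg p u w x with hcdef
      have hx1 : x = p + a • u + c • w := coords_repr (p := p) hDuw x
      rcases le_or_gt 0 a with ha | ha
      · left
        rw [hT₁, tri_eq hDuw]
        simp only [mem_setOf_eq]
        exact ⟨ha, by linarith, by linarith⟩
      · right
        have hαne : α ≠ 0 := ne_of_gt hα
        have hx2 : x = p + (-a * β / α) • v + (c + a / α) • w := by
          rw [hx1, hw]
          match_scalars <;> field_simp <;> ring
        rw [hT₂, tri_eq hDvw, hx2]
        simp only [mem_setOf_eq]
        rw [cf_eval hDvw, cg_eval hDvw]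
        have hc1 : 0 ≤ -a * β / α := by
          apply div_nonneg _ (le_of_lt hα)
          nlinarith
        have hc2 : 0 ≤ c + a / α := by
          have h' : -(t/2) ≤ a / α := by
            rw [le_div_iff₀ hα]
            nlinarith
          linarith
        have hc3 : -a * β / α + (c + a / α) ≤ 1 := by
          have k1 : a * (1 - β) ≤ ε * (1 + β) := by nlinarith
          have k2 : a * (1 - β) / α ≤ ε * (1 + β) / α := by
            exact (div_le_div_iff_of_pos_right hα).mpr k1
          have k3 : ε * (1 + β) / α ≤ (1 - t) / 2 := by
            rw [div_le_iff₀ hα]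
            rw [le_div_iff₀ (by positivity : (0:ℝ) < 2 * (1 + β))] at hε3
            nlinarith
          have k4 : -a * β / α + a / α = a * (1 - β) / α := by
            field_simp
            ring
          linarith
        exact ⟨hc1, hc2, hc3⟩
    exact interior_maximal hWQ hWopen hyW
  -- Q is closed
  have hT₁closed : IsClosed T₁ := ((Set.toFinite _).isCompact_convexHull (𝕜 := ℝ)).isClosed
  have hT₂closed : IsClosed T₂ := ((Set.toFinite _).isCompact_convexHull (𝕜 := ℝ)).isClosed
  have hQclosed : IsClosed Q := hT₁closed.union hT₂closed
  -- the avoided set S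
  set S := segment ℝ p b₁ ∪ segment ℝ p b₂ ∪ segment ℝ b₁ b₃ ∪ segment ℝ b₂ b₃ with hSdef
  -- Step B : frontier (interior Q) ⊆ S
  have stepB : frontier (interior Q) ⊆ S := by
    intro z hz
    have hz1 : z ∈ frontier Q := by
      rcases hz with ⟨hz1, hz2⟩
      rw [IsOpen.interior_eq isOpen_interior] at hz2
      exact ⟨closure_mono interior_subset hz1, hz2⟩
    have hznint : z ∉ interior Q := hz1.2
    have hz2 : z ∈ frontier T₁ ∪ frontier T₂ := by
      have hzQ : z ∈ Q := hQclosed.closure_subset hz1.1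
      rcases hzQ with hzT | hzT
      · exact Or.inl ⟨subset_closure hzT,
          fun hint => hznint (interior_mono subset_union_left hint)⟩
      · exact Or.inr ⟨subset_closure hzT,
          fun hint => hznint (interior_mono subset_union_right hint)⟩
    have hseg : z ∈ segment ℝ p (p + u) ∪ segment ℝ (p + u) (p + w) ∪ segment ℝ p (p + w) ∨
        z ∈ segment ℝ p (p + v) ∪ segment ℝ (p + v) (p + w) ∪ segment ℝ p (p + w) := by
      rcases hz2 with h | h
      · exact Or.inl (frontier_tri hDuw h)
      · exact Or.inr (frontier_tri hDvw h)
    have hpw : z ∈ segment ℝ p (p + w) → z ∈ S := by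
      intro hzz
      rw [← insert_endpoints_openSegment] at hzz
      rcases hzz with rfl | hzz
      · exact Or.inl (Or.inl (Or.inl (left_mem_segment ℝ _ _)))
      rcases hzz with rfl | hzz
      · rw [e3]
        exact Or.inl (Or.inr (right_mem_segment ℝ _ _))
      · exact absurd (stepA _ (by rwa [e3] at hzz)) hznint
    rcases hseg with ((h | h) | h) | ((h | h) | h)
    · rw [e1] at h; exact Or.inl (Or.inl (Or.inl h))
    · rw [e1, e3] at h; exact Or.inl (Or.inr h)
    · exact hpw h
    · rw [e2] at h; exact Or.inl (Or.inl (Or.inr h))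
    · rw [e2, e3] at h; exact Or.inr h
    · exact hpw h
  -- Step C : Q ⊆ C
  have stepC : Q ⊆ {x : ℝ × ℝ | 0 ≤ cf p u v x ∧ 0 ≤ cg p u v x} := by
    have hCconv : Convex ℝ {x : ℝ × ℝ | 0 ≤ cf p u v x ∧ 0 ≤ cg p u v x} := by
      exact convex_affq hD (fun cc dd => 0 ≤ cc ∧ 0 ≤ dd)
        (by rintro a c₁ c₂ d₁ d₂ ha ha1 ⟨h1, h2⟩ ⟨h3, h4⟩
            constructor <;> nlinarith)
    have hp : p ∈ {x : ℝ × ℝ | 0 ≤ cf p u v x ∧ 0 ≤ cg p u v x} := by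
      simp only [mem_setOf_eq, cf_self hD, cg_self hD, le_refl, and_self]
    have hpu : p + u ∈ {x : ℝ × ℝ | 0 ≤ cf p u v x ∧ 0 ≤ cg p u v x} := by
      simp only [mem_setOf_eq, cf_fst hD, cg_fst hD]
      norm_num
    have hpv : p + v ∈ {x : ℝ × ℝ | 0 ≤ cf p u v x ∧ 0 ≤ cg p u v x} := by
      simp only [mem_setOf_eq, cf_snd hD, cg_snd hD]
      norm_num
    have hpw' : p + w ∈ {x : ℝ × ℝ | 0 ≤ cf p u v x ∧ 0 ≤ cg p u v x} := by
      have h3 : p + w = b₃ := e3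
      rw [h3]
      exact ⟨le_of_lt hα, le_of_lt hβ⟩
    rintro x (hx | hx)
    · exact convexHull_min (by rintro y (rfl | rfl | rfl) <;> assumption) hCconv hx
    · exact convexHull_min (by rintro y (rfl | rfl | rfl) <;> assumption) hCconv hx
  -- Step D : conclude
  have hOS : ∀ z ∈ O, z ∉ S := by
    intro z hzO hzS
    rcases hzS with ((h | h) | h) | h
    · exact hS1.le_bot ⟨hzO, h⟩
    · exact hS2.le_bot ⟨hzO, h⟩
    · exact hS3.le_bot ⟨hzO, h⟩
    · exact hS4.le_bot ⟨hzO, h⟩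
  have hcover : O ⊆ interior Q ∪ (closure (interior Q))ᶜ := by
    intro z hz
    by_cases hzc : z ∈ closure (interior Q)
    · left
      rcases (em (z ∈ interior Q)) with h | h
      · exact h
      · exact absurd (stepB ⟨hzc, by rwa [IsOpen.interior_eq isOpen_interior]⟩) (hOS z hz)
    · exact Or.inr hzc
  have hOsub : O ⊆ interior Q := by
    refine hO.subset_left_of_subset_union isOpen_interior
      isClosed_closure.isOpen_compl ?_ hcover ⟨x₃, hx₃O, stepA _ hx₃⟩
    exact disjoint_compl_right.mono_left subset_closure
  have hx₄Q : x₄ ∈ Q := interior_subset (hOsub hx₄O)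
  have := stepC hx₄Q
  rcases hx₄C with h | h
  · exact absurd this.1 (not_le.mpr h)
  · exact absurd this.2 (not_le.mpr h)


lemma combo_pos {a c₁ c₂ : ℝ} (ha : 0 ≤ a) (ha1 : a ≤ 1) (h1 : 0 < c₁) (h2 : 0 < c₂) :
    0 < a * c₁ + (1 - a) * c₂ := by
  rcases eq_or_lt_of_le ha with h | h
  · rw [← h]; simpa using h2
  · nlinarith

lemma combo_neg {a c₁ c₂ : ℝ} (ha : 0 ≤ a) (ha1 : a ≤ 1) (h1 : c₁ < 0) (h2 : c₂ < 0) :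
    a * c₁ + (1 - a) * c₂ < 0 := by
  rcases eq_or_lt_of_le ha with h | h
  · rw [← h]; simpa using h2
  · nlinarith


section rays
variable {p u v : ℝ × ℝ} (hD : u.1 * v.2 - u.2 * v.1 ≠ 0)
include hD

lemma ray_fst_eq : Ray p (p + u) = {x | 0 ≤ cf p u v x ∧ cg p u v x = 0} := by
  ext x
  constructor
  · rintro ⟨t, ht, rfl⟩
    have h' : p + t • (p + u - p) = p + t • u + (0:ℝ) • v := by module
    rw [h']
    simp only [mem_setOf_eq, cf_eval hD, cg_eval hD]
    exact ⟨ht, trivial⟩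
  · rintro ⟨h1, h2⟩
    refine ⟨cf p u v x, h1, ?_⟩
    nth_rewrite 1 [coords_repr hD x]
    rw [h2]
    module

lemma ray_snd_eq : Ray p (p + v) = {x | 0 ≤ cg p u v x ∧ cf p u v x = 0} := by
  ext x
  constructor
  · rintro ⟨t, ht, rfl⟩
    have h' : p + t • (p + v - p) = p + (0:ℝ) • u + t • v := by module
    rw [h']
    simp only [mem_setOf_eq, cf_eval hD, cg_eval hD]
    exact ⟨ht, trivial⟩
  · rintro ⟨h1, h2⟩
    refine ⟨cg p u v x, h1, ?_⟩
    nth_rewrite 1 [coords_repr hD x]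
    rw [h2]
    module

lemma compl_rays_eq :
    (Ray p (p + u) ∪ Ray p (p + v))ᶜ =
      {x : ℝ × ℝ | 0 < cf p u v x ∧ 0 < cg p u v x} ∪
        {x : ℝ × ℝ | cf p u v x < 0 ∨ cg p u v x < 0} := by
  rw [ray_fst_eq hD, ray_snd_eq hD]
  ext x
  simp only [mem_union, mem_compl_iff, mem_setOf_eq, not_or, not_and_or]
  constructor
  · rintro ⟨h1, h2⟩
    rcases lt_trichotomy (cf p u v x) 0 with hf | hf | hf
    · exact Or.inr (Or.inl hf)
    · rcases h2 with h | h
      · exact Or.inr (Or.inr (not_le.mp h))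
      · exact absurd hf h
    · rcases lt_trichotomy (cg p u v x) 0 with hg | hg | hg
      · exact Or.inr (Or.inr hg)
      · rcases h1 with h | h
        · exact absurd (le_of_lt hf) h
        · exact absurd hg h
      · exact Or.inl ⟨hf, hg⟩
  · rintro (⟨h1, h2⟩ | h)
    · exact ⟨Or.inr (ne_of_gt h2), Or.inr (ne_of_gt h1)⟩
    · rcases h with h | h
      · exact ⟨Or.inl (not_le.mpr h), Or.inr (ne_of_lt h)⟩
      · exact ⟨Or.inr (ne_of_lt h), Or.inl (not_le.mpr h)⟩

lemma preconn_U1 : IsPreconnected {x : ℝ × ℝ | 0 < cf p u v x ∧ 0 < cg p u v x} := by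
  apply Convex.isPreconnected
  exact convex_affq (p := p) hD (fun c d => 0 < c ∧ 0 < d)
    (fun a c₁ c₂ d₁ d₂ ha ha1 h1 h2 =>
      ⟨combo_pos ha ha1 h1.1 h2.1, combo_pos ha ha1 h1.2 h2.2⟩)

lemma preconn_U2 : IsPreconnected {x : ℝ × ℝ | cf p u v x < 0 ∨ cg p u v x < 0} := by
  have h1 : Convex ℝ {x : ℝ × ℝ | cf p u v x < 0} :=
    convex_affq (p := p) hD (fun c _ => c < 0)
      (fun a c₁ c₂ d₁ d₂ ha ha1 h1 h2 => combo_neg ha ha1 h1 h2)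
  have h2 : Convex ℝ {x : ℝ × ℝ | cg p u v x < 0} :=
    convex_affq (p := p) hD (fun _ d => d < 0)
      (fun a c₁ c₂ d₁ d₂ ha ha1 h1 h2 => combo_neg ha ha1 h1 h2)
  have hq : (p + (-1 : ℝ) • u + (-1 : ℝ) • v) ∈
      {x : ℝ × ℝ | cf p u v x < 0} ∩ {x : ℝ × ℝ | cg p u v x < 0} := by
    constructor <;> simp only [mem_setOf_eq]
    · rw [cf_eval hD]; norm_num
    · rw [cg_eval hD]; norm_num
  have heq : {x : ℝ × ℝ | cf p u v x < 0 ∨ cg p u v x < 0} =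
      {x : ℝ × ℝ | cf p u v x < 0} ∪ {x : ℝ × ℝ | cg p u v x < 0} := rfl
  rw [heq]
  exact IsPreconnected.union _ hq.1 hq.2 h1.isPreconnected h2.isPreconnected

end rays

lemma comp_eq_of_both_mem {F U : Set (ℝ × ℝ)} (hU : IsPreconnected U) (hUF : U ⊆ F)
    {x y : ℝ × ℝ} (hx : x ∈ U) (hy : y ∈ U) :
    connectedComponentIn F x = connectedComponentIn F y :=
  connectedComponentIn_eq (hU.subset_connectedComponentIn hx hUF hy)

lemma collinear_of_det_eq {x y z : ℝ × ℝ}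
    (hdet : (y - x).1 * (z - x).2 - (y - x).2 * (z - x).1 = 0) :
    Collinear ℝ ({x, y, z} : Set (ℝ × ℝ)) := by
  rw [collinear_iff_of_mem (show x ∈ ({x, y, z} : Set (ℝ × ℝ)) by simp)]
  simp only [Prod.fst_sub, Prod.snd_sub] at hdet
  by_cases hyx : y = x
  · refine ⟨z - x, ?_⟩
    intro q hq
    simp only [mem_insert_iff, mem_singleton_iff] at hq
    rcases hq with rfl | rfl | rfl
    · exact ⟨0, by simp⟩
    · exact ⟨0, by simp [hyx]⟩
    · exact ⟨1, by simp⟩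
  · refine ⟨y - x, ?_⟩
    intro q hq
    simp only [mem_insert_iff, mem_singleton_iff] at hq
    rcases hq with rfl | rfl | rfl
    · exact ⟨0, by simp⟩
    · exact ⟨1, by simp⟩
    · by_cases h1 : y.1 - x.1 = 0
      · have h2 : y.2 - x.2 ≠ 0 := by
          intro h2
          exact hyx (Prod.ext (by linarith) (by linarith))
        refine ⟨(q.2 - x.2) / (y.2 - x.2), ?_⟩
        have hz1 : q.1 - x.1 = 0 := by
          have hmul : (y.2 - x.2) * (q.1 - x.1) = 0 := by
            linear_combination -hdet + (q.2 - x.2) * h1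
          rcases mul_eq_zero.mp hmul with hh | hh
          · exact absurd hh h2
          · exact hh
        rw [vadd_eq_add, Prod.ext_iff]
        constructor
        · simp only [Prod.fst_add, Prod.smul_fst, Prod.fst_sub, smul_eq_mul]
          rw [h1]
          simp only [mul_zero, zero_add]
          linarith
        · simp only [Prod.snd_add, Prod.smul_snd, Prod.snd_sub, smul_eq_mul]
          field_simp
          ring
      · refine ⟨(q.1 - x.1) / (y.1 - x.1), ?_⟩
        rw [vadd_eq_add, Prod.ext_iff]
        constructor
        · simp only [Prod.fst_add, Prod.smul_fst, Prod.fst_sub, smul_eq_mul]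
          field_simp
          ring
        · simp only [Prod.snd_add, Prod.smul_snd, Prod.snd_sub, smul_eq_mul]
          rw [div_mul_eq_mul_div, eq_comm, div_add' _ _ _ h1, div_eq_iff h1]
          linear_combination -hdet

lemma det_ne_of_not_collinear {x y z : ℝ × ℝ}
    (h : ¬ Collinear ℝ ({x, y, z} : Set (ℝ × ℝ))) :
    (y - x).1 * (z - x).2 - (y - x).2 * (z - x).1 ≠ 0 :=
  fun hdet => h (collinear_of_det_eq hdet)

lemma openseg_scale {p u v b x : ℝ × ℝ} (hD : u.1 * v.2 - u.2 * v.1 ≠ 0)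
    (hx : x ∈ openSegment ℝ p b) :
    ∃ s : ℝ, 0 < s ∧ cf p u v x = s * cf p u v b ∧ cg p u v x = s * cg p u v b := by
  rw [openSegment_eq_image'] at hx
  obtain ⟨s, ⟨hs0, hs1⟩, rfl⟩ := hx
  refine ⟨s, hs0, ?_, ?_⟩ <;> dsimp only
  · have hb : b - p = cf p u v b • u + cg p u v b • v := by
      nth_rewrite 1 [coords_repr (p := p) hD b]
      abel
    have h' : p + s • (b - p) = p + (s * cf p u v b) • u + (s * cg p u v b) • v := by
      rw [hb]; module
    rw [h', cf_eval hD]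
  · have hb : b - p = cf p u v b • u + cg p u v b • v := by
      nth_rewrite 1 [coords_repr (p := p) hD b]
      abel
    have h' : p + s • (b - p) = p + (s * cf p u v b) • u + (s * cg p u v b) • v := by
      rw [hb]; module
    rw [h', cg_eval hD]

lemma compl_rays_eq' {p b₁ b₂ : ℝ × ℝ}
    (hD : (b₁ - p).1 * (b₂ - p).2 - (b₁ - p).2 * (b₂ - p).1 ≠ 0) :
    (Ray p b₁ ∪ Ray p b₂)ᶜ =
      {x : ℝ × ℝ | 0 < cf p (b₁ - p) (b₂ - p) x ∧ 0 < cg p (b₁ - p) (b₂ - p) x} ∪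
        {x : ℝ × ℝ | cf p (b₁ - p) (b₂ - p) x < 0 ∨ cg p (b₁ - p) (b₂ - p) x < 0} := by
  have e1 : p + (b₁ - p) = b₁ := by abel
  have e2 : p + (b₂ - p) = b₂ := by abel
  conv_lhs => rw [← e1, ← e2]
  exact compl_rays_eq hD

/-- for `k ≥ 4`, in any `h`-obstacle representation of `CE(k)` in which
some `r_A` is dangerous for `A` with respect to the points `b_1, …, b_k`, we have `h ≥ 2`. -/
theorem ce_dangerous_needs_two_obstacles (k h : ℕ) (hk : 4 ≤ k)
    (rep : ObstacleRep (CE k) h) (A : Finset (Fin k))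
    (hd : Dangerous (fun i => rep.v (Sum.inl i)) A (rep.v (Sum.inr A))) :
    2 ≤ h := by
  by_contra hlt
  push_neg at hlt
  obtain ⟨i₁, i₂, i₃, i₄, h₁, h₂, h₁₂, h₃, h₄, h₃₄, hc₃, hc₄, hcc⟩ := hd
  dsimp only at hc₃ hc₄ hcc
  set p := rep.v (Sum.inr A) with hpdef
  set b₁ := rep.v (Sum.inl i₁) with hb₁def
  set b₂ := rep.v (Sum.inl i₂) with hb₂def
  set b₃ := rep.v (Sum.inl i₃) with hb₃def
  set b₄ := rep.v (Sum.inl i₄) with hb₄def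
  -- distinctness of indices
  have hne13 : i₁ ≠ i₃ := fun e => h₃ (e ▸ h₁)
  have hne14 : i₁ ≠ i₄ := fun e => h₄ (e ▸ h₁)
  have hne23 : i₂ ≠ i₃ := fun e => h₃ (e ▸ h₂)
  have hne24 : i₂ ≠ i₄ := fun e => h₄ (e ▸ h₂)
  -- non-collinearity gives nonzero determinant
  have hncol : ¬ Collinear ℝ ({p, b₁, b₂} : Set (ℝ × ℝ)) :=
    rep.genpos (Sum.inr A) (Sum.inl i₁) (Sum.inl i₂) (by simp) (by simp) (by simp [h₁₂])
  have hD : (b₁ - p).1 * (b₂ - p).2 - (b₁ - p).2 * (b₂ - p).1 ≠ 0 :=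
    det_ne_of_not_collinear hncol
  -- adjacency facts
  have adj1 : (CE k).Adj (Sum.inr A) (Sum.inl i₁) := h₁
  have adj2 : (CE k).Adj (Sum.inr A) (Sum.inl i₂) := h₂
  have adj13 : (CE k).Adj (Sum.inl i₁) (Sum.inl i₃) := hne13
  have adj14 : (CE k).Adj (Sum.inl i₁) (Sum.inl i₄) := hne14
  have adj23 : (CE k).Adj (Sum.inl i₂) (Sum.inl i₃) := hne23
  have adj24 : (CE k).Adj (Sum.inl i₂) (Sum.inl i₄) := hne24
  -- blocking obstacles for the two non-edges
  have ne3 : (Sum.inr A : Fin k ⊕ Finset (Fin k)) ≠ Sum.inl i₃ := by simp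
  have ne4 : (Sum.inr A : Fin k ⊕ Finset (Fin k)) ≠ Sum.inl i₄ := by simp
  have nonadj3 : ¬ (CE k).Adj (Sum.inr A) (Sum.inl i₃) := h₃
  have nonadj4 : ¬ (CE k).Adj (Sum.inr A) (Sum.inl i₄) := h₄
  obtain ⟨oi, x₃, hx₃⟩ := rep.blocks _ _ ne3 nonadj3
  obtain ⟨oj, x₄, hx₄⟩ := rep.blocks _ _ ne4 nonadj4
  have hij : oi = oj := by
    have h1 := oi.isLt
    have h2 := oj.isLt
    exact Fin.ext (by omega)
  subst hij
  set O := rep.obs oi with hOdef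
  have hO : IsPreconnected O := (rep.obs_connected oi).isPreconnected
  have hx₃O : x₃ ∈ O := hx₃.1
  have hx₄O : x₄ ∈ O := hx₄.1
  have hx₃s : x₃ ∈ openSegment ℝ p b₃ := hx₃.2
  have hx₄s : x₄ ∈ openSegment ℝ p b₄ := hx₄.2
  -- disjointness with edges
  have hS1 : Disjoint O (segment ℝ p b₁) := rep.obs_avoid_edges oi _ _ adj1
  have hS2 : Disjoint O (segment ℝ p b₂) := rep.obs_avoid_edges oi _ _ adj2
  have hS13 : Disjoint O (segment ℝ b₁ b₃) := rep.obs_avoid_edges oi _ _ adj13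
  have hS14 : Disjoint O (segment ℝ b₁ b₄) := rep.obs_avoid_edges oi _ _ adj14
  have hS23 : Disjoint O (segment ℝ b₂ b₃) := rep.obs_avoid_edges oi _ _ adj23
  have hS24 : Disjoint O (segment ℝ b₂ b₄) := rep.obs_avoid_edges oi _ _ adj24
  -- split the complement of the rays into the two wedge pieces
  have hsplit := compl_rays_eq' hD
  rw [hsplit] at hc₃ hc₄
  have hsub1 : {x : ℝ × ℝ | 0 < cf p (b₁ - p) (b₂ - p) x ∧ 0 < cg p (b₁ - p) (b₂ - p) x} ⊆
      (Ray p b₁ ∪ Ray p b₂)ᶜ := by rw [hsplit]; exact subset_union_left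
  have hsub2 : {x : ℝ × ℝ | cf p (b₁ - p) (b₂ - p) x < 0 ∨ cg p (b₁ - p) (b₂ - p) x < 0} ⊆
      (Ray p b₁ ∪ Ray p b₂)ᶜ := by rw [hsplit]; exact subset_union_right
  rcases hc₃ with h3 | h3 <;> rcases hc₄ with h4 | h4
  · exact hcc (comp_eq_of_both_mem (preconn_U1 hD) hsub1 h3 h4)
  · -- b₃ in the open wedge, b₄ outside: apply the main geometric lemma
    obtain ⟨s, hs0, hsf, hsg⟩ := openseg_scale hD hx₄s
    have hx₄C : cf p (b₁ - p) (b₂ - p) x₄ < 0 ∨ cg p (b₁ - p) (b₂ - p) x₄ < 0 := by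
      rcases h4 with h | h
      · exact Or.inl (by rw [hsf]; exact mul_neg_of_pos_of_neg hs0 h)
      · exact Or.inr (by rw [hsg]; exact mul_neg_of_pos_of_neg hs0 h)
    exact geom p b₁ b₂ b₃ x₃ x₄ O hO hS1 hS2 hS13 hS23 hx₃O hx₄O hx₃s hD h3.1 h3.2 hx₄C
  · -- symmetric case: b₄ in the open wedge, b₃ outside
    obtain ⟨s, hs0, hsf, hsg⟩ := openseg_scale hD hx₃s
    have hx₃C : cf p (b₁ - p) (b₂ - p) x₃ < 0 ∨ cg p (b₁ - p) (b₂ - p) x₃ < 0 := by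
      rcases h3 with h | h
      · exact Or.inl (by rw [hsf]; exact mul_neg_of_pos_of_neg hs0 h)
      · exact Or.inr (by rw [hsg]; exact mul_neg_of_pos_of_neg hs0 h)
    exact geom p b₁ b₂ b₄ x₄ x₃ O hO hS1 hS2 hS14 hS24 hx₄O hx₃O hx₄s hD h4.1 h4.2 hx₃C
  · exact hcc (comp_eq_of_both_mem (preconn_U2 hD) hsub2 h3 h4)
end

section
/- Let p_1,…,p_6 be points of ℝ² in convex position listed in clockwise cyclic order (every triple (p_i, p_j, p_k) with i < j < k is in clockwise order), and let q be a point lying outside the convex hull of {p_1,…,p_6} such that {q, p_1,…,p_6} is in general position. Then q is dangerous for {1,3,5}: there exist distinct indices i_1, i_2 ∈ {1,3,5} and distinct indices i_3, i_4 ∈ {2,4,6} such that p_{i_3} and p_{i_4} lie in different connected components of the complement in ℝ² of the union of the ray from q through p_{i_1} and the ray from q through p_{i_2}. -/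
open Set

/-- `(a, b, c)` is in clockwise order: negative orientation. -/
def Clockwise (a b c : ℝ × ℝ) : Prop :=
  (b.1 - a.1) * (c.2 - a.2) - (b.2 - a.2) * (c.1 - a.1) < 0

set_option linter.unreachableTactic false
set_option linter.unusedTactic false
set_option maxHeartbeats 1000000



def cr (u v : ℝ × ℝ) : ℝ := u.1 * v.2 - u.2 * v.1

lemma cr_swap (u v : ℝ × ℝ) : cr u v = - cr v u := by unfold cr; ring

lemma cont_cr_left (v q : ℝ × ℝ) : Continuous (fun x : ℝ × ℝ => cr (x - q) v) := by
  unfold cr; fun_prop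

lemma cont_cr_right (u q : ℝ × ℝ) : Continuous (fun x : ℝ × ℝ => cr u (x - q)) := by
  unfold cr; fun_prop

lemma basis_id (q a b x : ℝ × ℝ) :
    cr (a - q) (b - q) • (x - q) =
      cr (x - q) (b - q) • (a - q) + cr (a - q) (x - q) • (b - q) := by
  unfold cr
  apply Prod.ext <;> simp [Prod.smul_def, smul_eq_mul] <;> ring

lemma scale_eq {D : ℝ} (hD : D ≠ 0) {u v : ℝ × ℝ} (h : D • u = v) : u = D⁻¹ • v := by
  rw [← h, smul_smul, inv_mul_cancel₀ hD, one_smul]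

lemma sep (q a b z w : ℝ × ℝ)
    (h1 : 0 < cr (a - q) (z - q)) (h2 : 0 < cr (z - q) (b - q))
    (hab : 0 < cr (a - q) (b - q))
    (hw : (cr (a - q) (w - q) < 0 ∧ cr (w - q) (b - q) ≠ 0) ∨
          (cr (w - q) (b - q) < 0 ∧ cr (a - q) (w - q) ≠ 0)) :
    z ∈ (Ray q a ∪ Ray q b)ᶜ ∧ w ∈ (Ray q a ∪ Ray q b)ᶜ ∧
      connectedComponentIn (Ray q a ∪ Ray q b)ᶜ z ≠
        connectedComponentIn (Ray q a ∪ Ray q b)ᶜ w := by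
  set S : Set (ℝ × ℝ) := (Ray q a ∪ Ray q b)ᶜ with hS
  set s : (ℝ × ℝ) → ℝ := fun x => cr (x - q) (b - q) with hs
  set t : (ℝ × ℝ) → ℝ := fun x => cr (a - q) (x - q) with ht
  have hrayA : ∀ x ∈ Ray q a, t x = 0 := by
    rintro x ⟨r, _, rfl⟩
    show cr (a - q) (q + r • (a - q) - q) = 0
    rw [add_sub_cancel_left]
    unfold cr; simp [Prod.smul_def, smul_eq_mul]; ring
  have hrayB : ∀ x ∈ Ray q b, s x = 0 := by
    rintro x ⟨r, _, rfl⟩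
    show cr (q + r • (b - q) - q) (b - q) = 0
    rw [add_sub_cancel_left]
    unfold cr; simp [Prod.smul_def, smul_eq_mul]; ring
  have hzS : z ∈ S := by
    intro hz
    rcases hz with hz | hz
    · have := hrayA z hz; simp only [ht] at this; linarith
    · have := hrayB z hz; simp only [hs] at this; linarith
  have hwS : w ∈ S := by
    intro hz
    rcases hz with hz | hz
    · have := hrayA w hz; simp only [ht] at this
      rcases hw with ⟨h, h'⟩ | ⟨h, h'⟩
      · linarith
      · exact h' this
    · have := hrayB w hz; simp only [hs] at this
      rcases hw with ⟨h, h'⟩ | ⟨h, h'⟩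
      · exact h' this
      · linarith
  refine ⟨hzS, hwS, ?_⟩
  intro heq
  have hzK : z ∈ connectedComponentIn S z := mem_connectedComponentIn hzS
  have hwK : w ∈ connectedComponentIn S z := by
    rw [heq]; exact mem_connectedComponentIn hwS
  have hKS : connectedComponentIn S z ⊆ S := connectedComponentIn_subset S z
  have hKpc : IsPreconnected (connectedComponentIn S z) := isPreconnected_connectedComponentIn
  set U : Set (ℝ × ℝ) := {x | 0 < s x ∧ 0 < t x} with hU
  set V : Set (ℝ × ℝ) := {x | s x < 0 ∨ t x < 0} with hV
  have hUopen : IsOpen U := by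
    have ha : IsOpen {x : ℝ × ℝ | 0 < s x} := isOpen_lt continuous_const (cont_cr_left (b - q) q)
    have hb : IsOpen {x : ℝ × ℝ | 0 < t x} := isOpen_lt continuous_const (cont_cr_right (a - q) q)
    exact ha.inter hb
  have hVopen : IsOpen V := by
    have ha : IsOpen {x : ℝ × ℝ | s x < 0} := isOpen_lt (cont_cr_left (b - q) q) continuous_const
    have hb : IsOpen {x : ℝ × ℝ | t x < 0} := isOpen_lt (cont_cr_right (a - q) q) continuous_const
    exact ha.union hb
  have hDne : cr (a - q) (b - q) ≠ 0 := ne_of_gt hab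
  have hxdecomp : ∀ x : ℝ × ℝ,
      x - q = (cr (a - q) (b - q))⁻¹ • (s x • (a - q) + t x • (b - q)) := by
    intro x
    exact scale_eq hDne (basis_id q a b x)
  have hcover : connectedComponentIn S z ⊆ U ∪ V := by
    intro x hx
    rcases lt_trichotomy (s x) 0 with h | h | h
    · exact Or.inr (Or.inl h)
    · rcases lt_trichotomy (t x) 0 with h' | h' | h'
      · exact Or.inr (Or.inr h')
      · exfalso
        apply hKS hx
        right
        refine ⟨0, le_refl 0, ?_⟩
        have := hxdecomp x
        rw [h, h'] at this
        simp only [zero_smul, add_zero, smul_zero] at this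
        have hxq : x = q := sub_eq_zero.mp this
        rw [hxq]; simp
      · exfalso
        apply hKS hx
        right
        have := hxdecomp x
        rw [h] at this
        simp only [zero_smul, zero_add, smul_smul] at this
        refine ⟨(cr (a - q) (b - q))⁻¹ * t x, by positivity, ?_⟩
        rw [← this]; abel
    · rcases lt_trichotomy (t x) 0 with h' | h' | h'
      · exact Or.inr (Or.inr h')
      · exfalso
        apply hKS hx
        left
        have := hxdecomp x
        rw [h'] at this
        simp only [zero_smul, add_zero, smul_smul] at this
        refine ⟨(cr (a - q) (b - q))⁻¹ * s x, by positivity, ?_⟩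
        rw [← this]; abel
      · exact Or.inl ⟨h, h'⟩
  have hzU : z ∈ U := by
    constructor
    · show 0 < cr (z - q) (b - q); exact h2
    · show 0 < cr (a - q) (z - q); exact h1
  have hwV : w ∈ V := by
    rcases hw with ⟨h, h'⟩ | ⟨h, h'⟩
    · exact Or.inr h
    · exact Or.inl h
  have hne : (connectedComponentIn S z ∩ (U ∩ V)).Nonempty :=
    hKpc U V hUopen hVopen hcover ⟨z, hzK, hzU⟩ ⟨w, hwK, hwV⟩
  obtain ⟨x, _, ⟨hx1, hx2⟩, hx3 | hx3⟩ := hne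
  · linarith
  · linarith


lemma cr_trans {n u v w : ℝ × ℝ}
    (hu : 0 < u.1 * n.1 + u.2 * n.2) (hv : 0 < v.1 * n.1 + v.2 * n.2)
    (hw : 0 < w.1 * n.1 + w.2 * n.2)
    (h1 : 0 < cr u v) (h2 : 0 < cr v w) : 0 < cr u w := by
  have key : cr u w * (v.1 * n.1 + v.2 * n.2) =
      cr u v * (w.1 * n.1 + w.2 * n.2) + cr v w * (u.1 * n.1 + u.2 * n.2) := by
    unfold cr; ring
  nlinarith [mul_pos h1 hw, mul_pos h2 hu]

lemma locmax_pt (q a b c d : ℝ × ℝ)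
    (g1 : 0 < cr (a - b) (c - b)) (g2 : 0 < cr (d - b) (c - b)) (g3 : 0 < cr (a - b) (d - b))
    (ha : 0 < cr (a - q) (b - q)) (hc : 0 < cr (c - q) (b - q)) :
    0 < cr (d - q) (b - q) := by
  have key : cr (a - b) (c - b) * cr (d - q) (b - q) =
      cr (d - b) (c - b) * cr (a - q) (b - q) + cr (a - b) (d - b) * cr (c - q) (b - q) := by
    unfold cr; simp only [Prod.fst_sub, Prod.snd_sub]; ring
  nlinarith [mul_pos g2 ha, mul_pos g3 hc]

lemma locmin_pt (q a b c d : ℝ × ℝ)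
    (g1 : 0 < cr (a - b) (c - b)) (g2 : 0 < cr (d - b) (c - b)) (g3 : 0 < cr (a - b) (d - b))
    (ha : 0 < cr (b - q) (a - q)) (hc : 0 < cr (b - q) (c - q)) :
    0 < cr (b - q) (d - q) := by
  have key : cr (a - b) (c - b) * cr (b - q) (d - q) =
      cr (d - b) (c - b) * cr (b - q) (a - q) + cr (a - b) (d - b) * cr (b - q) (c - q) := by
    unfold cr; simp only [Prod.fst_sub, Prod.snd_sub]; ring
  nlinarith [mul_pos g2 ha, mul_pos g3 hc]

lemma collinear_of_cr_eq_zero {q x y : ℝ × ℝ} (hx : x ≠ q)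
    (h : cr (x - q) (y - q) = 0) : Collinear ℝ ({q, x, y} : Set (ℝ × ℝ)) := by
  have hu : x - q ≠ 0 := sub_ne_zero.mpr hx
  have h' : (x - q).1 * (y - q).2 - (x - q).2 * (y - q).1 = 0 := h
  obtain ⟨r, hr⟩ : ∃ r : ℝ, y - q = r • (x - q) := by
    by_cases h1 : (x - q).1 = 0
    · have h2 : (x - q).2 ≠ 0 := fun h2 => hu (Prod.ext h1 h2)
      refine ⟨(y - q).2 / (x - q).2, Prod.ext ?_ ?_⟩
      · show (y - q).1 = (y - q).2 / (x - q).2 * (x - q).1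
        rw [h1, mul_zero]
        rw [h1, zero_mul] at h'
        have : (x - q).2 * (y - q).1 = 0 := by linarith
        rcases mul_eq_zero.mp this with h'' | h''
        · exact absurd h'' h2
        · exact h''
      · show (y - q).2 = (y - q).2 / (x - q).2 * (x - q).2
        rw [div_mul_eq_mul_div, mul_div_cancel_right₀ _ h2]
    · refine ⟨(y - q).1 / (x - q).1, Prod.ext ?_ ?_⟩
      · show (y - q).1 = (y - q).1 / (x - q).1 * (x - q).1
        rw [div_mul_eq_mul_div, mul_div_cancel_right₀ _ h1]
      · show (y - q).2 = (y - q).1 / (x - q).1 * (x - q).2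
        rw [div_mul_eq_mul_div, eq_div_iff h1]
        linear_combination h'
  rw [collinear_iff_of_mem (Set.mem_insert q {x, y})]
  refine ⟨x - q, ?_⟩
  rintro z (rfl | rfl | rfl)
  · exact ⟨0, by simp⟩
  · exact ⟨1, by simp⟩
  · exact ⟨r, by rw [← hr]; simp⟩


section Driver
variable (L : Fin 6 → Fin 6 → Prop)

/-- the conclusion of the combinatorial driver -/
def DriverGoal : Prop :=
  ∃ a b z w : Fin 6, a ∈ ({0, 2, 4} : Finset (Fin 6)) ∧ b ∈ ({0, 2, 4} : Finset (Fin 6)) ∧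
    a ≠ b ∧ z ∈ ({1, 3, 5} : Finset (Fin 6)) ∧ w ∈ ({1, 3, 5} : Finset (Fin 6)) ∧ z ≠ w ∧
    L a z ∧ L z b ∧ L a b ∧ (L w a ∨ L b w)

variable
  (asym : ∀ i j, L i j → ¬ L j i)
  (tot : ∀ i j, i ≠ j → L i j ∨ L j i)
  (htrans : ∀ i j k, L i j → L j k → L i k)
  (lmax : ∀ n d : Fin 6, L (n + 5) n → L (n + 1) n → d ≠ n → L d n)
  (lmin : ∀ n d : Fin 6, L n (n + 5) → L n (n + 1) → d ≠ n → L n d)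

include asym tot htrans lmax lmin in
lemma inner2 (a b c : Fin 6)
    (ha : a = 0 ∨ a = 2 ∨ a = 4) (hb : b = 0 ∨ b = 2 ∨ b = 4) (hc : c = 0 ∨ c = 2 ∨ c = 4)
    (h0 : (0 : Fin 6) = a ∨ (0 : Fin 6) = b ∨ (0 : Fin 6) = c)
    (h2 : (2 : Fin 6) = a ∨ (2 : Fin 6) = b ∨ (2 : Fin 6) = c)
    (h4 : (4 : Fin 6) = a ∨ (4 : Fin 6) = b ∨ (4 : Fin 6) = c)
    (Lab : L a b) (Lbc : L b c) : DriverGoal L := by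
  have Lac : L a c := htrans a b c Lab Lbc
  have aneb : a ≠ b := by intro h; subst h; exact asym a a Lab Lab
  have bnec : b ≠ c := by intro h; subst h; exact asym b b Lbc Lbc
  have anec : a ≠ c := by intro h; subst h; exact asym a a Lac Lac
  have oddeven : ∀ z e : Fin 6, (z = 1 ∨ z = 3 ∨ z = 5) → (e = 0 ∨ e = 2 ∨ e = 4) → z ≠ e := by
    rintro z e (rfl | rfl | rfl) (rfl | rfl | rfl) <;> decide
  have memE : ∀ e : Fin 6, (e = 0 ∨ e = 2 ∨ e = 4) → e ∈ ({0, 2, 4} : Finset (Fin 6)) := by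
    rintro e (rfl | rfl | rfl) <;> decide
  have memO : ∀ z : Fin 6, (z = 1 ∨ z = 3 ∨ z = 5) → z ∈ ({1, 3, 5} : Finset (Fin 6)) := by
    rintro z (rfl | rfl | rfl) <;> decide
  -- finishers
  have doneQ : ∀ z w : Fin 6, (z = 1 ∨ z = 3 ∨ z = 5) → (w = 1 ∨ w = 3 ∨ w = 5) → z ≠ w →
      L a z → L z b → (L w a ∨ L b w) → DriverGoal L := by
    intro z w hz hw hzw l1 l2 l3
    exact ⟨a, b, z, w, memE a ha, memE b hb, aneb, memO z hz, memO w hw, hzw, l1, l2, Lab, l3⟩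
  have doneR : ∀ z w : Fin 6, (z = 1 ∨ z = 3 ∨ z = 5) → (w = 1 ∨ w = 3 ∨ w = 5) → z ≠ w →
      L b z → L z c → (L w b ∨ L c w) → DriverGoal L := by
    intro z w hz hw hzw l1 l2 l3
    exact ⟨b, c, z, w, memE b hb, memE c hc, bnec, memO z hz, memO w hw, hzw, l1, l2, Lbc, l3⟩
  -- contradiction lemmas
  have contraQ : L 1 b → L 3 b → L 5 b → False := by
    intro q1 q3 q5
    have hodd : ∀ z : Fin 6, (z = 1 ∨ z = 3 ∨ z = 5) → L z b := by
      rintro z (rfl | rfl | rfl) <;> assumption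
    have e5 : L (b + 5) b := by
      rcases hb with rfl | rfl | rfl <;> exact hodd _ (by decide)
    have e1 : L (b + 1) b := by
      rcases hb with rfl | rfl | rfl <;> exact hodd _ (by decide)
    exact asym b c Lbc (lmax b c e5 e1 (Ne.symm bnec))
  have contraR : L b 1 → L b 3 → L b 5 → False := by
    intro q1 q3 q5
    have hodd : ∀ z : Fin 6, (z = 1 ∨ z = 3 ∨ z = 5) → L b z := by
      rintro z (rfl | rfl | rfl) <;> assumption
    have e5 : L b (b + 5) := by
      rcases hb with rfl | rfl | rfl <;> exact hodd _ (by decide)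
    have e1 : L b (b + 1) := by
      rcases hb with rfl | rfl | rfl <;> exact hodd _ (by decide)
    exact asym a b Lab (lmin b a e5 e1 aneb)
  -- global min at an odd z that is below a
  have globmin : ∀ z : Fin 6, (z = 1 ∨ z = 3 ∨ z = 5) → L z a → ∀ d, d ≠ z → L z d := by
    intro z hz hza d hd
    have hze : ∀ e : Fin 6, (e = a ∨ e = b ∨ e = c) → L z e := by
      rintro e (h | h | h) <;> rw [h]
      · exact hza
      · exact htrans z a b hza Lab
      · exact htrans z a c hza Lac
    have e5 : L z (z + 5) := by
      rcases hz with rfl | rfl | rfl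
      · exact hze _ h0
      · exact hze _ h2
      · exact hze _ h4
    have e1 : L z (z + 1) := by
      rcases hz with rfl | rfl | rfl
      · exact hze _ h2
      · exact hze _ h4
      · exact hze _ h0
    exact lmin z d e5 e1 hd
  have globmax : ∀ z : Fin 6, (z = 1 ∨ z = 3 ∨ z = 5) → L c z → ∀ d, d ≠ z → L d z := by
    intro z hz hcz d hd
    have hze : ∀ e : Fin 6, (e = a ∨ e = b ∨ e = c) → L e z := by
      rintro e (h | h | h) <;> rw [h]
      · exact htrans a c z Lac hcz
      · exact htrans b c z Lbc hcz
      · exact hcz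
    have e5 : L (z + 5) z := by
      rcases hz with rfl | rfl | rfl
      · exact hze _ h0
      · exact hze _ h2
      · exact hze _ h4
    have e1 : L (z + 1) z := by
      rcases hz with rfl | rfl | rfl
      · exact hze _ h2
      · exact hze _ h4
      · exact hze _ h0
    exact lmax z d e5 e1 hd
  have contraP : ∀ z w : Fin 6, (z = 1 ∨ z = 3 ∨ z = 5) → (w = 1 ∨ w = 3 ∨ w = 5) → z ≠ w →
      L z a → L w a → False := by
    intro z w hz hw hzw l1 l2
    exact asym z w (globmin z hz l1 w (Ne.symm hzw)) (globmin w hw l2 z hzw)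
  have contraS : ∀ z w : Fin 6, (z = 1 ∨ z = 3 ∨ z = 5) → (w = 1 ∨ w = 3 ∨ w = 5) → z ≠ w →
      L c z → L c w → False := by
    intro z w hz hw hzw l1 l2
    exact asym w z (globmax z hz l1 w (Ne.symm hzw)) (globmax w hw l2 z hzw)
  -- slots
  have slot : ∀ z : Fin 6, (z = 1 ∨ z = 3 ∨ z = 5) →
      (L z a ∨ (L a z ∧ L z b) ∨ (L b z ∧ L z c) ∨ L c z) := by
    intro z hz
    rcases tot z a (oddeven z a hz ha) with h | h
    · exact Or.inl h
    rcases tot z b (oddeven z b hz hb) with h' | h'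
    · exact Or.inr (Or.inl ⟨h, h'⟩)
    rcases tot z c (oddeven z c hz hc) with h'' | h''
    · exact Or.inr (Or.inr (Or.inl ⟨h', h''⟩))
    · exact Or.inr (Or.inr (Or.inr h''))
  rcases slot 1 (by decide) with h1 | h1 | h1 | h1 <;>
  rcases slot 3 (by decide) with h3 | h3 | h3 | h3 <;>
  rcases slot 5 (by decide) with h5 | h5 | h5 | h5 <;>
  first
    | exact absurd rfl (by decide)
    | exact (contraQ h1.2 h3.2 h5.2).elim
    | exact (contraR h1.1 h3.1 h5.1).elim
    | exact (contraP 1 3 (by decide) (by decide) (by decide) h1 h3).elim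
    | exact (contraP 1 5 (by decide) (by decide) (by decide) h1 h5).elim
    | exact (contraP 3 5 (by decide) (by decide) (by decide) h3 h5).elim
    | exact (contraS 1 3 (by decide) (by decide) (by decide) h1 h3).elim
    | exact (contraS 1 5 (by decide) (by decide) (by decide) h1 h5).elim
    | exact (contraS 3 5 (by decide) (by decide) (by decide) h3 h5).elim
    | exact doneQ 1 3 (by decide) (by decide) (by decide) h1.1 h1.2 (Or.inl h3)
    | exact doneQ 1 3 (by decide) (by decide) (by decide) h1.1 h1.2 (Or.inr h3.1)
    | exact doneQ 1 3 (by decide) (by decide) (by decide) h1.1 h1.2 (Or.inr (htrans b c 3 Lbc h3))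
    | exact doneQ 1 5 (by decide) (by decide) (by decide) h1.1 h1.2 (Or.inl h5)
    | exact doneQ 1 5 (by decide) (by decide) (by decide) h1.1 h1.2 (Or.inr h5.1)
    | exact doneQ 1 5 (by decide) (by decide) (by decide) h1.1 h1.2 (Or.inr (htrans b c 5 Lbc h5))
    | exact doneQ 3 1 (by decide) (by decide) (by decide) h3.1 h3.2 (Or.inl h1)
    | exact doneQ 3 1 (by decide) (by decide) (by decide) h3.1 h3.2 (Or.inr h1.1)
    | exact doneQ 3 1 (by decide) (by decide) (by decide) h3.1 h3.2 (Or.inr (htrans b c 1 Lbc h1))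
    | exact doneQ 3 5 (by decide) (by decide) (by decide) h3.1 h3.2 (Or.inl h5)
    | exact doneQ 3 5 (by decide) (by decide) (by decide) h3.1 h3.2 (Or.inr h5.1)
    | exact doneQ 3 5 (by decide) (by decide) (by decide) h3.1 h3.2 (Or.inr (htrans b c 5 Lbc h5))
    | exact doneQ 5 1 (by decide) (by decide) (by decide) h5.1 h5.2 (Or.inl h1)
    | exact doneQ 5 1 (by decide) (by decide) (by decide) h5.1 h5.2 (Or.inr h1.1)
    | exact doneQ 5 1 (by decide) (by decide) (by decide) h5.1 h5.2 (Or.inr (htrans b c 1 Lbc h1))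
    | exact doneQ 5 3 (by decide) (by decide) (by decide) h5.1 h5.2 (Or.inl h3)
    | exact doneQ 5 3 (by decide) (by decide) (by decide) h5.1 h5.2 (Or.inr h3.1)
    | exact doneQ 5 3 (by decide) (by decide) (by decide) h5.1 h5.2 (Or.inr (htrans b c 3 Lbc h3))
    | exact doneR 1 3 (by decide) (by decide) (by decide) h1.1 h1.2 (Or.inl (htrans 3 a b h3 Lab))
    | exact doneR 1 3 (by decide) (by decide) (by decide) h1.1 h1.2 (Or.inr h3)
    | exact doneR 1 5 (by decide) (by decide) (by decide) h1.1 h1.2 (Or.inl (htrans 5 a b h5 Lab))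
    | exact doneR 1 5 (by decide) (by decide) (by decide) h1.1 h1.2 (Or.inr h5)
    | exact doneR 3 1 (by decide) (by decide) (by decide) h3.1 h3.2 (Or.inl (htrans 1 a b h1 Lab))
    | exact doneR 3 1 (by decide) (by decide) (by decide) h3.1 h3.2 (Or.inr h1)
    | exact doneR 3 5 (by decide) (by decide) (by decide) h3.1 h3.2 (Or.inl (htrans 5 a b h5 Lab))
    | exact doneR 3 5 (by decide) (by decide) (by decide) h3.1 h3.2 (Or.inr h5)
    | exact doneR 5 1 (by decide) (by decide) (by decide) h5.1 h5.2 (Or.inl (htrans 1 a b h1 Lab))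
    | exact doneR 5 1 (by decide) (by decide) (by decide) h5.1 h5.2 (Or.inr h1)
    | exact doneR 5 3 (by decide) (by decide) (by decide) h5.1 h5.2 (Or.inl (htrans 3 a b h3 Lab))
    | exact doneR 5 3 (by decide) (by decide) (by decide) h5.1 h5.2 (Or.inr h3)

include asym tot htrans lmax lmin in
lemma driver : DriverGoal L := by
  have I2 := inner2 L asym tot htrans lmax lmin
  rcases tot 0 2 (by decide) with h02 | h02 <;>
  rcases tot 2 4 (by decide) with h24 | h24 <;>
  rcases tot 0 4 (by decide) with h04 | h04
  · exact I2 0 2 4 (by decide) (by decide) (by decide) (by decide) (by decide) (by decide) h02 h24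
  · exact absurd (htrans 0 2 4 h02 h24) (asym 4 0 h04)
  · exact I2 0 4 2 (by decide) (by decide) (by decide) (by decide) (by decide) (by decide) h04 h24
  · exact I2 4 0 2 (by decide) (by decide) (by decide) (by decide) (by decide) (by decide) h04 h02
  · exact I2 2 0 4 (by decide) (by decide) (by decide) (by decide) (by decide) (by decide) h02 h04
  · exact I2 2 4 0 (by decide) (by decide) (by decide) (by decide) (by decide) (by decide) h24 h04
  · exact absurd (htrans 4 2 0 h24 h02) (asym 0 4 h04)
  · exact I2 4 2 0 (by decide) (by decide) (by decide) (by decide) (by decide) (by decide) h24 h02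

end Driver


lemma cw_cr {x y z : ℝ × ℝ} (h : Clockwise x y z) : 0 < cr (x - y) (z - y) := by
  unfold Clockwise at h
  have e : cr (x - y) (z - y) =
      -((y.1 - x.1) * (z.2 - x.2) - (y.2 - x.2) * (z.1 - x.1)) := by
    unfold cr; simp only [Prod.fst_sub, Prod.snd_sub]; ring
  rw [e]; linarith

lemma cw_rot {x y z : ℝ × ℝ} (h : Clockwise x y z) : Clockwise y z x := by
  unfold Clockwise at h ⊢
  have e : (z.1 - y.1) * (x.2 - y.2) - (z.2 - y.2) * (x.1 - y.1) =
      (y.1 - x.1) * (z.2 - x.2) - (y.2 - x.2) * (z.1 - x.1) := by ring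
  rw [e]; exact h

/-- if `p 0, …, p 5` are in convex position in clockwise cyclic order
and `q` lies outside their convex hull, with all seven points in general position,
then `q` is dangerous for the odd-indexed triple `{p 0, p 2, p 4}`: some two of the
remaining points are separated by a pair of rays from `q` through two of them. -/
theorem hexagon_outside_point_is_dangerous (p : Fin 6 → ℝ × ℝ) (q : ℝ × ℝ)
    (hcw : ∀ i j k : Fin 6, i < j → j < k → Clockwise (p i) (p j) (p k))
    (hq : q ∉ convexHull ℝ (Set.range p))
    (hgen : ∀ x ∈ insert q (Set.range p), ∀ y ∈ insert q (Set.range p),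
      ∀ z ∈ insert q (Set.range p), x ≠ y → x ≠ z → y ≠ z →
        ¬ Collinear ℝ ({x, y, z} : Set (ℝ × ℝ))) :
    ∃ i₁ i₂ i₃ i₄ : Fin 6,
      i₁ ∈ ({0, 2, 4} : Finset (Fin 6)) ∧ i₂ ∈ ({0, 2, 4} : Finset (Fin 6)) ∧ i₁ ≠ i₂ ∧
      i₃ ∈ ({1, 3, 5} : Finset (Fin 6)) ∧ i₄ ∈ ({1, 3, 5} : Finset (Fin 6)) ∧ i₃ ≠ i₄ ∧
      p i₃ ∈ (Ray q (p i₁) ∪ Ray q (p i₂))ᶜ ∧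
      p i₄ ∈ (Ray q (p i₁) ∪ Ray q (p i₂))ᶜ ∧
      connectedComponentIn (Ray q (p i₁) ∪ Ray q (p i₂))ᶜ (p i₃) ≠
        connectedComponentIn (Ray q (p i₁) ∪ Ray q (p i₂))ᶜ (p i₄) := by
  -- q differs from all vertices
  have hpq : ∀ i, q ≠ p i := by
    intro i h
    exact hq (h ▸ subset_convexHull ℝ (Set.range p) (Set.mem_range_self i))
  -- vertices are pairwise distinct
  have hpp : ∀ i j : Fin 6, i < j → p i ≠ p j := by
    intro i j hij heq
    have hk : ∃ k : Fin 6, k ≠ i ∧ k ≠ j := by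
      by_cases h : (j + 1 : Fin 6) = i
      · refine ⟨j + 2, ?_, ?_⟩
        · rw [← h]; intro hcon
          have := add_left_cancel hcon
          exact absurd this (by decide)
        · intro hcon
          have := add_eq_left.mp hcon
          exact absurd this (by decide)
      · refine ⟨j + 1, h, ?_⟩
        intro hcon
        have := add_eq_left.mp hcon
        exact absurd this (by decide)
    obtain ⟨k, hki, hkj⟩ := hk
    rcases lt_trichotomy k i with h | h | h
    · have e := hcw k i j h hij
      unfold Clockwise at e
      rw [heq] at e
      exact absurd e (by rw [not_lt]; exact le_of_eq (by ring))
    · exact hki h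
    · rcases lt_trichotomy k j with h' | h' | h'
      · have e := hcw i k j h h'
        unfold Clockwise at e
        rw [heq] at e
        exact absurd e (by rw [not_lt]; exact le_of_eq (by ring))
      · exact hkj h'
      · have e := hcw i j k hij h'
        unfold Clockwise at e
        rw [heq] at e
        exact absurd e (by rw [not_lt]; exact le_of_eq (by ring))
  have hne : ∀ i j : Fin 6, i ≠ j → p i ≠ p j := by
    intro i j hij
    rcases lt_or_gt_of_ne hij with h | h
    · exact hpp i j h
    · exact (hpp j i h).symm
  -- cross products of distinct vertex directions do not vanish
  have hne_cr : ∀ i j : Fin 6, i ≠ j → cr (p i - q) (p j - q) ≠ 0 := by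
    intro i j hij h0
    exact hgen q (Set.mem_insert _ _)
      (p i) (Set.mem_insert_of_mem _ ⟨i, rfl⟩)
      (p j) (Set.mem_insert_of_mem _ ⟨j, rfl⟩)
      (hpq i) (hpq j) (hne i j hij)
      (collinear_of_cr_eq_zero (hpq i).symm h0)
  -- separating functional / half-plane
  obtain ⟨f, u, hfq, hfp⟩ := geometric_hahn_banach_point_closed
    (convex_convexHull ℝ (Set.range p)) ((Set.finite_range p).isClosed_convexHull ℝ) hq
  set n : ℝ × ℝ := (f (1, 0), f (0, 1)) with hn
  have hfx : ∀ x : ℝ × ℝ, f x = x.1 * n.1 + x.2 * n.2 := by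
    intro x
    have hx : x = x.1 • ((1 : ℝ), (0 : ℝ)) + x.2 • ((0 : ℝ), (1 : ℝ)) := by
      apply Prod.ext <;> simp
    rw [hn]
    conv_lhs => rw [hx]
    rw [map_add, map_smul, map_smul, smul_eq_mul, smul_eq_mul]
  have hdot : ∀ i : Fin 6, 0 < (p i - q).1 * n.1 + (p i - q).2 * n.2 := by
    intro i
    rw [← hfx]
    rw [map_sub]
    have := hfp (p i) (subset_convexHull ℝ (Set.range p) (Set.mem_range_self i))
    linarith
  -- convexity helper
  have NEG : ∀ i j k : Fin 6,
      ((i < j ∧ j < k) ∨ (j < k ∧ k < i) ∨ (k < i ∧ i < j)) →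
      0 < cr (p i - p j) (p k - p j) := by
    rintro i j k (⟨h1, h2⟩ | ⟨h1, h2⟩ | ⟨h1, h2⟩)
    · exact cw_cr (hcw i j k h1 h2)
    · exact cw_cr (cw_rot (cw_rot (hcw j k i h1 h2)))
    · exact cw_cr (cw_rot (hcw k i j h1 h2))
  -- the angular order
  set L : Fin 6 → Fin 6 → Prop := fun i j => 0 < cr (p i - q) (p j - q) with hL
  have asym : ∀ i j, L i j → ¬ L j i := by
    intro i j h h'
    simp only [hL] at h h'
    rw [cr_swap] at h'
    linarith
  have tot : ∀ i j, i ≠ j → L i j ∨ L j i := by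
    intro i j hij
    rcases lt_trichotomy (cr (p i - q) (p j - q)) 0 with h | h | h
    · right; show 0 < cr (p j - q) (p i - q); rw [cr_swap]; linarith
    · exact absurd h (hne_cr i j hij)
    · exact Or.inl h
  have htrans : ∀ i j k, L i j → L j k → L i k := by
    intro i j k h1 h2
    exact cr_trans (hdot i) (hdot j) (hdot k) h1 h2
  have lmax : ∀ m d : Fin 6, L (m + 5) m → L (m + 1) m → d ≠ m → L d m := by
    intro m d h1 h2 hd
    fin_cases m <;> fin_cases d <;>
      first
        | exact absurd rfl hd
        | exact h1
        | exact h2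
        | exact locmax_pt q _ _ _ _ (NEG _ _ _ (by decide)) (NEG _ _ _ (by decide))
            (NEG _ _ _ (by decide)) h1 h2
  have lmin : ∀ m d : Fin 6, L m (m + 5) → L m (m + 1) → d ≠ m → L m d := by
    intro m d h1 h2 hd
    fin_cases m <;> fin_cases d <;>
      first
        | exact absurd rfl hd
        | exact h1
        | exact h2
        | exact locmin_pt q _ _ _ _ (NEG _ _ _ (by decide)) (NEG _ _ _ (by decide))
            (NEG _ _ _ (by decide)) h1 h2
  obtain ⟨a, b, z, w, ma, mb, hab, mz, mw, hzw, Laz, Lzb, Lab, hside⟩ :=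
    driver L asym tot htrans lmax lmin
  have hwodd : w = 1 ∨ w = 3 ∨ w = 5 := by simpa using mw
  have hbeven : b = 0 ∨ b = 2 ∨ b = 4 := by simpa using mb
  have haeven : a = 0 ∨ a = 2 ∨ a = 4 := by simpa using ma
  have hw : (cr (p a - q) (p w - q) < 0 ∧ cr (p w - q) (p b - q) ≠ 0) ∨
      (cr (p w - q) (p b - q) < 0 ∧ cr (p a - q) (p w - q) ≠ 0) := by
    rcases hside with h | h
    · left
      constructor
      · have : 0 < cr (p w - q) (p a - q) := h
        rw [cr_swap] at this; linarith
      · refine hne_cr w b ?_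
        rcases hwodd with rfl | rfl | rfl <;> rcases hbeven with rfl | rfl | rfl <;> decide
    · right
      constructor
      · have : 0 < cr (p b - q) (p w - q) := h
        rw [cr_swap] at this; linarith
      · refine hne_cr a w ?_
        rcases haeven with rfl | rfl | rfl <;> rcases hwodd with rfl | rfl | rfl <;> decide
  obtain ⟨hz1, hw1, hcomp⟩ := sep q (p a) (p b) (p z) (p w) Laz Lzb Lab hw
  exact ⟨a, b, z, w, ma, mb, hab, mz, mw, hzw, hz1, hw1, hcomp⟩
end

section
/- For all positive integers m and n, the graph K*_{m,n} admits a 2-obstacle representation. -/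
open Set

lemma isCompact_seg (P Q : ℝ × ℝ) : IsCompact (segment ℝ P Q) := by
  rw [segment_eq_image]
  exact isCompact_Icc.image (by fun_prop)

lemma seg_val_lt {P Q : ℝ × ℝ} (α β γ : ℝ) {z : ℝ × ℝ} (hz : z ∈ segment ℝ P Q)
    (h1 : α * P.1 + β * P.2 < γ) (h2 : α * Q.1 + β * Q.2 < γ) :
    α * z.1 + β * z.2 < γ := by
  obtain ⟨a, b, ha, hb, hab, rfl⟩ := hz
  simp only [Prod.fst_add, Prod.snd_add, Prod.smul_fst, Prod.smul_snd, smul_eq_mul]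
  have h3 : a * γ + b * γ = γ := by rw [← add_mul, hab, one_mul]
  rcases eq_or_lt_of_le ha with h | h
  · have hb1 : b = 1 := by linarith
    rw [← h, hb1]; ring_nf; nlinarith
  · nlinarith [mul_le_mul_of_nonneg_left h2.le hb, mul_lt_mul_of_pos_left h1 h]

lemma seg_val_ge {P Q : ℝ × ℝ} (α β γ : ℝ) {z : ℝ × ℝ} (hz : z ∈ segment ℝ P Q)
    (h1 : γ ≤ α * P.1 + β * P.2) (h2 : γ ≤ α * Q.1 + β * Q.2) :
    γ ≤ α * z.1 + β * z.2 := by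
  obtain ⟨a, b, ha, hb, hab, rfl⟩ := hz
  simp only [Prod.fst_add, Prod.snd_add, Prod.smul_fst, Prod.smul_snd, smul_eq_mul]
  have h3 : a * γ + b * γ = γ := by rw [← add_mul, hab, one_mul]
  nlinarith [mul_le_mul_of_nonneg_left h1 ha, mul_le_mul_of_nonneg_left h2 hb]

/-- master separation lemma: an affine functional strictly below `γ` on one
segment and at least `γ` on the other forces disjointness. -/
lemma disj_of_sep {P Q R S : ℝ × ℝ} (α β γ : ℝ)
    (hP : α * P.1 + β * P.2 < γ) (hQ : α * Q.1 + β * Q.2 < γ)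
    (hR : γ ≤ α * R.1 + β * R.2) (hS : γ ≤ α * S.1 + β * S.2) :
    Disjoint (segment ℝ P Q) (segment ℝ R S) := by
  rw [Set.disjoint_left]
  intro z hz1 hz2
  have := seg_val_lt α β γ hz1 hP hQ
  have := seg_val_ge α β γ hz2 hR hS
  linarith

lemma notMem_of_sep {P Q v : ℝ × ℝ} (α β γ : ℝ)
    (hP : α * P.1 + β * P.2 < γ) (hQ : α * Q.1 + β * Q.2 < γ)
    (hv : γ ≤ α * v.1 + β * v.2) : v ∉ segment ℝ P Q := by
  intro hmem
  have := seg_val_lt α β γ hmem hP hQ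
  linarith

lemma collinear_det {p q r : ℝ × ℝ} (h : Collinear ℝ ({p, q, r} : Set (ℝ × ℝ))) :
    (q.1 - p.1) * (r.2 - p.2) - (q.2 - p.2) * (r.1 - p.1) = 0 := by
  rw [collinear_iff_exists_forall_eq_smul_vadd] at h
  obtain ⟨p₀, v, hv⟩ := h
  obtain ⟨tp, hp⟩ := hv p (by simp)
  obtain ⟨tq, hq⟩ := hv q (by simp)
  obtain ⟨tr, hr⟩ := hv r (by simp)
  subst hp hq hr
  simp only [vadd_eq_add, Prod.fst_add, Prod.snd_add, Prod.smul_fst, Prod.smul_snd,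
    smul_eq_mul]
  ring

lemma mem_vseg (x yl yh y : ℝ) (h1 : yl ≤ y) (h2 : y ≤ yh) :
    ((x, y) : ℝ × ℝ) ∈ segment ℝ (x, yl) (x, yh) := by
  rcases eq_or_lt_of_le (h1.trans h2) with h | h
  · rw [← h] at h2 ⊢
    have : y = yl := le_antisymm h2 h1
    rw [this]; exact left_mem_segment _ _ _
  · have hne : yh - yl ≠ 0 := by linarith
    refine ⟨(yh - y) / (yh - yl), (y - yl) / (yh - yl),
      div_nonneg (by linarith) (by linarith), div_nonneg (by linarith) (by linarith), ?_, ?_⟩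
    · field_simp; ring
    · rw [Prod.ext_iff]
      constructor
      · simp only [Prod.fst_add, Prod.smul_fst, smul_eq_mul]
        field_simp
        ring
      · simp only [Prod.snd_add, Prod.smul_snd, smul_eq_mul]
        field_simp
        ring

lemma mem_hseg (y xl xh x : ℝ) (h1 : xl ≤ x) (h2 : x ≤ xh) :
    ((x, y) : ℝ × ℝ) ∈ segment ℝ (xl, y) (xh, y) := by
  rcases eq_or_lt_of_le (h1.trans h2) with h | h
  · rw [← h] at h2 ⊢
    have : x = xl := le_antisymm h2 h1
    rw [this]; exact left_mem_segment _ _ _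
  · have hne : xh - xl ≠ 0 := by linarith
    refine ⟨(xh - x) / (xh - xl), (x - xl) / (xh - xl),
      div_nonneg (by linarith) (by linarith), div_nonneg (by linarith) (by linarith), ?_, ?_⟩
    · field_simp; ring
    · rw [Prod.ext_iff]
      constructor
      · simp only [Prod.fst_add, Prod.smul_fst, smul_eq_mul]
        field_simp
        ring
      · simp only [Prod.snd_add, Prod.smul_snd, smul_eq_mul]
        field_simp
        ring

lemma mem_openSeg (P Q : ℝ × ℝ) {t : ℝ} (h0 : 0 < t) (h1 : t < 1) :
    (1 - t) • P + t • Q ∈ openSegment ℝ P Q :=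
  ⟨1 - t, t, by linarith, h0, by ring, rfl⟩

lemma precon_add_family {S : Set (ℝ × ℝ)} {f : ℕ → Set (ℝ × ℝ)} (k : ℕ) {x0 : ℝ × ℝ}
    (hx0 : x0 ∈ S) (hS : IsPreconnected S) (hf : ∀ a, IsPreconnected (f a))
    (hmeet : ∀ a, a < k → ∃ z, z ∈ S ∧ z ∈ f a) :
    IsPreconnected (S ∪ ⋃ a ∈ Finset.range k, f a) := by
  induction k with
  | zero => simpa using hS
  | succ k ih =>
      have : (⋃ a ∈ Finset.range (k+1), f a) = f k ∪ ⋃ a ∈ Finset.range k, f a := by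
        rw [Finset.range_add_one, Finset.set_biUnion_insert]
      rw [this, Set.union_union_distrib_left]
      obtain ⟨z, hz1, hz2⟩ := hmeet k (Nat.lt_succ_self k)
      exact IsPreconnected.union x0 (Or.inl hx0) (Or.inl hx0)
        (IsPreconnected.union z hz1 hz2 hS (hf k))
        (ih (fun a ha => hmeet a (ha.trans (Nat.lt_succ_self k))))


namespace KStarAux

noncomputable def bp (i : ℕ) : ℝ × ℝ := ((i : ℝ), (i : ℝ)^2)
noncomputable def rp (c : ℝ) (j : ℕ) : ℝ × ℝ := (-2*c^4 - j, 2*c^8 - (j : ℝ)^2)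
noncomputable def Opt (c : ℝ) : ℝ × ℝ := (-c^4, c^8)

noncomputable def base (c : ℝ) (m n : ℕ) : Set (ℝ × ℝ) :=
  segment ℝ (-2*c^4 - n, -1) ((m : ℝ), -1)
noncomputable def wall (c : ℝ) (n : ℕ) : Set (ℝ × ℝ) :=
  segment ℝ (-2*c^4 - n, -1) (-2*c^4 - n, 2*c^8 + 1)
noncomputable def topE (c : ℝ) (n : ℕ) : Set (ℝ × ℝ) :=
  segment ℝ (-2*c^4 - n, 2*c^8 + 1) (-2*c^4, 2*c^8 + 1)
noncomputable def spB (c : ℝ) (a : ℕ) : Set (ℝ × ℝ) :=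
  segment ℝ ((a : ℝ) + 1/2, -1) ((a : ℝ) + 1/2, ((a : ℝ) + 1/2)^2 + c^2)
noncomputable def spR (c : ℝ) (p : ℕ) : Set (ℝ × ℝ) :=
  segment ℝ (-2*c^4 - p - 1/2, 2*c^8 - ((p : ℝ) + 1/2)^2 - c^2) (-2*c^4 - p - 1/2, 2*c^8 + 1)
noncomputable def Obs2 (c : ℝ) (m n : ℕ) : Set (ℝ × ℝ) :=
  base c m n ∪ wall c n ∪ topE c n ∪ (⋃ a ∈ Finset.range (m-1), spB c a) ∪
    (⋃ p ∈ Finset.range (n-1), spR c p)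

lemma cpow (c : ℝ) (hc : 4 ≤ c) :
    0 < c ∧ 16 ≤ c^2 ∧ c^2 ≤ c^4 ∧ c^4 ≤ c^8 ∧ 16*c^4*c^2 ≤ c^8 ∧ 0 < c^4 ∧ 0 < c^8 ∧ 0 ≤ c^6 := by
  have h0 : 0 < c := by linarith
  have h2 : 16 ≤ c^2 := by nlinarith
  have h24 : c^2 ≤ c^4 := by nlinarith [sq_nonneg c, mul_pos h0 h0]
  have h6 : 0 ≤ c^6 := by positivity
  have h68 : 16*c^4*c^2 ≤ c^8 := by nlinarith [h6]
  have h48 : c^4 ≤ c^8 := by nlinarith [pow_pos h0 4]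
  exact ⟨h0, h2, h24, h48, h68, by positivity, by positivity, h6⟩


/-- abstract arithmetic: the spike (foot and top) is strictly below the edge line. -/
lemma key_foot (K L H x y a : ℝ) (hK : 0 < K) (hL : 0 < L)
    (hxyL : x^2 + y^2 ≤ L) (hax : a + 1 ≤ x) (hx : 0 ≤ x) (hy : 0 ≤ y) :
    (2*L - y^2 - x^2)*(a+1/2) + (2*K+x+y)*(-1) < x*(2*L-y^2-x^2) + x^2*(2*K+x+y) := by
  nlinarith [mul_pos (by nlinarith : (0:ℝ) < 2*L - y^2 - x^2) (by linarith : (0:ℝ) < x - (a+1/2)),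
    mul_nonneg (by nlinarith : (0:ℝ) ≤ 2*K + x + y) (by nlinarith [sq_nonneg x] : (0:ℝ) ≤ 1 + x^2)]

lemma key_top (K L H x y a : ℝ) (hH : 0 < H) (hK : 0 < K)
    (hsq : (a+1/2)^2 ≤ x^2 + H) (hxyK : x + y ≤ K) (hxyL : x^2 + y^2 ≤ L)
    (h16 : 16*K*H ≤ L) (hax : a + 1 ≤ x) (hx : 0 ≤ x) (hy : 0 ≤ y) :
    (2*L - y^2 - x^2)*(a+1/2) + (2*K+x+y)*((a+1/2)^2+H) < x*(2*L-y^2-x^2) + x^2*(2*K+x+y) := by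
  have h1 : (2*K+x+y)*((a+1/2)^2+H-x^2) ≤ 3*K*(2*H) := by
    nlinarith [mul_le_mul_of_nonneg_left (by nlinarith : (a+1/2)^2+H-x^2 ≤ 2*H)
        (by nlinarith : (0:ℝ) ≤ 2*K+x+y),
      mul_le_mul_of_nonneg_right (by nlinarith : 2*K+x+y ≤ 3*K) (by nlinarith : (0:ℝ) ≤ 2*H)]
  have h2 : L*(1/2) ≤ (2*L-x^2-y^2)*(x - (a+1/2)) := by
    nlinarith [mul_le_mul (by nlinarith : L ≤ 2*L-x^2-y^2) (by linarith : (1:ℝ)/2 ≤ x - (a+1/2))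
      (by norm_num) (by nlinarith : (0:ℝ) ≤ 2*L-x^2-y^2)]
  nlinarith

section
variable {c : ℝ} {m n : ℕ} {i j : ℕ}

lemma base_edge (hc : 4 ≤ c) (hm : (m:ℝ) + 2 ≤ c) (hn : (n:ℝ) + 2 ≤ c)
    (hi : (i:ℝ) + 1 ≤ m) (hj : (j:ℝ) + 1 ≤ n) :
    Disjoint (base c m n) (segment ℝ (bp i) (rp c j)) := by
  obtain ⟨h0, h2, h24, h48, h68', h4p, h8p, h6p⟩ := cpow c hc
  have hi0 : (0:ℝ) ≤ i := Nat.cast_nonneg i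
  have hj0 : (0:ℝ) ≤ j := Nat.cast_nonneg j
  apply disj_of_sep 0 1 (-1/2)
  · simp only [base]; norm_num
  · simp only [base]; norm_num
  · simp only [bp]; nlinarith [sq_nonneg ((i:ℝ))]
  · simp only [rp]; nlinarith [sq_nonneg ((j:ℝ))]

lemma wall_edge (hc : 4 ≤ c) (hm : (m:ℝ) + 2 ≤ c) (hn : (n:ℝ) + 2 ≤ c)
    (hi : (i:ℝ) + 1 ≤ m) (hj : (j:ℝ) + 1 ≤ n) :
    Disjoint (wall c n) (segment ℝ (bp i) (rp c j)) := by
  obtain ⟨h0, h2, h24, h48, h68', h4p, h8p, h6p⟩ := cpow c hc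
  have hi0 : (0:ℝ) ≤ i := Nat.cast_nonneg i
  have hj0 : (0:ℝ) ≤ j := Nat.cast_nonneg j
  apply disj_of_sep 1 0 (-2*c^4 - n + 1/2)
  · simp only [wall]; norm_num
  · simp only [wall]; norm_num
  · simp only [bp]; nlinarith
  · simp only [rp]; nlinarith

lemma topE_edge (hc : 4 ≤ c) (hm : (m:ℝ) + 2 ≤ c) (hn : (n:ℝ) + 2 ≤ c)
    (hi : (i:ℝ) + 1 ≤ m) (hj : (j:ℝ) + 1 ≤ n) :
    Disjoint (topE c n) (segment ℝ (bp i) (rp c j)) := by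
  obtain ⟨h0, h2, h24, h48, h68', h4p, h8p, h6p⟩ := cpow c hc
  have hi0 : (0:ℝ) ≤ i := Nat.cast_nonneg i
  have hj0 : (0:ℝ) ≤ j := Nat.cast_nonneg j
  apply disj_of_sep 0 (-1) (-(2*c^8) - 1/2)
  · simp only [topE]; linarith
  · simp only [topE]; linarith
  · simp only [bp]; nlinarith [sq_nonneg ((i:ℝ))]
  · simp only [rp]; nlinarith [sq_nonneg ((j:ℝ))]

set_option maxHeartbeats 1000000 in
lemma spB_edge (hc : 4 ≤ c) (hm : (m:ℝ) + 2 ≤ c) (hn : (n:ℝ) + 2 ≤ c)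
    (hi : (i:ℝ) + 1 ≤ m) (hj : (j:ℝ) + 1 ≤ n) {a : ℕ} (ha : (a:ℝ) + 2 ≤ m)
    (hij : i ≠ j) :
    Disjoint (spB c a) (segment ℝ (bp i) (rp c j)) := by
  obtain ⟨h0, h2, h24, h48, h68', h4p, h8p, h6p⟩ := cpow c hc
  have hi0 : (0:ℝ) ≤ i := Nat.cast_nonneg i
  have hj0 : (0:ℝ) ≤ j := Nat.cast_nonneg j
  have ha0 : (0:ℝ) ≤ a := Nat.cast_nonneg a
  rcases le_or_gt i a with hia | hia
  · -- vertical separation: edge to the left of the spike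
    have hia' : (i:ℝ) ≤ a := by exact_mod_cast hia
    apply disj_of_sep (-1) 0 (-(a:ℝ) - 1/4)
    · simp only [spB]; linarith
    · simp only [spB]; linarith
    · simp only [bp]; linarith
    · simp only [rp]; nlinarith
  · -- edge-line separation: the edge passes far above the spike
    have hia' : (a:ℝ) + 1 ≤ i := by exact_mod_cast hia
    have hi2 : (i:ℝ)^2 ≤ c^2 := pow_le_pow_left₀ hi0 (by linarith) 2
    have hj2 : (j:ℝ)^2 ≤ c^2 := pow_le_pow_left₀ hj0 (by linarith) 2
    have ha2 : ((a:ℝ)+1/2)^2 ≤ c^2 := pow_le_pow_left₀ (by linarith) (by linarith) 2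
    have h2c : 2*c ≤ c^2 := by nlinarith
    have h2c4 : 2*c^2 ≤ c^4 := by nlinarith
    have hsq : ((a:ℝ)+1/2)^2 ≤ (i:ℝ)^2 + c^2 := by nlinarith [sq_nonneg ((i:ℝ))]
    have hxyK : (i:ℝ) + (j:ℝ) ≤ c^4 := by nlinarith
    have hxyL : (i:ℝ)^2 + (j:ℝ)^2 ≤ c^8 := by nlinarith
    apply disj_of_sep (2*c^8 - (j:ℝ)^2 - (i:ℝ)^2) (2*c^4 + (i:ℝ) + (j:ℝ))
      ((i:ℝ)*(2*c^8 - (j:ℝ)^2 - (i:ℝ)^2) + (i:ℝ)^2*(2*c^4 + (i:ℝ) + (j:ℝ)))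
    · simp only [spB]
      exact key_foot (c^4) (c^8) (c^2) _ _ _ h4p (by positivity) hxyL hia' hi0 hj0
    · simp only [spB]
      exact key_top (c^4) (c^8) (c^2) _ _ _ (by positivity) h4p hsq hxyK hxyL h68' hia' hi0 hj0
    · simp only [bp]; exact le_of_eq (by ring)
    · simp only [rp]; exact le_of_eq (by ring)

set_option maxHeartbeats 1000000 in
lemma spR_edge (hc : 4 ≤ c) (hm : (m:ℝ) + 2 ≤ c) (hn : (n:ℝ) + 2 ≤ c)
    (hi : (i:ℝ) + 1 ≤ m) (hj : (j:ℝ) + 1 ≤ n) {p : ℕ} (hp : (p:ℝ) + 2 ≤ n)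
    (hij : i ≠ j) :
    Disjoint (spR c p) (segment ℝ (bp i) (rp c j)) := by
  obtain ⟨h0, h2, h24, h48, h68', h4p, h8p, h6p⟩ := cpow c hc
  have hi0 : (0:ℝ) ≤ i := Nat.cast_nonneg i
  have hj0 : (0:ℝ) ≤ j := Nat.cast_nonneg j
  have hp0 : (0:ℝ) ≤ p := Nat.cast_nonneg p
  rcases le_or_gt j p with hjp | hjp
  · have hjp' : (j:ℝ) ≤ p := by exact_mod_cast hjp
    apply disj_of_sep 1 0 (-2*c^4 - (p:ℝ) - 1/4)
    · simp only [spR]; linarith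
    · simp only [spR]; linarith
    · simp only [bp]; nlinarith
    · simp only [rp]; linarith
  · have hjp' : (p:ℝ) + 1 ≤ j := by exact_mod_cast hjp
    have hi2 : (i:ℝ)^2 ≤ c^2 := pow_le_pow_left₀ hi0 (by linarith) 2
    have hj2 : (j:ℝ)^2 ≤ c^2 := pow_le_pow_left₀ hj0 (by linarith) 2
    have hp2 : ((p:ℝ)+1/2)^2 ≤ c^2 := pow_le_pow_left₀ (by linarith) (by linarith) 2
    have h2c : 2*c ≤ c^2 := by nlinarith
    have h2c4 : 2*c^2 ≤ c^4 := by nlinarith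
    have hsq : ((p:ℝ)+1/2)^2 ≤ (j:ℝ)^2 + c^2 := by nlinarith [sq_nonneg ((j:ℝ))]
    have hxyK : (j:ℝ) + (i:ℝ) ≤ c^4 := by nlinarith
    have hxyL : (j:ℝ)^2 + (i:ℝ)^2 ≤ c^8 := by nlinarith
    have hfoot := key_foot (c^4) (c^8) (c^2) (j:ℝ) (i:ℝ) (p:ℝ) h4p (by positivity) hxyL hjp' hj0 hi0
    have htop := key_top (c^4) (c^8) (c^2) (j:ℝ) (i:ℝ) (p:ℝ) (by positivity) h4p hsq hxyK hxyL h68' hjp' hj0 hi0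
    apply disj_of_sep (-(2*c^8 - (i:ℝ)^2 - (j:ℝ)^2)) (-(2*c^4 + (i:ℝ) + (j:ℝ)))
      (-((2*c^8 - (j:ℝ)^2)*(2*c^4 + (i:ℝ) + (j:ℝ))) + (2*c^8 - (i:ℝ)^2 - (j:ℝ)^2)*(2*c^4 + (j:ℝ)))
    · simp only [spR]; nlinarith [htop]
    · simp only [spR]; nlinarith [hfoot]
    · simp only [bp]; exact le_of_eq (by ring)
    · simp only [rp]; exact le_of_eq (by ring)

end
end KStarAux


namespace KStarAux

section
variable {c : ℝ} {m n : ℕ} {i j : ℕ}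

lemma O_not_on_edge (hc : 4 ≤ c) (hij : i ≠ j) : Opt c ∉ segment ℝ (bp i) (rp c j) := by
  obtain ⟨h0, h2, h24, h48, h68', h4p, h8p, h6p⟩ := cpow c hc
  have hi0 : (0:ℝ) ≤ i := Nat.cast_nonneg i
  have hj0 : (0:ℝ) ≤ j := Nat.cast_nonneg j
  rintro ⟨a, b, ha, hb, hab, heq⟩
  have h1 := congrArg Prod.fst heq
  have h2' := congrArg Prod.snd heq
  simp only [bp, rp, Opt, Prod.fst_add, Prod.snd_add, Prod.smul_fst, Prod.smul_snd,
    smul_eq_mul] at h1 h2'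
  have e1 : a * ((i:ℝ) + 2*c^4 + j) = c^4 + j := by linear_combination h1 + (2*c^4 + (j:ℝ))*hab
  have e2 : a * (2*c^8 - (i:ℝ)^2 - (j:ℝ)^2) = c^8 - (j:ℝ)^2 := by
    linear_combination (2*c^8 - (j:ℝ)^2)*hab - h2'
  have hfac : ((i:ℝ) - j) * (c^4*((i:ℝ)+j) + (i:ℝ)*j + c^8) = 0 := by
    linear_combination (2*c^8 - (i:ℝ)^2 - (j:ℝ)^2)*e1 - ((i:ℝ) + 2*c^4 + (j:ℝ))*e2
  have hijR : (i:ℝ) ≠ j := by exact_mod_cast hij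
  have hpos : 0 < c^4*((i:ℝ)+j) + (i:ℝ)*j + c^8 := by positivity
  rcases mul_eq_zero.mp hfac with h | h
  · exact hijR (by linarith)
  · linarith

lemma bp_ne_O (hc : 4 ≤ c) : bp i ≠ Opt c := by
  obtain ⟨h0, _, _, _, _, h4p, _, _⟩ := cpow c hc
  have hi0 : (0:ℝ) ≤ i := Nat.cast_nonneg i
  intro h
  have := congrArg Prod.fst h
  simp only [bp, Opt] at this
  linarith

lemma rp_ne_O (hc : 4 ≤ c) : rp c j ≠ Opt c := by
  obtain ⟨h0, _, _, _, _, h4p, _, _⟩ := cpow c hc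
  have hj0 : (0:ℝ) ≤ j := Nat.cast_nonneg j
  intro h
  have := congrArg Prod.fst h
  simp only [rp, Opt] at this
  linarith

lemma bp_not_obs2 (hc : 4 ≤ c) (hm : (m:ℝ) + 2 ≤ c) (hn : (n:ℝ) + 2 ≤ c)
    (hi : (i:ℝ) + 1 ≤ m) : bp i ∉ Obs2 c m n := by
  obtain ⟨h0, h2, h24, h48, h68', h4p, h8p, h6p⟩ := cpow c hc
  have hi0 : (0:ℝ) ≤ i := Nat.cast_nonneg i
  intro h
  simp only [Obs2, Set.mem_union] at h
  rcases h with ((((h | h) | h) | h) | h)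
  · exact notMem_of_sep 0 1 (-1/2) (by simp only [base]; norm_num)
      (by simp only [base]; norm_num) (by simp only [bp]; nlinarith [sq_nonneg ((i:ℝ))]) h
  · exact notMem_of_sep 1 0 (-2*c^4 - n + 1/2) (by simp only [wall]; norm_num)
      (by simp only [wall]; norm_num) (by simp only [bp]; nlinarith) h
  · exact notMem_of_sep 0 (-1) (-(2*c^8) - 1/2) (by simp only [topE]; linarith)
      (by simp only [topE]; linarith) (by simp only [bp]; nlinarith [sq_nonneg ((i:ℝ))]) h
  · obtain ⟨a, ha, hmem⟩ := Set.mem_iUnion₂.mp h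
    have ha' : (a:ℝ) + 2 ≤ m := by
      have h' := Finset.mem_range.mp ha
      have : a + 2 ≤ m := by omega
      exact_mod_cast this
    rcases le_or_gt (i:ℕ) a with hia | hia
    · have hia' : (i:ℝ) ≤ a := by exact_mod_cast hia
      exact notMem_of_sep (-1) 0 (-(a:ℝ) - 1/4) (by simp only [spB]; linarith)
        (by simp only [spB]; linarith) (by simp only [bp]; linarith) hmem
    · have hia' : (a:ℝ) + 1 ≤ i := by exact_mod_cast hia
      exact notMem_of_sep 1 0 ((a:ℝ) + 3/4) (by simp only [spB]; linarith)
        (by simp only [spB]; linarith) (by simp only [bp]; linarith) hmem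
  · obtain ⟨p, hp, hmem⟩ := Set.mem_iUnion₂.mp h
    have hp0 : (0:ℝ) ≤ p := Nat.cast_nonneg p
    exact notMem_of_sep 1 0 (-1/4) (by simp only [spR]; linarith)
      (by simp only [spR]; linarith) (by simp only [bp]; linarith) hmem

lemma rp_not_obs2 (hc : 4 ≤ c) (hm : (m:ℝ) + 2 ≤ c) (hn : (n:ℝ) + 2 ≤ c)
    (hj : (j:ℝ) + 1 ≤ n) : rp c j ∉ Obs2 c m n := by
  obtain ⟨h0, h2, h24, h48, h68', h4p, h8p, h6p⟩ := cpow c hc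
  have hj0 : (0:ℝ) ≤ j := Nat.cast_nonneg j
  have hj2 : (j:ℝ)^2 ≤ c^2 := pow_le_pow_left₀ hj0 (by linarith) 2
  intro h
  simp only [Obs2, Set.mem_union] at h
  rcases h with ((((h | h) | h) | h) | h)
  · exact notMem_of_sep 0 1 (-1/2) (by simp only [base]; norm_num)
      (by simp only [base]; norm_num) (by simp only [rp]; nlinarith) h
  · exact notMem_of_sep 1 0 (-2*c^4 - n + 1/2) (by simp only [wall]; norm_num)
      (by simp only [wall]; norm_num) (by simp only [rp]; linarith) h
  · exact notMem_of_sep 0 (-1) (-(2*c^8) - 1/2) (by simp only [topE]; linarith)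
      (by simp only [topE]; linarith) (by simp only [rp]; nlinarith) h
  · obtain ⟨a, ha, hmem⟩ := Set.mem_iUnion₂.mp h
    have ha0 : (0:ℝ) ≤ a := Nat.cast_nonneg a
    exact notMem_of_sep (-1) 0 0 (by simp only [spB]; linarith)
      (by simp only [spB]; linarith) (by simp only [rp]; linarith) hmem
  · obtain ⟨p, hp, hmem⟩ := Set.mem_iUnion₂.mp h
    have hp0 : (0:ℝ) ≤ p := Nat.cast_nonneg p
    rcases le_or_gt (j:ℕ) p with hjp | hjp
    · have hjp' : (j:ℝ) ≤ p := by exact_mod_cast hjp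
      exact notMem_of_sep 1 0 (-2*c^4 - (p:ℝ) - 1/4) (by simp only [spR]; linarith)
        (by simp only [spR]; linarith) (by simp only [rp]; linarith) hmem
    · have hjp' : (p:ℝ) + 1 ≤ j := by exact_mod_cast hjp
      exact notMem_of_sep (-1) 0 (2*c^4 + (p:ℝ) + 3/4) (by simp only [spR]; linarith)
        (by simp only [spR]; linarith) (by simp only [rp]; linarith) hmem

end
end KStarAux


namespace KStarAux

section
variable {c : ℝ} {m n : ℕ}

lemma spB_subset {a : ℕ} (ha : a ∈ Finset.range (m-1)) : spB c a ⊆ Obs2 c m n := by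
  intro z hz
  simp only [Obs2, Set.mem_union]
  exact Or.inl (Or.inr (Set.mem_biUnion ha hz))

lemma spR_subset {p : ℕ} (hp : p ∈ Finset.range (n-1)) : spR c p ⊆ Obs2 c m n := by
  intro z hz
  simp only [Obs2, Set.mem_union]
  exact Or.inr (Set.mem_biUnion hp hz)

/-- blocking witness for a pair `b p`, `b q` with `p < q`. -/
lemma block_bb (hc : 4 ≤ c) (hm : (m:ℝ) + 2 ≤ c) {p q : ℕ} (hpq : p < q) (hq : q < m) :
    ((spB c p) ∩ openSegment ℝ (bp p) (bp q)).Nonempty := by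
  obtain ⟨h0, h2, h24, h48, h68', h4p, h8p, h6p⟩ := cpow c hc
  have hp0 : (0:ℝ) ≤ p := Nat.cast_nonneg p
  have hpq' : (p:ℝ) + 1 ≤ q := by exact_mod_cast hpq
  have hq' : (q:ℝ) + 1 ≤ m := by exact_mod_cast hq
  refine ⟨((p:ℝ) + 1/2, (p:ℝ)^2 + ((p:ℝ) + q)/2), ?_, ?_⟩
  · apply mem_vseg
    · nlinarith
    · nlinarith
  · have hne : (q:ℝ) - p ≠ 0 := by linarith
    have ht0 : 0 < 1/(2*((q:ℝ) - p)) := by apply div_pos one_pos; linarith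
    have ht1 : 1/(2*((q:ℝ) - p)) < 1 := by
      rw [div_lt_one (by linarith)]; linarith
    have hz : (1 - 1/(2*((q:ℝ) - p))) • bp p + (1/(2*((q:ℝ) - p))) • bp q
        = ((p:ℝ) + 1/2, (p:ℝ)^2 + ((p:ℝ) + q)/2) := by
      simp only [bp, Prod.smul_mk, smul_eq_mul, Prod.mk_add_mk, Prod.mk.injEq]
      constructor
      · field_simp; ring
      · field_simp; ring
    rw [← hz]
    exact mem_openSeg _ _ ht0 ht1

lemma block_rr (hc : 4 ≤ c) (hn : (n:ℝ) + 2 ≤ c) {p q : ℕ} (hpq : p < q) (hq : q < n) :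
    ((spR c p) ∩ openSegment ℝ (rp c p) (rp c q)).Nonempty := by
  obtain ⟨h0, h2, h24, h48, h68', h4p, h8p, h6p⟩ := cpow c hc
  have hp0 : (0:ℝ) ≤ p := Nat.cast_nonneg p
  have hpq' : (p:ℝ) + 1 ≤ q := by exact_mod_cast hpq
  have hq' : (q:ℝ) + 1 ≤ n := by exact_mod_cast hq
  refine ⟨(-2*c^4 - (p:ℝ) - 1/2, 2*c^8 - (p:ℝ)^2 - ((p:ℝ) + q)/2), ?_, ?_⟩
  · apply mem_vseg
    · nlinarith
    · nlinarith
  · have hne : (q:ℝ) - p ≠ 0 := by linarith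
    have ht0 : 0 < 1/(2*((q:ℝ) - p)) := by apply div_pos one_pos; linarith
    have ht1 : 1/(2*((q:ℝ) - p)) < 1 := by
      rw [div_lt_one (by linarith)]; linarith
    have hz : (1 - 1/(2*((q:ℝ) - p))) • rp c p + (1/(2*((q:ℝ) - p))) • rp c q
        = (-2*c^4 - (p:ℝ) - 1/2, 2*c^8 - (p:ℝ)^2 - ((p:ℝ) + q)/2) := by
      simp only [rp, Prod.smul_mk, smul_eq_mul, Prod.mk_add_mk, Prod.mk.injEq]
      constructor
      · field_simp; ring
      · field_simp; ring
    rw [← hz]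
    exact mem_openSeg _ _ ht0 ht1

lemma block_match {i j : ℕ} (hij : i = j) :
    Opt c ∈ openSegment ℝ (bp i) (rp c j) := by
  subst hij
  have hz : (1 - 1/2 : ℝ) • bp i + (1/2 : ℝ) • rp c i = Opt c := by
    simp only [bp, rp, Opt, Prod.smul_mk, smul_eq_mul, Prod.mk_add_mk, Prod.mk.injEq]
    constructor <;> ring
  rw [← hz]
  exact mem_openSeg _ _ (by norm_num) (by norm_num)

lemma obs2_compact : IsCompact (Obs2 c m n) := by
  refine ((((isCompact_seg _ _).union (isCompact_seg _ _)).union (isCompact_seg _ _)).union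
    ?_).union ?_
  · exact Set.Finite.isCompact_biUnion (Finset.finite_toSet _) (fun a _ => isCompact_seg _ _)
  · exact Set.Finite.isCompact_biUnion (Finset.finite_toSet _) (fun p _ => isCompact_seg _ _)

lemma obs2_connected (hc : 4 ≤ c) (hm : (m:ℝ) + 2 ≤ c) (hn : (n:ℝ) + 2 ≤ c) :
    IsConnected (Obs2 c m n) := by
  obtain ⟨h0, h2, h24, h48, h68', h4p, h8p, h6p⟩ := cpow c hc
  have hmn0 : (0:ℝ) ≤ m := Nat.cast_nonneg m
  have hn0 : (0:ℝ) ≤ n := Nat.cast_nonneg n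
  constructor
  · -- nonempty
    refine ⟨(-2*c^4 - n, -1), ?_⟩
    simp only [Obs2, Set.mem_union]
    exact Or.inl (Or.inl (Or.inl (Or.inl (left_mem_segment _ _ _))))
  · -- preconnected
    have hcore : IsPreconnected (base c m n ∪ wall c n ∪ topE c n) := by
      apply IsPreconnected.union (-2*c^4 - n, 2*c^8 + 1)
      · exact Or.inr (right_mem_segment _ _ _)
      · exact left_mem_segment _ _ _
      · apply IsPreconnected.union (-2*c^4 - n, -1)
        · exact left_mem_segment _ _ _
        · exact left_mem_segment _ _ _
        · exact (convex_segment _ _).isPreconnected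
        · exact (convex_segment _ _).isPreconnected
      · exact (convex_segment _ _).isPreconnected
    have hstep : IsPreconnected (base c m n ∪ wall c n ∪ topE c n ∪
        (⋃ a ∈ Finset.range (m-1), spB c a)) := by
      apply precon_add_family (m-1) (x0 := (-2*c^4 - n, -1))
      · exact Or.inl (Or.inl (left_mem_segment _ _ _))
      · exact hcore
      · exact fun a => (convex_segment _ _).isPreconnected
      · intro a ha
        have ha2 : (a:ℝ) + 2 ≤ m := by
          have : a + 2 ≤ m := by omega
          exact_mod_cast this
        have ha0 : (0:ℝ) ≤ a := Nat.cast_nonneg a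
        refine ⟨((a:ℝ) + 1/2, -1), Or.inl (Or.inl ?_), left_mem_segment _ _ _⟩
        simp only [base]
        exact mem_hseg _ _ _ _ (by nlinarith) (by linarith)
    apply precon_add_family (n-1) (x0 := (-2*c^4 - n, -1))
    · exact Or.inl (Or.inl (Or.inl (left_mem_segment _ _ _)))
    · exact hstep
    · exact fun p => (convex_segment _ _).isPreconnected
    · intro p hp
      have hp2 : (p:ℝ) + 2 ≤ n := by
        have : p + 2 ≤ n := by omega
        exact_mod_cast this
      have hp0 : (0:ℝ) ≤ p := Nat.cast_nonneg p
      refine ⟨(-2*c^4 - p - 1/2, 2*c^8 + 1), Or.inl (Or.inr ?_), right_mem_segment _ _ _⟩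
      simp only [topE]
      exact mem_hseg _ _ _ _ (by linarith) (by linarith)

end
end KStarAux


namespace KStarAux

section
variable {c : ℝ} {m n : ℕ}

lemma obs2_edge (hc : 4 ≤ c) (hm : (m:ℝ) + 2 ≤ c) (hn : (n:ℝ) + 2 ≤ c)
    {i j : ℕ} (hi : i < m) (hj : j < n) (hij : i ≠ j) :
    Disjoint (Obs2 c m n) (segment ℝ (bp i) (rp c j)) := by
  have hi' : (i:ℝ) + 1 ≤ m := by exact_mod_cast hi
  have hj' : (j:ℝ) + 1 ≤ n := by exact_mod_cast hj
  simp only [Obs2]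
  refine Set.disjoint_union_left.mpr ⟨Set.disjoint_union_left.mpr
    ⟨Set.disjoint_union_left.mpr ⟨Set.disjoint_union_left.mpr
    ⟨base_edge hc hm hn hi' hj', wall_edge hc hm hn hi' hj'⟩,
    topE_edge hc hm hn hi' hj'⟩, ?_⟩, ?_⟩
  · simp only [Set.disjoint_iUnion_left]
    intro a ha
    have ha' : (a:ℝ) + 2 ≤ m := by
      have h' := Finset.mem_range.mp ha
      have : a + 2 ≤ m := by omega
      exact_mod_cast this
    exact spB_edge hc hm hn hi' hj' ha' hij
  · simp only [Set.disjoint_iUnion_left]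
    intro p hp
    have hp' : (p:ℝ) + 2 ≤ n := by
      have h' := Finset.mem_range.mp hp
      have : p + 2 ≤ n := by omega
      exact_mod_cast this
    exact spR_edge hc hm hn hi' hj' hp' hij

lemma finb {k : ℕ} (hk : (k:ℝ) + 2 ≤ c) (i : Fin k) : ((i:ℕ):ℝ) + 3 ≤ c := by
  have h1 : (i:ℕ) + 1 ≤ k := i.isLt
  have h2 : ((i:ℕ):ℝ) + 1 ≤ k := by exact_mod_cast h1
  linarith

lemma finR_ne {k : ℕ} {i j : Fin k} (h : i ≠ j) : ((i:ℕ):ℝ) ≠ ((j:ℕ):ℝ) := by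
  intro hh
  exact h (Fin.ext (by exact_mod_cast hh))

end
end KStarAux


open Set KStarAux in
set_option maxHeartbeats 2000000 in
/-- for all positive integers `m` and `n`, the graph `K*_{m,n}` admits
a 2-obstacle representation. -/
theorem kstar_two_obstacle_rep (m n : ℕ) (hm : 0 < m) (hn : 0 < n) :
    Nonempty (ObstacleRep (KStarGraph m n) 2) := by
  classical
  set c : ℝ := (m:ℝ) + n + 2 with hcdef
  have hm1 : (1:ℝ) ≤ m := by exact_mod_cast hm
  have hn1 : (1:ℝ) ≤ n := by exact_mod_cast hn
  have hc : 4 ≤ c := by rw [hcdef]; linarith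
  have hmc : (m:ℝ) + 2 ≤ c := by rw [hcdef]; linarith
  have hnc : (n:ℝ) + 2 ≤ c := by rw [hcdef]; linarith
  obtain ⟨h0, h2, h24, h48, h68', h4p, h8p, h6p⟩ := KStarAux.cpow c hc
  refine ⟨{
    v := Sum.elim (fun i : Fin m => KStarAux.bp i.val) (fun j : Fin n => KStarAux.rp c j.val)
    inj := ?_
    genpos := ?_
    obs := fun k => if (k : ℕ) = 0 then {KStarAux.Opt c} else KStarAux.Obs2 c m n
    obs_compact := ?_
    obs_connected := ?_
    obs_avoid_edges := ?_
    obs_avoid_vertices := ?_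
    blocks := ?_ }⟩
  · -- injectivity
    rintro (i|i) (j|j) h <;>
      simp only [Sum.elim_inl, Sum.elim_inr, KStarAux.bp, KStarAux.rp, Prod.mk.injEq] at h
    · exact congrArg Sum.inl (Fin.val_injective (by exact_mod_cast h.1 : (i:ℕ) = (j:ℕ)))
    · exfalso
      have hi0 : (0:ℝ) ≤ (i:ℕ) := Nat.cast_nonneg _
      have hj0 : (0:ℝ) ≤ (j:ℕ) := Nat.cast_nonneg _
      linarith [h.1]
    · exfalso
      have hi0 : (0:ℝ) ≤ (i:ℕ) := Nat.cast_nonneg _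
      have hj0 : (0:ℝ) ≤ (j:ℕ) := Nat.cast_nonneg _
      linarith [h.1]
    · refine congrArg Sum.inr (Fin.val_injective ?_)
      have : ((i:ℕ):ℝ) = ((j:ℕ):ℝ) := by linarith [h.1]
      exact_mod_cast this
  · -- general position
    intro p q r hpq hpr hqr hcol
    have hdet := collinear_det hcol
    rcases p with i|i <;> rcases q with j|j <;> rcases r with k|k <;>
      simp only [Sum.elim_inl, Sum.elim_inr, KStarAux.bp, KStarAux.rp] at hdet
    · -- lll
      have h1 : i ≠ j := fun h => hpq (congrArg _ h)
      have h2' : i ≠ k := fun h => hpr (congrArg _ h)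
      have h3 : j ≠ k := fun h => hqr (congrArg _ h)
      have hfac : (((j:ℕ):ℝ) - (i:ℕ)) * ((((k:ℕ):ℝ) - (i:ℕ)) * (((k:ℕ):ℝ) - (j:ℕ))) = 0 := by
        linear_combination hdet
      rcases mul_eq_zero.mp hfac with h' | h'
      · exact finR_ne h1 (sub_eq_zero.mp h').symm
      · rcases mul_eq_zero.mp h' with h'' | h''
        · exact finR_ne h2' (sub_eq_zero.mp h'').symm
        · exact finR_ne h3 (sub_eq_zero.mp h'').symm
    · -- llr
      have h1 : i ≠ j := fun h => hpq (congrArg _ h)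
      have hk3 := finb hnc k
      have hk0 : (0:ℝ) ≤ (k:ℕ) := Nat.cast_nonneg _
      have hi0 : (0:ℝ) ≤ (i:ℕ) := Nat.cast_nonneg _
      have hj0 : (0:ℝ) ≤ (j:ℕ) := Nat.cast_nonneg _
      have hk2 : ((k:ℕ):ℝ)^2 ≤ c^2 := pow_le_pow_left₀ hk0 (by linarith) 2
      have hpos : 0 < 2*c^8 - ((k:ℕ):ℝ)^2 + (((i:ℕ):ℝ) + (j:ℕ))*(2*c^4 + (k:ℕ))
          + ((i:ℕ):ℝ)*((j:ℕ):ℝ) := by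
        nlinarith [mul_nonneg (by linarith : (0:ℝ) ≤ ((i:ℕ):ℝ) + (j:ℕ))
          (by linarith : (0:ℝ) ≤ 2*c^4 + ((k:ℕ):ℝ)), mul_nonneg hi0 hj0]
      have hfac : (((j:ℕ):ℝ) - (i:ℕ)) * (2*c^8 - ((k:ℕ):ℝ)^2
          + (((i:ℕ):ℝ) + (j:ℕ))*(2*c^4 + (k:ℕ)) + ((i:ℕ):ℝ)*((j:ℕ):ℝ)) = 0 := by
        linear_combination hdet
      rcases mul_eq_zero.mp hfac with h' | h'
      · exact finR_ne h1 (sub_eq_zero.mp h').symm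
      · linarith
    · -- lrl
      have h1 : i ≠ k := fun h => hpr (congrArg _ h)
      have hj3 := finb hnc j
      have hj0 : (0:ℝ) ≤ (j:ℕ) := Nat.cast_nonneg _
      have hi0 : (0:ℝ) ≤ (i:ℕ) := Nat.cast_nonneg _
      have hk0 : (0:ℝ) ≤ (k:ℕ) := Nat.cast_nonneg _
      have hj2 : ((j:ℕ):ℝ)^2 ≤ c^2 := pow_le_pow_left₀ hj0 (by linarith) 2
      have hpos : 0 < 2*c^8 - ((j:ℕ):ℝ)^2 + (((i:ℕ):ℝ) + (k:ℕ))*(2*c^4 + (j:ℕ))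
          + ((i:ℕ):ℝ)*((k:ℕ):ℝ) := by
        nlinarith [mul_nonneg (by linarith : (0:ℝ) ≤ ((i:ℕ):ℝ) + (k:ℕ))
          (by linarith : (0:ℝ) ≤ 2*c^4 + ((j:ℕ):ℝ)), mul_nonneg hi0 hk0]
      have hfac : (((k:ℕ):ℝ) - (i:ℕ)) * (2*c^8 - ((j:ℕ):ℝ)^2
          + (((i:ℕ):ℝ) + (k:ℕ))*(2*c^4 + (j:ℕ)) + ((i:ℕ):ℝ)*((k:ℕ):ℝ)) = 0 := by
        linear_combination -hdet
      rcases mul_eq_zero.mp hfac with h' | h'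
      · exact finR_ne h1 (sub_eq_zero.mp h').symm
      · linarith
    · -- lrr
      have h1 : j ≠ k := fun h => hqr (congrArg _ h)
      have hi3 := finb hmc i
      have hi0 : (0:ℝ) ≤ (i:ℕ) := Nat.cast_nonneg _
      have hj0 : (0:ℝ) ≤ (j:ℕ) := Nat.cast_nonneg _
      have hk0 : (0:ℝ) ≤ (k:ℕ) := Nat.cast_nonneg _
      have hi2 : ((i:ℕ):ℝ)^2 ≤ c^2 := pow_le_pow_left₀ hi0 (by linarith) 2
      have hpos : 0 < (2*c^4 + ((i:ℕ):ℝ))*(((k:ℕ):ℝ) + (j:ℕ)) + 2*c^8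
          + ((j:ℕ):ℝ)*((k:ℕ):ℝ) - ((i:ℕ):ℝ)^2 := by
        nlinarith [mul_nonneg (by linarith : (0:ℝ) ≤ 2*c^4 + ((i:ℕ):ℝ))
          (by linarith : (0:ℝ) ≤ ((k:ℕ):ℝ) + (j:ℕ)), mul_nonneg hj0 hk0]
      have hfac : (((k:ℕ):ℝ) - (j:ℕ)) * ((2*c^4 + ((i:ℕ):ℝ))*(((k:ℕ):ℝ) + (j:ℕ)) + 2*c^8
          + ((j:ℕ):ℝ)*((k:ℕ):ℝ) - ((i:ℕ):ℝ)^2) = 0 := by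
        linear_combination hdet
      rcases mul_eq_zero.mp hfac with h' | h'
      · exact finR_ne h1 (sub_eq_zero.mp h').symm
      · linarith
    · -- rll
      have h1 : j ≠ k := fun h => hqr (congrArg _ h)
      have hi3 := finb hnc i
      have hi0 : (0:ℝ) ≤ (i:ℕ) := Nat.cast_nonneg _
      have hj0 : (0:ℝ) ≤ (j:ℕ) := Nat.cast_nonneg _
      have hk0 : (0:ℝ) ≤ (k:ℕ) := Nat.cast_nonneg _
      have hi2 : ((i:ℕ):ℝ)^2 ≤ c^2 := pow_le_pow_left₀ hi0 (by linarith) 2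
      have hpos : 0 < 2*c^8 - ((i:ℕ):ℝ)^2 + (((j:ℕ):ℝ) + (k:ℕ))*(2*c^4 + (i:ℕ))
          + ((j:ℕ):ℝ)*((k:ℕ):ℝ) := by
        nlinarith [mul_nonneg (by linarith : (0:ℝ) ≤ ((j:ℕ):ℝ) + (k:ℕ))
          (by linarith : (0:ℝ) ≤ 2*c^4 + ((i:ℕ):ℝ)), mul_nonneg hj0 hk0]
      have hfac : (((k:ℕ):ℝ) - (j:ℕ)) * (2*c^8 - ((i:ℕ):ℝ)^2
          + (((j:ℕ):ℝ) + (k:ℕ))*(2*c^4 + (i:ℕ)) + ((j:ℕ):ℝ)*((k:ℕ):ℝ)) = 0 := by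
        linear_combination hdet
      rcases mul_eq_zero.mp hfac with h' | h'
      · exact finR_ne h1 (sub_eq_zero.mp h').symm
      · linarith
    · -- rlr
      have h1 : i ≠ k := fun h => hpr (congrArg _ h)
      have hj3 := finb hmc j
      have hi0 : (0:ℝ) ≤ (i:ℕ) := Nat.cast_nonneg _
      have hj0 : (0:ℝ) ≤ (j:ℕ) := Nat.cast_nonneg _
      have hk0 : (0:ℝ) ≤ (k:ℕ) := Nat.cast_nonneg _
      have hj2 : ((j:ℕ):ℝ)^2 ≤ c^2 := pow_le_pow_left₀ hj0 (by linarith) 2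
      have hpos : 0 < (2*c^4 + ((j:ℕ):ℝ))*(((k:ℕ):ℝ) + (i:ℕ)) + 2*c^8
          + ((i:ℕ):ℝ)*((k:ℕ):ℝ) - ((j:ℕ):ℝ)^2 := by
        nlinarith [mul_nonneg (by linarith : (0:ℝ) ≤ 2*c^4 + ((j:ℕ):ℝ))
          (by linarith : (0:ℝ) ≤ ((k:ℕ):ℝ) + (i:ℕ)), mul_nonneg hi0 hk0]
      have hfac : (((k:ℕ):ℝ) - (i:ℕ)) * ((2*c^4 + ((j:ℕ):ℝ))*(((k:ℕ):ℝ) + (i:ℕ)) + 2*c^8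
          + ((i:ℕ):ℝ)*((k:ℕ):ℝ) - ((j:ℕ):ℝ)^2) = 0 := by
        linear_combination -hdet
      rcases mul_eq_zero.mp hfac with h' | h'
      · exact finR_ne h1 (sub_eq_zero.mp h').symm
      · linarith
    · -- rrl
      have h1 : i ≠ j := fun h => hpq (congrArg _ h)
      have hk3 := finb hmc k
      have hi0 : (0:ℝ) ≤ (i:ℕ) := Nat.cast_nonneg _
      have hj0 : (0:ℝ) ≤ (j:ℕ) := Nat.cast_nonneg _
      have hk0 : (0:ℝ) ≤ (k:ℕ) := Nat.cast_nonneg _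
      have hk2 : ((k:ℕ):ℝ)^2 ≤ c^2 := pow_le_pow_left₀ hk0 (by linarith) 2
      have hpos : 0 < (2*c^4 + ((k:ℕ):ℝ))*(((j:ℕ):ℝ) + (i:ℕ)) + 2*c^8
          + ((i:ℕ):ℝ)*((j:ℕ):ℝ) - ((k:ℕ):ℝ)^2 := by
        nlinarith [mul_nonneg (by linarith : (0:ℝ) ≤ 2*c^4 + ((k:ℕ):ℝ))
          (by linarith : (0:ℝ) ≤ ((j:ℕ):ℝ) + (i:ℕ)), mul_nonneg hi0 hj0]
      have hfac : (((j:ℕ):ℝ) - (i:ℕ)) * ((2*c^4 + ((k:ℕ):ℝ))*(((j:ℕ):ℝ) + (i:ℕ)) + 2*c^8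
          + ((i:ℕ):ℝ)*((j:ℕ):ℝ) - ((k:ℕ):ℝ)^2) = 0 := by
        linear_combination hdet
      rcases mul_eq_zero.mp hfac with h' | h'
      · exact finR_ne h1 (sub_eq_zero.mp h').symm
      · linarith
    · -- rrr
      have h1 : i ≠ j := fun h => hpq (congrArg _ h)
      have h2' : i ≠ k := fun h => hpr (congrArg _ h)
      have h3 : j ≠ k := fun h => hqr (congrArg _ h)
      have hfac : (((j:ℕ):ℝ) - (i:ℕ)) * ((((k:ℕ):ℝ) - (i:ℕ)) * (((k:ℕ):ℝ) - (j:ℕ))) = 0 := by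
        linear_combination hdet
      rcases mul_eq_zero.mp hfac with h' | h'
      · exact finR_ne h1 (sub_eq_zero.mp h').symm
      · rcases mul_eq_zero.mp h' with h'' | h''
        · exact finR_ne h2' (sub_eq_zero.mp h'').symm
        · exact finR_ne h3 (sub_eq_zero.mp h'').symm
  · -- compactness
    intro k
    by_cases hk : (k : ℕ) = 0
    · rw [if_pos hk]; exact isCompact_singleton
    · rw [if_neg hk]; exact KStarAux.obs2_compact
  · -- connectedness
    intro k
    by_cases hk : (k : ℕ) = 0
    · rw [if_pos hk]; exact isConnected_singleton
    · rw [if_neg hk]; exact KStarAux.obs2_connected hc hmc hnc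
  · -- obstacles avoid edges
    intro k p q hadj
    rcases p with i|i <;> rcases q with j|j
    · simp [KStarGraph] at hadj
    · have hne : (i:ℕ) ≠ (j:ℕ) := hadj
      simp only [Sum.elim_inl, Sum.elim_inr]
      by_cases hk : (k : ℕ) = 0
      · rw [if_pos hk]
        exact Set.disjoint_singleton_left.mpr (KStarAux.O_not_on_edge hc hne)
      · rw [if_neg hk]
        exact KStarAux.obs2_edge hc hmc hnc i.isLt j.isLt hne
    · have hne : (j:ℕ) ≠ (i:ℕ) := hadj
      simp only [Sum.elim_inl, Sum.elim_inr]
      rw [segment_symm]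
      by_cases hk : (k : ℕ) = 0
      · rw [if_pos hk]
        exact Set.disjoint_singleton_left.mpr (KStarAux.O_not_on_edge hc hne)
      · rw [if_neg hk]
        exact KStarAux.obs2_edge hc hmc hnc j.isLt i.isLt hne
    · simp [KStarGraph] at hadj
  · -- obstacles avoid vertices
    intro k p
    by_cases hk : (k : ℕ) = 0
    · rcases p with i|i <;>
        simp only [hk, reduceIte, Set.mem_singleton_iff, Sum.elim_inl, Sum.elim_inr]
      · exact KStarAux.bp_ne_O hc
      · exact KStarAux.rp_ne_O hc
    · rcases p with i|i <;>
        simp only [hk, reduceIte, Sum.elim_inl, Sum.elim_inr]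
      · exact KStarAux.bp_not_obs2 hc hmc hnc (by exact_mod_cast i.isLt)
      · exact KStarAux.rp_not_obs2 hc hmc hnc (by exact_mod_cast i.isLt)
  · -- blocking
    intro p q hne hnadj
    rcases p with i|i <;> rcases q with j|j
    · -- two b's
      have hij : i ≠ j := fun h => hne (congrArg _ h)
      have hv : (i:ℕ) ≠ (j:ℕ) := fun h => hij (Fin.val_injective h)
      refine ⟨1, ?_⟩
      simp only [Sum.elim_inl, Fin.isValue]
      have h1 : ((1 : Fin 2) : ℕ) ≠ 0 := by norm_num
      rw [if_neg h1]
      rcases hv.lt_or_gt with hlt | hlt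
      · obtain ⟨z, hz1, hz2⟩ := KStarAux.block_bb hc hmc hlt j.isLt
        exact ⟨z, KStarAux.spB_subset (Finset.mem_range.mpr (by have := j.isLt; omega)) hz1, hz2⟩
      · rw [openSegment_symm]
        obtain ⟨z, hz1, hz2⟩ := KStarAux.block_bb hc hmc hlt i.isLt
        exact ⟨z, KStarAux.spB_subset (Finset.mem_range.mpr (by have := i.isLt; omega)) hz1, hz2⟩
    · -- matching pair
      have hij : (i:ℕ) = (j:ℕ) := not_not.mp hnadj
      refine ⟨0, KStarAux.Opt c, ?_, ?_⟩
      · simp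
      · simp only [Sum.elim_inl, Sum.elim_inr]
        exact KStarAux.block_match hij
    · -- matching pair, reversed
      have hij : (j:ℕ) = (i:ℕ) := not_not.mp hnadj
      refine ⟨0, KStarAux.Opt c, ?_, ?_⟩
      · simp
      · simp only [Sum.elim_inl, Sum.elim_inr]
        rw [openSegment_symm]
        exact KStarAux.block_match hij
    · -- two r's
      have hij : i ≠ j := fun h => hne (congrArg _ h)
      have hv : (i:ℕ) ≠ (j:ℕ) := fun h => hij (Fin.val_injective h)
      refine ⟨1, ?_⟩
      simp only [Sum.elim_inr, Fin.isValue]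
      have h1 : ((1 : Fin 2) : ℕ) ≠ 0 := by norm_num
      rw [if_neg h1]
      rcases hv.lt_or_gt with hlt | hlt
      · obtain ⟨z, hz1, hz2⟩ := KStarAux.block_rr hc hnc hlt j.isLt
        exact ⟨z, KStarAux.spR_subset (Finset.mem_range.mpr (by have := j.isLt; omega)) hz1, hz2⟩
      · rw [openSegment_symm]
        obtain ⟨z, hz1, hz2⟩ := KStarAux.block_rr hc hnc hlt i.isLt
        exact ⟨z, KStarAux.spR_subset (Finset.mem_range.mpr (by have := i.isLt; omega)) hz1, hz2⟩
end
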